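/- arXiv:2109.05754 — 5 statements merged into one kernel-verified Lean document; each statement's English description precedes it below -/
import Mathlib

section
/- Consider the controlled SIR model. The following are equivalent: (i) for every admissible controlled trajectory (S, I, β) with (S(t0), I(t0)) ∈ G_Π one has (S(t), I(t)) ∈ G_Π for all t ≥ t0 (i.e. the maximal robust positively invariant set equals G_Π); (ii) β_max (1 − I_max) ≤ γ. -/
open Set Real MeasureTheory intervalIntegral


/-- The constraint set `G_Π` for the SIR model:
`{(S, I) : S ≥ 0, I ≥ 0, S + I ≤ 1, I ≤ I_max}`. -/
def GPiSIR (Imax : ℝ) : Set (ℝ × ℝ) :=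
  {p | 0 ≤ p.1 ∧ 0 ≤ p.2 ∧ p.1 + p.2 ≤ 1 ∧ p.2 ≤ Imax}

/-- If `f' = a ⬝ f` pointwise on `[t0,t1]` with `a` bounded there and `f t0 ≥ 0`,
then `f t1 ≥ 0`. -/
lemma no_sign_change {f a : ℝ → ℝ} {t0 t1 : ℝ} (ht : t0 ≤ t1)
    (hf : ∀ t ∈ Set.Icc t0 t1, HasDerivAt f (a t * f t) t)
    (hM : ∃ M, ∀ t ∈ Set.Icc t0 t1, |a t| ≤ M)
    (h0 : 0 ≤ f t0) : 0 ≤ f t1 := by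
  obtain ⟨M, hMb⟩ := hM
  by_contra h
  push_neg at h
  have hcont : ContinuousOn f (Set.Icc t0 t1) := fun t htt =>
    ((hf t htt).continuousAt).continuousWithinAt
  have h0' : (0:ℝ) ∈ Set.Icc (f t1) (f t0) := ⟨h.le, h0⟩
  obtain ⟨c, hc, hfc⟩ := intermediate_value_Icc' ht hcont h0'
  set Z : Set ℝ := Set.Icc t0 t1 ∩ f ⁻¹' {0} with hZ
  have hZne : Z.Nonempty := ⟨c, hc, hfc⟩
  have hZc : IsClosed Z := hcont.preimage_isClosed_of_isClosed isClosed_Icc isClosed_singleton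
  have hZcomp : IsCompact Z :=
    IsCompact.of_isClosed_subset isCompact_Icc hZc Set.inter_subset_left
  set s := sSup Z with hs
  have hsZ : s ∈ Z := hZcomp.sSup_mem hZne
  have hs01 : s ∈ Set.Icc t0 t1 := hsZ.1
  have hfs : f s = 0 := hsZ.2
  have hst1 : s ≤ t1 := hs01.2
  -- Gronwall on [s, t1]
  have key : ∀ x ∈ Set.Icc s t1, ‖f x‖ ≤ gronwallBound 0 M 0 (x - s) := by
    apply norm_le_gronwallBound_of_norm_deriv_right_le
      (hcont.mono (Set.Icc_subset_Icc hs01.1 le_rfl))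
      (fun x hx => ((hf x ⟨hs01.1.trans hx.1, hx.2.le⟩).hasDerivWithinAt))
      (by simp [hfs])
    intro x hx
    have hx' : x ∈ Set.Icc t0 t1 := ⟨hs01.1.trans hx.1, hx.2.le⟩
    have : ‖a x * f x‖ = |a x| * ‖f x‖ := by
      rw [norm_mul]; rfl
    rw [this, add_zero]
    exact mul_le_mul_of_nonneg_right (hMb x hx') (norm_nonneg _)
  have := key t1 ⟨hst1, le_rfl⟩
  rw [gronwallBound_ε0] at this
  simp at this
  rw [this] at h
  exact lt_irrefl _ h

lemma sir_invariant {γ βmin βmax Imax t0 : ℝ}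
    (hγ : 0 < γ) (hβmin : 0 < βmin) (hβ : βmin ≤ βmax)
    (hI0 : 0 < Imax) (hI1 : Imax < 1)
    (hcond : βmax * (1 - Imax) ≤ γ)
    (S I β : ℝ → ℝ)
    (hS : Differentiable ℝ S) (hI : Differentiable ℝ I)
    (hβr : ∀ t, t0 ≤ t → β t ∈ Set.Icc βmin βmax)
    (hSd : ∀ t, t0 ≤ t → HasDerivAt S (-(β t * S t * I t)) t)
    (hId : ∀ t, t0 ≤ t → HasDerivAt I (β t * S t * I t - γ * I t) t)
    (hstart : (S t0, I t0) ∈ GPiSIR Imax) :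
    ∀ t, t0 ≤ t → (S t, I t) ∈ GPiSIR Imax := by
  obtain ⟨hS0, hI0', hsum0, hImax0⟩ := hstart
  simp only [GPiSIR, Set.mem_setOf_eq] at hS0 hI0' hsum0 hImax0 ⊢
  -- bounds on continuous functions on compacts
  have hScont : Continuous S := hS.continuous
  have hIcont : Continuous I := hI.continuous
  have hβpos : ∀ t, t0 ≤ t → 0 < β t := fun t htt => lt_of_lt_of_le hβmin (hβr t htt).1
  have hβle : ∀ t, t0 ≤ t → β t ≤ βmax := fun t htt => (hβr t htt).2
  -- Step 1 : S ≥ 0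
  have stepS : ∀ t, t0 ≤ t → 0 ≤ S t := by
    intro t1 ht1
    obtain ⟨C, hC⟩ := (isCompact_Icc (a := t0) (b := t1)).exists_bound_of_continuousOn
      hIcont.continuousOn
    refine no_sign_change (a := fun t => -(β t * I t)) ht1 ?_ ⟨βmax * C, ?_⟩ hS0
    · intro t htt
      have := hSd t htt.1
      convert this using 1; ring
    · intro t htt
      have h1 : |(-(β t * I t))| = β t * |I t| := by
        rw [abs_neg, abs_mul, abs_of_pos (hβpos t htt.1)]
      rw [h1]
      exact mul_le_mul (hβle t htt.1) (hC t htt) (abs_nonneg _)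
        (le_trans hβmin.le hβ)
  -- Step 2 : I ≥ 0
  have stepI : ∀ t, t0 ≤ t → 0 ≤ I t := by
    intro t1 ht1
    obtain ⟨C, hC⟩ := (isCompact_Icc (a := t0) (b := t1)).exists_bound_of_continuousOn
      hScont.continuousOn
    refine no_sign_change (a := fun t => β t * S t - γ) ht1 ?_ ⟨βmax * C + γ, ?_⟩ hI0'
    · intro t htt
      have := hId t htt.1
      convert this using 1; ring
    · intro t htt
      calc |β t * S t - γ| ≤ |β t * S t| + |γ| := abs_sub _ _
        _ ≤ βmax * C + γ := by
            rw [abs_mul, abs_of_pos (hβpos t htt.1), abs_of_pos hγ]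
            refine add_le_add ?_ le_rfl
            exact mul_le_mul (hβle t htt.1) (hC t htt) (abs_nonneg _)
              (le_trans hβmin.le hβ)
  -- Step 3 : S + I ≤ 1
  have stepSum : ∀ t, t0 ≤ t → S t + I t ≤ 1 := by
    intro t1 ht1
    have hanti : AntitoneOn (fun t => S t + I t) (Set.Icc t0 t1) := by
      apply antitoneOn_of_deriv_nonpos (convex_Icc t0 t1)
        ((hScont.add hIcont).continuousOn)
        (((hS.add hI)).differentiableOn)
      intro x hx
      rw [interior_Icc] at hx
      have hd : HasDerivAt (fun t => S t + I t) (-(γ * I x)) x := by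
        have := (hSd x hx.1.le).add (hId x hx.1.le)
        rw [show -(γ * I x) = -(β x * S x * I x) + (β x * S x * I x - γ * I x) by ring]
        exact this
      rw [show (S + I) = (fun t => S t + I t) from rfl, hd.deriv]
      have := stepI x hx.1.le
      nlinarith
    calc S t1 + I t1 ≤ S t0 + I t0 := hanti ⟨le_rfl, ht1⟩ ⟨ht1, le_rfl⟩ ht1
      _ ≤ 1 := hsum0
  -- Step 4 : I ≤ Imax
  have stepImax : ∀ t, t0 ≤ t → I t ≤ Imax := by
    intro t1 ht1
    by_contra hcon
    push_neg at hcon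
    set A : Set ℝ := Set.Icc t0 t1 ∩ I ⁻¹' (Set.Iic Imax) with hA
    have hAne : A.Nonempty := ⟨t0, ⟨le_rfl, ht1⟩, hImax0⟩
    have hAc : IsClosed A :=
      hIcont.continuousOn.preimage_isClosed_of_isClosed isClosed_Icc isClosed_Iic
    have hAcomp : IsCompact A :=
      IsCompact.of_isClosed_subset isCompact_Icc hAc Set.inter_subset_left
    set s := sSup A with hs
    have hsA : s ∈ A := hAcomp.sSup_mem hAne
    have hs01 : s ∈ Set.Icc t0 t1 := hsA.1
    have hIs : I s ≤ Imax := hsA.2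
    have hst1 : s ≤ t1 := hs01.2
    have hgt : ∀ t, s < t → t ≤ t1 → Imax < I t := by
      intro t hst htt1
      by_contra hle
      push_neg at hle
      have : t ∈ A := ⟨⟨hs01.1.trans hst.le, htt1⟩, hle⟩
      exact absurd (le_csSup hAcomp.bddAbove this) (not_le.mpr hst)
    have hslt : s < t1 :=
      lt_of_le_of_ne hst1 (by intro heq; rw [heq] at hIs; exact absurd hIs (not_le.mpr hcon))
    have hanti : AntitoneOn I (Set.Icc s t1) := by
      apply antitoneOn_of_deriv_nonpos (convex_Icc s t1) hIcont.continuousOn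
        hI.differentiableOn
      intro x hx
      rw [interior_Icc] at hx
      have hxt0 : t0 ≤ x := hs01.1.trans hx.1.le
      rw [(hId x hxt0).deriv]
      have h1 : 0 ≤ S x := stepS x hxt0
      have h2 : S x + I x ≤ 1 := stepSum x hxt0
      have h3 : Imax < I x := hgt x hx.1 hx.2.le
      have h4 : β x ≤ βmax := hβle x hxt0
      have h5 : 0 < β x := hβpos x hxt0
      have h6 : β x * S x ≤ γ := by nlinarith
      nlinarith
    have : I t1 ≤ I s := hanti ⟨le_rfl, hst1⟩ ⟨hst1, le_rfl⟩ hst1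
    linarith
  intro t htt
  exact ⟨stepS t htt, stepI t htt, stepSum t htt, stepImax t htt⟩

set_option maxHeartbeats 2000000 in
lemma sir_escape {γ βmax Imax : ℝ} (t0 : ℝ) (hγ : 0 < γ) (hB : 0 < βmax)
    (hI0 : 0 < Imax) (hI1 : Imax < 1) (hlt : γ < βmax * (1 - Imax)) :
    ∃ S I : ℝ → ℝ, Differentiable ℝ S ∧ Differentiable ℝ I ∧
      (∀ t, t0 ≤ t → HasDerivAt S (-(βmax * S t * I t)) t) ∧
      (∀ t, t0 ≤ t → HasDerivAt I (βmax * S t * I t - γ * I t) t) ∧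
      S t0 = 1 - Imax ∧ I t0 = Imax ∧ ∃ t2, t0 ≤ t2 ∧ Imax < I t2 := by
  classical
  obtain ⟨B, hBdef⟩ : ∃ x : ℝ, x = βmax := ⟨_, rfl⟩
  rw [← hBdef] at hB hlt ⊢
  obtain ⟨S0, hS0def⟩ : ∃ x : ℝ, x = 1 - Imax := ⟨_, rfl⟩
  have hS0pos : 0 < S0 := by rw [hS0def]; linarith
  have hS0lt1 : S0 < 1 := by rw [hS0def]; linarith
  have hlt' : γ < B * S0 := by rw [hS0def]; exact hlt
  obtain ⟨sstar, hsstardef⟩ : ∃ x : ℝ, x = γ / B := ⟨_, rfl⟩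
  have hsstarpos : 0 < sstar := hsstardef ▸ div_pos hγ hB
  have hsstarlt : sstar < S0 := by
    rw [hsstardef, div_lt_iff₀ hB]; linarith
  -- the first-integral function i
  obtain ⟨i, hidef⟩ : ∃ f : ℝ → ℝ,
      f = fun s => 1 - s + γ / B * (Real.log s - Real.log S0) := ⟨_, rfl⟩
  have hiS0 : i S0 = Imax := by rw [hidef]; simp; rw [hS0def]; ring
  have hdi : ∀ s : ℝ, 0 < s → HasDerivAt i (γ / B * s⁻¹ - 1) s := by
    intro s hs
    rw [hidef]
    have h1 : HasDerivAt (fun x : ℝ => Real.log x - Real.log S0) s⁻¹ s :=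
      (Real.hasDerivAt_log hs.ne').sub_const _
    have h2 : HasDerivAt (fun x : ℝ => 1 - x) (-1) s :=
      (hasDerivAt_id s).const_sub 1
    have := h2.add (h1.const_mul (γ / B))
    rw [show γ / B * s⁻¹ - 1 = -1 + γ / B * s⁻¹ by ring]
    exact this
  have hicont : ∀ s : ℝ, 0 < s → ContinuousAt i s := fun s hs => (hdi s hs).continuousAt
  -- i is strictly decreasing on [sstar, ∞)
  have hstrictanti : StrictAntiOn i (Set.Ici sstar) := by
    apply strictAntiOn_of_deriv_neg (convex_Ici sstar)
    · exact fun s hs => (hicont s (lt_of_lt_of_le hsstarpos hs)).continuousWithinAt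
    · intro x hx
      rw [interior_Ici] at hx
      have hxpos : 0 < x := hsstarpos.trans hx
      rw [(hdi x hxpos).deriv]
      have hx' : γ / B < x := hsstardef ▸ hx
      have h1 : γ / B * x⁻¹ < 1 := by
        rw [← div_eq_mul_inv, div_lt_one hxpos]
        exact hx'
      linarith
  -- find S2 > S0 with i S2 = Imax / 2
  obtain ⟨c, hcdef⟩ : ∃ x : ℝ, x = γ / B * (-Real.log S0) := ⟨_, rfl⟩
  have hc : 0 ≤ c := by
    rw [hcdef]
    apply mul_nonneg (le_of_lt (div_pos hγ hB))
    have := Real.log_neg hS0pos hS0lt1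
    linarith
  obtain ⟨sbig, hsbigdef⟩ : ∃ x : ℝ, x = max (S0 + 1) ((2 + c) / (1 - sstar)) := ⟨_, rfl⟩
  have hsbig1 : S0 + 1 ≤ sbig := hsbigdef ▸ le_max_left _ _
  have honesstar : 0 < 1 - sstar := by linarith
  have hsbig2 : 2 + c ≤ (1 - sstar) * sbig := by
    rw [mul_comm, ← div_le_iff₀ honesstar]
    exact hsbigdef ▸ le_max_right _ _
  have hsbigpos : 0 < sbig := by linarith
  have hisbig : i sbig < Imax / 2 := by
    have hlog : Real.log sbig ≤ sbig - 1 := Real.log_le_sub_one_of_pos hsbigpos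
    have h2 : γ / B * Real.log sbig ≤ γ / B * (sbig - 1) :=
      mul_le_mul_of_nonneg_left hlog (le_of_lt (div_pos hγ hB))
    have h2' : γ / B * (sbig - 1) ≤ sstar * sbig := by
      rw [hsstardef]
      have : 0 < γ / B := div_pos hγ hB
      nlinarith
    have hexp : i sbig = 1 - sbig + γ / B * Real.log sbig + c := by
      rw [hidef, hcdef]; ring
    nlinarith
  have hIVT2 : ∃ S2 ∈ Set.Icc S0 sbig, i S2 = Imax / 2 := by
    have hcont : ContinuousOn i (Set.Icc S0 sbig) := fun x hx =>
      (hicont x (lt_of_lt_of_le hS0pos hx.1)).continuousWithinAt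
    have hmem : Imax / 2 ∈ Set.Icc (i sbig) (i S0) := ⟨hisbig.le, by rw [hiS0]; linarith⟩
    obtain ⟨x, hx1, hx2⟩ := intermediate_value_Icc' (by linarith : S0 ≤ sbig) hcont hmem
    exact ⟨x, hx1, hx2⟩
  obtain ⟨S2, hS2mem, hiS2⟩ := hIVT2
  have hS0S2 : S0 < S2 := by
    rcases lt_or_eq_of_le hS2mem.1 with h | h
    · exact h
    · exfalso; rw [← h, hiS0] at hiS2; linarith
  have hS2pos : 0 < S2 := hS0pos.trans hS0S2
  -- i ≥ Imax/2 on [S0, S2]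
  have hige : ∀ s ∈ Set.Icc S0 S2, Imax / 2 ≤ i s := by
    intro s hs
    rcases lt_or_eq_of_le hs.2 with h | h
    · have := hstrictanti (Set.mem_Ici.mpr (le_trans hsstarlt.le hs.1))
        (Set.mem_Ici.mpr (le_trans hsstarlt.le (hs.1.trans hs.2))) h
      rw [hiS2] at this
      linarith
    · rw [h, hiS2]
  -- small s with i < 0
  obtain ⟨ssmall, hssmalldef⟩ : ∃ x : ℝ,
      x = min (Real.exp (-(2 + c) * B / γ)) (S0 / 2) := ⟨_, rfl⟩
  have hssmallpos : 0 < ssmall := hssmalldef ▸ lt_min (Real.exp_pos _) (by linarith)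
  have hssmallltS0 : ssmall < S0 :=
    lt_of_le_of_lt (hssmalldef ▸ min_le_right _ _) (by linarith)
  have hismall : i ssmall < 0 := by
    have hlog : Real.log ssmall ≤ -(2 + c) * B / γ := by
      calc Real.log ssmall ≤ Real.log (Real.exp (-(2 + c) * B / γ)) :=
            Real.log_le_log hssmallpos (hssmalldef ▸ min_le_left _ _)
        _ = -(2 + c) * B / γ := Real.log_exp _
    have h1 : γ / B * Real.log ssmall ≤ -(2 + c) := by
      have h2 : γ / B * Real.log ssmall ≤ γ / B * (-(2 + c) * B / γ) :=
        mul_le_mul_of_nonneg_left hlog (le_of_lt (div_pos hγ hB))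
      have h3 : γ / B * (-(2 + c) * B / γ) = -(2 + c) := by
        field_simp
      linarith
    have hexp : i ssmall = 1 - ssmall + γ / B * Real.log ssmall + c := by
      rw [hidef, hcdef]; ring
    nlinarith
  -- sinf : last zero-crossing of i below S0
  obtain ⟨Z, hZdef⟩ : ∃ A : Set ℝ, A = Set.Icc ssmall S0 ∩ i ⁻¹' (Set.Iic 0) := ⟨_, rfl⟩
  have hZne : Z.Nonempty := ⟨ssmall, hZdef ▸ ⟨⟨le_rfl, hssmallltS0.le⟩, hismall.le⟩⟩
  have hZcont : ContinuousOn i (Set.Icc ssmall S0) := fun x hx =>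
    (hicont x (lt_of_lt_of_le hssmallpos hx.1)).continuousWithinAt
  have hZclosed : IsClosed Z :=
    hZdef ▸ hZcont.preimage_isClosed_of_isClosed isClosed_Icc isClosed_Iic
  have hZcomp : IsCompact Z := by
    rw [hZdef] at hZclosed ⊢
    exact IsCompact.of_isClosed_subset isCompact_Icc hZclosed Set.inter_subset_left
  obtain ⟨sinf, hsinfdef⟩ : ∃ x : ℝ, x = sSup Z := ⟨_, rfl⟩
  have hsinfZ : sinf ∈ Z := hsinfdef ▸ hZcomp.sSup_mem hZne
  have hsinfZ' := hZdef ▸ hsinfZ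
  have hsinfpos : 0 < sinf := lt_of_lt_of_le hssmallpos hsinfZ'.1.1
  have hisinf : i sinf ≤ 0 := hsinfZ'.2
  have hsinfltS0 : sinf < S0 := by
    rcases lt_or_eq_of_le hsinfZ'.1.2 with h | h
    · exact h
    · exfalso; rw [h, hiS0] at hisinf; linarith
  have hsinfltsstar : sinf < sstar := by
    by_contra hcon
    push_neg at hcon
    have := hstrictanti.antitoneOn (Set.mem_Ici.mpr hcon)
      (Set.mem_Ici.mpr hsstarlt.le) hsinfltS0.le
    rw [hiS0] at this
    linarith
  -- positivity of i on (sinf, S2]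
  have hipos : ∀ s, sinf < s → s ≤ S2 → 0 < i s := by
    intro s hs1 hs2
    rcases le_or_gt s S0 with h | h
    · by_contra hcon
      push_neg at hcon
      have hsZ : s ∈ Z := hZdef ▸ ⟨⟨le_trans hsinfZ'.1.1 hs1.le, h⟩, hcon⟩
      have := le_csSup hZcomp.bddAbove hsZ
      rw [← hsinfdef] at this
      exact absurd this (not_le.mpr hs1)
    · have := hige s ⟨h.le, hs2⟩
      linarith
  -- linear upper bound on i near sinf
  obtain ⟨L, hLdef⟩ : ∃ x : ℝ, x = γ / B * sinf⁻¹ - 1 := ⟨_, rfl⟩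
  have hLpos : 0 < L := by
    rw [hLdef]
    have h1 : 1 < γ / B * sinf⁻¹ := by
      rw [← div_eq_mul_inv, lt_div_iff₀ hsinfpos, one_mul, ← hsstardef]
      exact hsinfltsstar
    linarith
  have hub : ∀ s ∈ Set.Icc sinf sstar, i s ≤ L * (s - sinf) := by
    intro s hs
    have hmono : MonotoneOn (fun x => L * (x - sinf) - i x) (Set.Icc sinf sstar) := by
      apply monotoneOn_of_deriv_nonneg (convex_Icc sinf sstar)
      · apply ContinuousOn.sub
        · exact (continuous_const.mul (continuous_id.sub continuous_const)).continuousOn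
        · exact fun x hx => (hicont x (lt_of_lt_of_le hsinfpos hx.1)).continuousWithinAt
      · intro x hx
        rw [interior_Icc] at hx
        have hxpos : 0 < x := hsinfpos.trans hx.1
        apply DifferentiableAt.differentiableWithinAt
        exact ((differentiable_const L).mul ((differentiable_id).sub
          (differentiable_const sinf))).differentiableAt.sub (hdi x hxpos).differentiableAt
      · intro x hx
        rw [interior_Icc] at hx
        have hxpos : 0 < x := hsinfpos.trans hx.1
        have hd : HasDerivAt (fun x => L * (x - sinf) - i x)
            (L * 1 - (γ / B * x⁻¹ - 1)) x := by
          exact (((hasDerivAt_id x).sub_const sinf).const_mul L).sub (hdi x hxpos)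
        rw [hd.deriv]
        have h2 : γ / B * x⁻¹ ≤ γ / B * sinf⁻¹ := by
          apply mul_le_mul_of_nonneg_left _ (le_of_lt (div_pos hγ hB))
          exact inv_anti₀ hsinfpos hx.1.le
        rw [hLdef]
        linarith
    have h3 := hmono (Set.left_mem_Icc.mpr (by linarith [hs.1, hs.2] : sinf ≤ sstar)) hs hs.1
    simp only [sub_self, mul_zero, zero_sub] at h3
    linarith [hisinf, h3]
  -- key auxiliary points
  obtain ⟨m, hmdef⟩ : ∃ x : ℝ, x = (sinf + sstar) / 2 := ⟨_, rfl⟩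
  have hm1 : sinf < m := by rw [hmdef]; linarith
  have hm2 : m < sstar := by rw [hmdef]; linarith
  have hmltS0 : m < S0 := hm2.trans hsstarlt
  obtain ⟨S1, hS1def⟩ : ∃ x : ℝ, x = (S0 + S2) / 2 := ⟨_, rfl⟩
  have hS1a : S0 < S1 := by rw [hS1def]; linarith
  have hS1b : S1 < S2 := by rw [hS1def]; linarith
  obtain ⟨spt, hsptdef⟩ : ∃ x : ℝ, x = (sstar + S0) / 2 := ⟨_, rfl⟩
  have hspt1 : sstar < spt := by rw [hsptdef]; linarith
  have hspt2 : spt < S0 := by rw [hsptdef]; linarith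
  -- the domain D and the functions F, g, T
  obtain ⟨D, hDdef⟩ : ∃ A : Set ℝ, A = Set.Ioo sinf S2 := ⟨_, rfl⟩
  have hDopen : IsOpen D := hDdef ▸ isOpen_Ioo
  have hDmem : ∀ s, s ∈ D ↔ sinf < s ∧ s < S2 := by
    intro s; rw [hDdef]; exact Set.mem_Ioo
  have hS0D : S0 ∈ D := (hDmem S0).mpr ⟨hsinfltS0, hS0S2⟩
  have hS1D : S1 ∈ D := (hDmem S1).mpr ⟨hsinfltS0.trans hS1a, hS1b⟩
  have hsptD : spt ∈ D := (hDmem spt).mpr ⟨hsinfltsstar.trans hspt1, hspt2.trans hS0S2⟩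
  have hDsub : ∀ s ∈ D, 0 < s := fun s hs => hsinfpos.trans ((hDmem s).mp hs).1
  obtain ⟨F, hFdef⟩ : ∃ f : ℝ → ℝ, f = fun s => B * s * i s := ⟨_, rfl⟩
  have hFpos : ∀ s ∈ D, 0 < F s := by
    intro s hs
    rw [hFdef]
    obtain ⟨h1, h2⟩ := (hDmem s).mp hs
    exact mul_pos (mul_pos hB (hDsub s hs)) (hipos s h1 h2.le)
  have hFcont : ContinuousOn F D := by
    rw [hFdef]
    exact ((continuous_const.mul continuous_id).continuousOn).mul
      (fun s hs => (hicont s (hDsub s hs)).continuousWithinAt)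
  obtain ⟨g, hgdef⟩ : ∃ f : ℝ → ℝ, f = fun s => (F s)⁻¹ := ⟨_, rfl⟩
  have hgpos : ∀ s ∈ D, 0 < g s := by
    intro s hs; rw [hgdef]; exact inv_pos.mpr (hFpos s hs)
  have hgcont : ContinuousOn g D := by
    rw [hgdef]
    exact hFcont.inv₀ (fun s hs => (hFpos s hs).ne')
  have hgint : ∀ a ∈ D, ∀ b ∈ D, IntervalIntegrable g volume a b := by
    intro a ha b hb
    apply ContinuousOn.intervalIntegrable
    apply hgcont.mono
    exact (hDdef ▸ Set.ordConnected_Ioo : Set.OrdConnected D).uIcc_subset ha hb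
  obtain ⟨T, hTdef⟩ : ∃ f : ℝ → ℝ, f = fun s => -(∫ x in S0..s, g x) := ⟨_, rfl⟩
  have hTS0 : T S0 = 0 := by rw [hTdef]; simp
  have hTd : ∀ s ∈ D, HasDerivAt T (-(g s)) s := by
    intro s hs
    rw [hTdef]
    apply HasDerivAt.neg
    exact intervalIntegral.integral_hasDerivAt_right (hgint S0 hS0D s hs)
      (hgcont.stronglyMeasurableAtFilter hDopen s hs)
      (hgcont.continuousAt (hDopen.mem_nhds hs))
  have hTcont : ContinuousOn T D := fun s hs => (hTd s hs).continuousAt.continuousWithinAt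
  have hTanti : StrictAntiOn T D := by
    apply strictAntiOn_of_deriv_neg (hDdef ▸ convex_Ioo sinf S2) hTcont
    intro x hx
    rw [hDopen.interior_eq] at hx
    rw [(hTd x hx).deriv]
    exact neg_neg_iff_pos.mpr (hgpos x hx)
  have hTS1 : T S1 < 0 := by
    rw [← hTS0]
    exact hTanti hS0D hS1D hS1a
  have hTspt : 0 < T spt := by
    rw [← hTS0]
    exact hTanti hsptD hS0D hspt2
  obtain ⟨c0, hc0def⟩ : ∃ x : ℝ, x = (B * S2 * L)⁻¹ := ⟨_, rfl⟩
  have hc0pos : 0 < c0 := by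
    rw [hc0def]
    exact inv_pos.mpr (mul_pos (mul_pos hB hS2pos) hLpos)
  -- divergence lower bound on T near sinf
  have hTlow : ∀ s, sinf < s → s ≤ m →
      c0 * (Real.log (m - sinf) - Real.log (s - sinf)) ≤ T s := by
    intro s hs1 hs2
    have hsD : s ∈ D := (hDmem s).mpr ⟨hs1, by linarith⟩
    have hmD : m ∈ D := (hDmem m).mpr ⟨hm1, by linarith⟩
    have hTseq : T s = (∫ x in s..m, g x) + ∫ x in m..S0, g x := by
      rw [hTdef]
      simp only
      rw [← intervalIntegral.integral_symm]
      rw [intervalIntegral.integral_add_adjacent_intervals (hgint s hsD m hmD)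
        (hgint m hmD S0 hS0D)]
    have h2 : 0 ≤ ∫ x in m..S0, g x := by
      apply intervalIntegral.integral_nonneg (by linarith : m ≤ S0)
      intro u hu
      exact (hgpos u ((hDmem u).mpr ⟨lt_of_lt_of_le hm1 hu.1, by
        rcases hu with ⟨_, h⟩; linarith⟩)).le
    have h3 : (∫ x in s..m, c0 * (x - sinf)⁻¹) ≤ ∫ x in s..m, g x := by
      apply intervalIntegral.integral_mono_on (by linarith : s ≤ m)
      · apply ContinuousOn.intervalIntegrable
        apply ContinuousOn.mul continuousOn_const
        apply ContinuousOn.inv₀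
        · exact (continuous_id.sub continuous_const).continuousOn
        · intro x hx
          rw [Set.uIcc_of_le (by linarith : s ≤ m)] at hx
          have : sinf < x := lt_of_lt_of_le hs1 hx.1
          exact sub_ne_zero_of_ne this.ne'
      · exact hgint s hsD m hmD
      · intro x hx
        have hxD : x ∈ D := (hDmem x).mpr ⟨lt_of_lt_of_le hs1 hx.1, by
          rcases hx with ⟨_, h⟩; linarith⟩
        have hxsinf : sinf < x := lt_of_lt_of_le hs1 hx.1
        have hxpos : 0 < x := hDsub x hxD
        have hFxle : F x ≤ B * S2 * L * (x - sinf) := by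
          rw [hFdef]
          have hix : i x ≤ L * (x - sinf) := hub x ⟨hxsinf.le, by
            rcases hx with ⟨_, h⟩; linarith⟩
          have hxS2 : x ≤ S2 := (le_of_lt ((hDmem x).mp hxD).2)
          have hipx : 0 < i x := hipos x hxsinf hxS2
          have hstep : B * x * i x ≤ B * S2 * (L * (x - sinf)) := by
            apply mul_le_mul (mul_le_mul_of_nonneg_left hxS2 hB.le) hix hipx.le
              (mul_nonneg hB.le (hxpos.trans_le hxS2).le)
          calc B * x * i x ≤ B * S2 * (L * (x - sinf)) := hstep
            _ = B * S2 * L * (x - sinf) := by ring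
        have hinv : (B * S2 * L * (x - sinf))⁻¹ ≤ (F x)⁻¹ :=
          inv_anti₀ (hFpos x hxD) hFxle
        calc c0 * (x - sinf)⁻¹ = (B * S2 * L * (x - sinf))⁻¹ := by
              rw [hc0def, ← mul_inv]
          _ ≤ (F x)⁻¹ := hinv
          _ = g x := by rw [hgdef]
    have h4 : (∫ x in s..m, c0 * (x - sinf)⁻¹) =
        c0 * (Real.log (m - sinf) - Real.log (s - sinf)) := by
      rw [intervalIntegral.integral_const_mul]
      congr 1
      have h5 : (∫ x in s..m, (x - sinf)⁻¹) = ∫ x in (s - sinf)..(m - sinf), x⁻¹ :=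
        (intervalIntegral.integral_comp_sub_right (fun x => x⁻¹) sinf)
      rw [h5, integral_inv]
      · rw [Real.log_div (by intro hc; linarith [sub_eq_zero.mp hc] : m - sinf ≠ 0)
          (by intro hc; linarith [sub_eq_zero.mp hc] : s - sinf ≠ 0)]
      · intro hmem
        rw [Set.uIcc_of_le (by linarith : s - sinf ≤ m - sinf)] at hmem
        have := hmem.1
        linarith
    linarith [hTseq, h2, h3, h4.symm.le]
  -- surjectivity of T onto (T S1, ∞)
  have hexists : ∀ u, T S1 < u → ∃ s ∈ D, T s = u := by
    intro u hu
    obtain ⟨slow, hslowdef⟩ : ∃ x : ℝ,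
        x = sinf + (m - sinf) * Real.exp (-(max u 0 + 1) / c0) := ⟨_, rfl⟩
    have hms : 0 < m - sinf := by linarith
    have hexppos : 0 < Real.exp (-(max u 0 + 1) / c0) := Real.exp_pos _
    have hslow1 : sinf < slow := by
      rw [hslowdef]
      have := mul_pos hms hexppos
      linarith
    have hexplt1 : Real.exp (-(max u 0 + 1) / c0) < 1 := by
      rw [Real.exp_lt_one_iff]
      have h6 : 0 < max u 0 + 1 := by positivity
      rw [neg_div]
      simp only [Left.neg_neg_iff]
      positivity
    have hslow2 : slow < m := by
      rw [hslowdef]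
      have := (mul_lt_mul_of_pos_left hexplt1 hms)
      linarith
    have hlogslow : Real.log (slow - sinf) =
        Real.log (m - sinf) + (-(max u 0 + 1) / c0) := by
      rw [hslowdef]
      have : sinf + (m - sinf) * Real.exp (-(max u 0 + 1) / c0) - sinf
          = (m - sinf) * Real.exp (-(max u 0 + 1) / c0) := by ring
      rw [this, Real.log_mul hms.ne' hexppos.ne', Real.log_exp]
    have hTslow : u + 1 ≤ T slow := by
      have h7 := hTlow slow hslow1 hslow2.le
      rw [hlogslow] at h7
      have h8 : c0 * (Real.log (m - sinf) -
          (Real.log (m - sinf) + (-(max u 0 + 1) / c0))) = max u 0 + 1 := by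
        field_simp
        ring
      rw [h8] at h7
      have : u ≤ max u 0 := le_max_left _ _
      linarith
    have hcont : ContinuousOn T (Set.Icc slow S1) := by
      apply hTcont.mono
      intro x hx
      exact (hDmem x).mpr ⟨lt_of_lt_of_le hslow1 hx.1, lt_of_le_of_lt hx.2 hS1b⟩
    have hmem : u ∈ Set.Icc (T S1) (T slow) := ⟨hu.le, by linarith⟩
    obtain ⟨x, hx1, hx2⟩ := intermediate_value_Icc'
      (by linarith : slow ≤ S1) hcont hmem
    exact ⟨x, (hDmem x).mpr ⟨lt_of_lt_of_le hslow1 hx1.1, lt_of_le_of_lt hx1.2 hS1b⟩, hx2⟩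
  -- the inverse function σ of T
  obtain ⟨sig, hsigdef⟩ : ∃ f : ℝ → ℝ, f = fun u =>
      if h : ∃ s ∈ D, T s = u then h.choose else S0 := ⟨_, rfl⟩
  have hsigspec : ∀ u, T S1 < u → sig u ∈ D ∧ T (sig u) = u := by
    intro u hu
    have hex : ∃ s ∈ D, T s = u := hexists u hu
    rw [hsigdef]
    simp only [dif_pos hex]
    exact ⟨hex.choose_spec.1, hex.choose_spec.2⟩
  have hTinj : Set.InjOn T D := hTanti.injOn
  have hsig0 : sig 0 = S0 := by
    have h := hsigspec 0 hTS1
    exact hTinj h.1 hS0D (by rw [h.2, hTS0])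
  have hsptS1 : spt < S1 := hspt2.trans hS1a
  have hsigspt : sig (T spt) = spt := by
    have hlt2 : T S1 < T spt := hTanti hsptD hS1D hsptS1
    have h := hsigspec (T spt) hlt2
    exact hTinj h.1 hsptD h.2
  -- continuity of σ
  have hsigcont : ∀ u, T S1 < u → ContinuousAt sig u := by
    intro u hu
    rw [Metric.continuousAt_iff]
    intro ε hε
    obtain ⟨hsD, hTs⟩ := hsigspec u hu
    obtain ⟨hd1, hd2⟩ := (hDmem (sig u)).mp hsD
    obtain ⟨e1, he1def⟩ : ∃ x : ℝ,
        x = min ε (min ((sig u - sinf)/2) ((S2 - sig u)/2)) := ⟨_, rfl⟩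
    have he1pos : 0 < e1 := by
      rw [he1def]; exact lt_min hε (lt_min (by linarith) (by linarith))
    have he1ε : e1 ≤ ε := he1def ▸ min_le_left _ _
    have he1a : e1 ≤ (sig u - sinf)/2 :=
      he1def ▸ le_trans (min_le_right _ _) (min_le_left _ _)
    have he1b : e1 ≤ (S2 - sig u)/2 :=
      he1def ▸ le_trans (min_le_right _ _) (min_le_right _ _)
    have haD : sig u - e1 ∈ D := (hDmem _).mpr ⟨by linarith, by linarith⟩
    have hbD : sig u + e1 ∈ D := (hDmem _).mpr ⟨by linarith, by linarith⟩
    have hTa : u < T (sig u - e1) := by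
      have := hTanti haD hsD (by linarith)
      rwa [hTs] at this
    have hTb : T (sig u + e1) < u := by
      have := hTanti hsD hbD (by linarith)
      rwa [hTs] at this
    obtain ⟨δ, hδdef⟩ : ∃ x : ℝ,
        x = min (min (T (sig u - e1) - u) (u - T (sig u + e1))) (u - T S1) := ⟨_, rfl⟩
    have hδpos : 0 < δ := by
      rw [hδdef]
      exact lt_min (lt_min (by linarith) (by linarith)) (by linarith)
    have hδ1 : δ ≤ T (sig u - e1) - u :=
      hδdef ▸ le_trans (min_le_left _ _) (min_le_left _ _)
    have hδ2 : δ ≤ u - T (sig u + e1) :=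
      hδdef ▸ le_trans (min_le_left _ _) (min_le_right _ _)
    have hδ3 : δ ≤ u - T S1 := hδdef ▸ min_le_right _ _
    refine ⟨δ, hδpos, ?_⟩
    intro v hv
    rw [Real.dist_eq] at hv
    have hvS1 : T S1 < v := by
      have := abs_lt.mp hv
      linarith [this.1]
    obtain ⟨hvD, hTv⟩ := hsigspec v hvS1
    have hlow : sig u - e1 < sig v := by
      by_contra hcon
      push_neg at hcon
      have := hTanti.le_iff_ge haD hvD |>.mpr hcon
      rw [hTv] at this
      have := abs_lt.mp hv
      linarith
    have hhigh : sig v < sig u + e1 := by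
      by_contra hcon
      push_neg at hcon
      have := hTanti.le_iff_ge hvD hbD |>.mpr hcon
      rw [hTv] at this
      have := abs_lt.mp hv
      linarith
    rw [Real.dist_eq, abs_lt]
    constructor <;> [linarith; linarith]
  -- derivative of σ
  have hsigderiv : ∀ u, T S1 < u → HasDerivAt sig (-(F (sig u))) u := by
    intro u hu
    obtain ⟨hsD, hTs⟩ := hsigspec u hu
    have hloc : ∀ᶠ v in nhds u, T (sig v) = v := by
      filter_upwards [isOpen_Ioi.mem_nhds (show u ∈ Set.Ioi (T S1) from hu)] with v hv
      exact (hsigspec v hv).2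
    have hTd' : HasDerivAt T (-(g (sig u))) (sig u) := hTd (sig u) hsD
    have hne : -(g (sig u)) ≠ 0 := neg_ne_zero.mpr (hgpos (sig u) hsD).ne'
    have hder := HasDerivAt.of_local_left_inverse (hsigcont u hu) hTd' hne hloc
    rw [show -(F (sig u)) = (-(g (sig u)))⁻¹ by rw [hgdef]; simp [inv_neg, inv_inv]]
    exact hder
  -- the glue point
  obtain ⟨u1, hu1def⟩ : ∃ x : ℝ, x = T S1 / 2 := ⟨_, rfl⟩
  have hu1a : T S1 < u1 := by rw [hu1def]; linarith
  have hu1b : u1 < 0 := by rw [hu1def]; linarith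
  obtain ⟨d1, hd1def⟩ : ∃ x : ℝ, x = -(F (sig u1)) := ⟨_, rfl⟩
  have hd1neg : d1 < 0 := by
    rw [hd1def]
    exact neg_lt_zero.mpr (hFpos _ (hsigspec u1 hu1a).1)
  obtain ⟨t1, ht1def⟩ : ∃ x : ℝ, x = t0 + u1 := ⟨_, rfl⟩
  have ht1u : t1 - t0 = u1 := by rw [ht1def]; ring
  have ht1lt : t1 < t0 := by rw [ht1def]; linarith
  obtain ⟨Sf, hSfdef⟩ : ∃ f : ℝ → ℝ, f = fun t =>
      if t1 ≤ t then sig (t - t0) else sig u1 + d1 * (t - t1) := ⟨_, rfl⟩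
  have hglue : ∀ t, t1 ≤ t → T S1 < t - t0 := by
    intro t ht
    rw [ht1def] at ht
    linarith
  have hSfval : ∀ t, t1 ≤ t → Sf t = sig (t - t0) := by
    intro t ht
    rw [hSfdef]
    simp only
    rw [if_pos ht]
  have hSfpos : ∀ t, 0 < Sf t := by
    intro t
    by_cases h : t1 ≤ t
    · rw [hSfval t h]
      exact hDsub _ (hsigspec _ (hglue t h)).1
    · rw [hSfdef]
      simp only
      rw [if_neg h]
      push_neg at h
      have h1 : 0 < d1 * (t - t1) := mul_pos_of_neg_of_neg hd1neg (by linarith)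
      have h2 : 0 < sig u1 := hDsub _ (hsigspec u1 hu1a).1
      linarith
  -- derivative of Sf
  obtain ⟨SD, hSDdef⟩ : ∃ f : ℝ → ℝ, f = fun t =>
      if t1 ≤ t then -(F (sig (t - t0))) else d1 := ⟨_, rfl⟩
  have hSDval : ∀ t, t1 ≤ t → SD t = -(F (sig (t - t0))) := by
    intro t ht
    rw [hSDdef]
    simp only
    rw [if_pos ht]
  have hcomp : ∀ t, t1 ≤ t →
      HasDerivAt (fun x => sig (x - t0)) (-(F (sig (t - t0)))) t := by
    intro t ht
    have h1 : HasDerivAt (fun x : ℝ => x - t0) 1 t := (hasDerivAt_id t).sub_const t0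
    have h2 := (hsigderiv (t - t0) (hglue t ht)).comp t h1
    rw [mul_one] at h2
    exact h2
  have hSfderiv : ∀ t, HasDerivAt Sf (SD t) t := by
    intro t
    rcases lt_trichotomy t t1 with h | h | h
    · have hval : SD t = d1 := by
        rw [hSDdef]; simp only; rw [if_neg (not_le.mpr h)]
      rw [hval]
      have hlin : HasDerivAt (fun x => sig u1 + d1 * (x - t1)) d1 t := by
        have := (((hasDerivAt_id t).sub_const t1).const_mul d1).const_add (sig u1)
        simpa using this
      apply hlin.congr_of_eventuallyEq
      filter_upwards [isOpen_Iio.mem_nhds (show t ∈ Set.Iio t1 from h)] with x hx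
      rw [hSfdef]; simp only; rw [if_neg (not_le.mpr hx)]
    · rw [h]
      have hval : SD t1 = d1 := by
        rw [hSDval t1 le_rfl, ht1u, ← hd1def]
      rw [hval]
      have hright : HasDerivWithinAt Sf d1 (Set.Ici t1) t1 := by
        have h2 := (hcomp t1 le_rfl).hasDerivWithinAt (s := Set.Ici t1)
        rw [ht1u, ← hd1def] at h2
        apply h2.congr
        · intro x hx
          exact hSfval x hx
        · exact hSfval t1 le_rfl
      have hleft : HasDerivWithinAt Sf d1 (Set.Iic t1) t1 := by
        have hlin : HasDerivAt (fun x => sig u1 + d1 * (x - t1)) d1 t1 := by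
          have := (((hasDerivAt_id t1).sub_const t1).const_mul d1).const_add (sig u1)
          simpa using this
        apply hlin.hasDerivWithinAt.congr
        · intro x hx
          rcases eq_or_lt_of_le (Set.mem_Iic.mp hx) with heq | hlt
          · rw [heq, hSfval t1 le_rfl, ht1u]
            simp
          · rw [hSfdef]; simp only; rw [if_neg (not_le.mpr hlt)]
        · rw [hSfval t1 le_rfl, ht1u]
          simp
      have hun := hleft.union hright
      rw [Set.Iic_union_Ici] at hun
      exact hun.hasDerivAt Filter.univ_mem
    · rw [hSDval t h.le]
      apply (hcomp t h.le).congr_of_eventuallyEq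
      filter_upwards [isOpen_Ioi.mem_nhds (show t ∈ Set.Ioi t1 from h)] with x hx
      exact hSfval x hx.le
  have hSfdiff : Differentiable ℝ Sf := fun t => (hSfderiv t).differentiableAt
  obtain ⟨If, hIfdef⟩ : ∃ f : ℝ → ℝ, f = fun t => i (Sf t) := ⟨_, rfl⟩
  have hIfderiv : ∀ t, HasDerivAt If ((γ / B * (Sf t)⁻¹ - 1) * SD t) t := by
    intro t
    rw [hIfdef]
    exact (hdi (Sf t) (hSfpos t)).comp t (hSfderiv t)
  have hIfdiff : Differentiable ℝ If := fun t => (hIfderiv t).differentiableAt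
  have ht0ge : ∀ t, t0 ≤ t → t1 ≤ t := fun t ht => le_trans ht1lt.le ht
  -- S-equation
  have hSode : ∀ t, t0 ≤ t → HasDerivAt Sf (-(B * Sf t * If t)) t := by
    intro t ht
    have h1 := hSfderiv t
    rw [hSDval t (ht0ge t ht)] at h1
    convert h1 using 1
    simp only [hIfdef, hFdef, hSfval t (ht0ge t ht)]
  -- I-equation
  have hIode : ∀ t, t0 ≤ t → HasDerivAt If (B * Sf t * If t - γ * If t) t := by
    intro t ht
    have h1 := hIfderiv t
    rw [hSDval t (ht0ge t ht), ← hSfval t (ht0ge t ht)] at h1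
    convert h1 using 1
    simp only [hIfdef, hFdef]
    have hpos := hSfpos t
    field_simp
    ring
  have hSft0 : Sf t0 = S0 := by
    rw [hSfval t0 ht1lt.le, sub_self, hsig0]
  refine ⟨Sf, If, hSfdiff, hIfdiff, hSode, hIode, ?_, ?_, ?_⟩
  · rw [hSft0, hS0def]
  · simp only [hIfdef, hSft0, hiS0]
  · refine ⟨t0 + T spt, by linarith, ?_⟩
    have h1 : Sf (t0 + T spt) = spt := by
      rw [hSfval _ (ht0ge _ (by linarith))]
      rw [show t0 + T spt - t0 = T spt from by ring, hsigspt]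
    simp only [hIfdef, h1]
    have h2 := hstrictanti (Set.mem_Ici.mpr hspt1.le) (Set.mem_Ici.mpr hsstarlt.le) hspt2
    rw [hiS0] at h2
    exact h2

/-- The MRPI of the controlled SIR model equals `G_Π` iff `β_max (1 − I_max) ≤ γ`. -/
theorem sir_mrpi_eq_GPi_iff
    (γ βmin βmax Imax t0 : ℝ)
    (hγ : 0 < γ) (hβmin : 0 < βmin) (hβ : βmin ≤ βmax)
    (hI0 : 0 < Imax) (hI1 : Imax < 1) :
    (∀ S I β : ℝ → ℝ,
        Differentiable ℝ S → Differentiable ℝ I →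
        (∀ t, t0 ≤ t → β t ∈ Set.Icc βmin βmax) →
        (∀ t, t0 ≤ t → HasDerivAt S (-(β t * S t * I t)) t) →
        (∀ t, t0 ≤ t → HasDerivAt I (β t * S t * I t - γ * I t) t) →
        (S t0, I t0) ∈ GPiSIR Imax →
        ∀ t, t0 ≤ t → (S t, I t) ∈ GPiSIR Imax)
      ↔ βmax * (1 - Imax) ≤ γ := by
  constructor
  · intro h
    by_contra hcon
    push_neg at hcon
    have hβmax : 0 < βmax := lt_of_lt_of_le hβmin hβ
    obtain ⟨S, I, hSdiff, hIdiff, hSode, hIode, hS0, hI0', t2, ht2, hIt2⟩ :=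
      sir_escape t0 hγ hβmax hI0 hI1 hcon
    have hstart : (S t0, I t0) ∈ GPiSIR Imax := by
      rw [hS0, hI0']
      exact ⟨by simp; linarith, hI0.le, by simp, le_rfl⟩
    have hmem := h S I (fun _ => βmax) hSdiff hIdiff
      (fun t _ => ⟨hβ, le_rfl⟩) hSode hIode hstart t2 ht2
    exact absurd hmem.2.2.2 (not_le.mpr hIt2)
  · intro hcond S I β hS hI hβr hSd hId hstart
    exact sir_invariant hγ hβmin hβ hI0 hI1 hcond S I β hS hI hβr hSd hId hstart
end

section
/- Consider the controlled SIR model. The following are equivalent: (i) for every point (S0, I0) ∈ G_Π there exists an admissible controlled trajectory (S, I, β) with (S(t0), I(t0)) = (S0, I0) and (S(t), I(t)) ∈ G_Π for all t ≥ t0 (i.e. the admissible set equals G_Π); (ii) β_min (1 − I_max) ≤ γ. -/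
open Set Real MeasureTheory intervalIntegral

lemma slope_nonpos_of_max (f : ℝ → ℝ) (a d : ℝ) (hf : HasDerivAt f d a)
    (h : ∀ t, a ≤ t → f t ≤ f a) : d ≤ 0 := by
  have hd : HasDerivWithinAt f d (Set.Ioi a) a := hf.hasDerivWithinAt
  rw [hasDerivWithinAt_iff_tendsto_slope] at hd
  have hset : Set.Ioi a \ {a} = Set.Ioi a := Set.diff_singleton_eq_self (by simp)
  rw [hset] at hd
  refine le_of_tendsto hd ?_
  filter_upwards [self_mem_nhdsWithin] with t ht
  have ht' : a < t := ht
  rw [slope_def_field]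
  have h1 : f t - f a ≤ 0 := by linarith [h t ht'.le]
  apply div_nonpos_of_nonpos_of_nonneg h1 (by linarith)


open Set Real MeasureTheory intervalIntegral

lemma exists_global_ode (G : ℝ → ℝ) (a b x0 t0 M : ℝ)
    (hG : Continuous G) (hax0 : a < x0) (hx0b : x0 < b)
    (hpos : ∀ x ∈ Set.Ioo a b, 0 < G x) (hM : 0 < M)
    (hMa : ∀ x ∈ Set.Ioo a b, G x ≤ M * (x - a))
    (hMb : ∀ x ∈ Set.Ioo a b, G x ≤ M * (b - x)) :
    ∃ X : ℝ → ℝ, X t0 = x0 ∧ (∀ t, X t ∈ Set.Ioo a b) ∧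
      (∀ t, HasDerivAt X (-G (X t)) t) ∧ (∀ t, t0 ≤ t → X t ≤ x0) := by
  have hx0 : x0 ∈ Ioo a b := ⟨hax0, hx0b⟩
  set f : ℝ → ℝ := fun u => (G u)⁻¹ with hf_def
  have hfc : ContinuousOn f (Ioo a b) :=
    (hG.continuousOn).inv₀ (fun x hx => (hpos x hx).ne')
  have hfpos : ∀ x ∈ Ioo a b, 0 < f x := fun x hx => inv_pos.2 (hpos x hx)
  have hint : ∀ x ∈ Ioo a b, ∀ y ∈ Ioo a b, IntervalIntegrable f volume x y := by
    intro x hx y hy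
    exact (hfc.mono ((ordConnected_Ioo).uIcc_subset hx hy)).intervalIntegrable
  set T : ℝ → ℝ := fun x => ∫ u in x..x0, f u with hT_def
  have hTd : ∀ x ∈ Ioo a b, HasDerivAt T (-(f x)) x := by
    intro x hx
    exact integral_hasDerivAt_left (hint x hx x0 hx0)
      (hfc.stronglyMeasurableAtFilter isOpen_Ioo x hx)
      (hfc.continuousAt (isOpen_Ioo.mem_nhds hx))
  have hTcont : ContinuousOn T (Ioo a b) := fun x hx =>
    (hTd x hx).continuousAt.continuousWithinAt
  have hTanti : StrictAntiOn T (Ioo a b) := by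
    apply strictAntiOn_of_deriv_neg (convex_Ioo a b) hTcont
    intro x hx
    rw [interior_Ioo] at hx
    rw [(hTd x hx).deriv]
    exact neg_neg_iff_pos.2 (hfpos x hx)
  have hTx0 : T x0 = 0 := integral_same
  -- lower bound on the left of x0
  have hLB : ∀ x ∈ Ioo a b, x ≤ x0 →
      M⁻¹ * (Real.log (x0 - a) - Real.log (x - a)) ≤ T x := by
    intro x hx hxle
    have hIccsub : Icc x x0 ⊆ Ioo a b := fun u hu => ⟨lt_of_lt_of_le hx.1 hu.1, lt_of_le_of_lt hu.2 hx0.2⟩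
    have hg : IntervalIntegrable (fun u => (M * (u - a))⁻¹) volume x x0 := by
      apply ContinuousOn.intervalIntegrable
      apply ContinuousOn.inv₀
      · fun_prop
      · intro u hu
        rw [uIcc_of_le hxle] at hu
        have h1 : 0 < u - a := by linarith [(hIccsub hu).1]
        positivity
    have hmono : (∫ u in x..x0, (M * (u - a))⁻¹) ≤ T x := by
      apply integral_mono_on hxle hg (hint x hx x0 hx0)
      intro u hu
      have hu' := hIccsub hu
      exact inv_anti₀ (hpos u hu') (hMa u hu')
    refine le_trans (le_of_eq ?_) hmono
    have h1 : (∫ u in x..x0, (M * (u - a))⁻¹) = M⁻¹ * ∫ u in x..x0, (u - a)⁻¹ := by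
      rw [← intervalIntegral.integral_const_mul]
      congr 1; ext u; rw [mul_inv]
    rw [h1]
    congr 1
    have h2 : (∫ u in x..x0, (u - a)⁻¹) = ∫ u in (x-a)..(x0-a), u⁻¹ :=
      intervalIntegral.integral_comp_sub_right (fun u => u⁻¹) a
    have hxa : 0 < x - a := by linarith [hx.1]
    have hx0a : 0 < x0 - a := by linarith
    rw [h2]
    have h3 : (∫ u in (x-a)..(x0-a), u⁻¹) = Real.log ((x0-a)/(x-a)) := by
      rw [show (fun u : ℝ => u⁻¹) = fun u : ℝ => 1/u by ext u; rw [one_div]]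
      apply integral_one_div
      intro h0
      rw [uIcc_of_le (by linarith)] at h0
      exact absurd h0.1 (by linarith)
    rw [h3, Real.log_div hx0a.ne' hxa.ne']
  -- upper bound on the right of x0
  have hUB : ∀ x ∈ Ioo a b, x0 ≤ x →
      T x ≤ M⁻¹ * (Real.log (b - x) - Real.log (b - x0)) := by
    intro x hx hxge
    have hIccsub : Icc x0 x ⊆ Ioo a b := fun u hu => ⟨lt_of_lt_of_le hx0.1 hu.1, lt_of_le_of_lt hu.2 hx.2⟩
    have hg : IntervalIntegrable (fun u => (M * (b - u))⁻¹) volume x0 x := by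
      apply ContinuousOn.intervalIntegrable
      apply ContinuousOn.inv₀
      · fun_prop
      · intro u hu
        rw [uIcc_of_le hxge] at hu
        have h1 : 0 < b - u := by linarith [(hIccsub hu).2]
        positivity
    have hTneg : T x = -∫ u in x0..x, f u := (intervalIntegral.integral_symm x0 x)
    have hmono : (∫ u in x0..x, (M * (b - u))⁻¹) ≤ ∫ u in x0..x, f u := by
      apply integral_mono_on hxge hg (hint x0 hx0 x hx)
      intro u hu
      have hu' := hIccsub hu
      exact inv_anti₀ (hpos u hu') (hMb u hu')
    have hcomp : (∫ u in x0..x, (M * (b - u))⁻¹) = M⁻¹ * (Real.log (b - x0) - Real.log (b - x)) := by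
      have h1 : (∫ u in x0..x, (M * (b - u))⁻¹) = M⁻¹ * ∫ u in x0..x, (b - u)⁻¹ := by
        rw [← intervalIntegral.integral_const_mul]
        congr 1; ext u; rw [mul_inv]
      rw [h1]
      congr 1
      have h2 : (∫ u in x0..x, (b - u)⁻¹) = ∫ u in (b-x)..(b-x0), u⁻¹ :=
        intervalIntegral.integral_comp_sub_left (fun u => u⁻¹) b
      have hbx : 0 < b - x := by linarith [hx.2]
      have hbx0 : 0 < b - x0 := by linarith
      rw [h2]
      have h3 : (∫ u in (b-x)..(b-x0), u⁻¹) = Real.log ((b-x0)/(b-x)) := by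
        rw [show (fun u : ℝ => u⁻¹) = fun u : ℝ => 1/u by ext u; rw [one_div]]
        apply integral_one_div
        intro h0
        rw [uIcc_of_le (by linarith)] at h0
        exact absurd h0.1 (by linarith)
      rw [h3, Real.log_div hbx0.ne' hbx.ne']
    rw [hTneg]
    rw [hcomp] at hmono
    linarith
  -- surjectivity
  have hsurj : ∀ τ : ℝ, ∃ x ∈ Ioo a b, T x = τ := by
    intro τ
    set r : ℝ := Real.exp (-(M * (|τ| + 1))) with hr_def
    have hr0 : 0 < r := Real.exp_pos _
    have hr1 : r < 1 := by
      rw [hr_def]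
      apply Real.exp_lt_one_iff.2
      have : 0 ≤ |τ| := abs_nonneg τ
      nlinarith
    set c : ℝ := a + (x0 - a) * r with hc_def
    set d : ℝ := b - (b - x0) * r with hd_def
    have hca : a < c := by
      have : 0 < (x0 - a) * r := by nlinarith
      linarith
    have hcx0 : c < x0 := by nlinarith
    have hx0d : x0 < d := by nlinarith
    have hdb : d < b := by nlinarith
    have hcmem : c ∈ Ioo a b := ⟨hca, by linarith⟩
    have hdmem : d ∈ Ioo a b := ⟨by linarith, hdb⟩
    have hTc : τ ≤ T c := by
      have hb1 := hLB c hcmem hcx0.le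
      have hlogc : Real.log (c - a) = Real.log (x0 - a) - M * (|τ| + 1) := by
        have : c - a = (x0 - a) * r := by rw [hc_def]; ring
        rw [this, Real.log_mul (by linarith) hr0.ne', hr_def, Real.log_exp]
        ring
      rw [hlogc] at hb1
      have : M⁻¹ * (Real.log (x0 - a) - (Real.log (x0 - a) - M * (|τ| + 1))) = |τ| + 1 := by
        field_simp
        ring
      rw [this] at hb1
      have := le_abs_self τ
      linarith
    have hTdle : T d ≤ τ := by
      have hb1 := hUB d hdmem hx0d.le
      have hlogd : Real.log (b - d) = Real.log (b - x0) - M * (|τ| + 1) := by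
        have : b - d = (b - x0) * r := by rw [hd_def]; ring
        rw [this, Real.log_mul (by linarith) hr0.ne', hr_def, Real.log_exp]
        ring
      rw [hlogd] at hb1
      have : M⁻¹ * ((Real.log (b - x0) - M * (|τ| + 1)) - Real.log (b - x0)) = -(|τ| + 1) := by
        field_simp
        ring
      rw [this] at hb1
      have := neg_abs_le τ
      linarith
    have hIccsub : Icc c d ⊆ Ioo a b := fun u hu => ⟨lt_of_lt_of_le hca hu.1, lt_of_le_of_lt hu.2 hdb⟩
    have hsub : Icc (T d) (T c) ⊆ T '' Icc c d :=
      intermediate_value_Icc' (by linarith) (hTcont.mono hIccsub)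
    obtain ⟨x, hxmem, hxval⟩ := hsub ⟨hTdle, hTc⟩
    exact ⟨x, hIccsub hxmem, hxval⟩
  -- the inverse function
  have hex : ∀ t : ℝ, ∃ x, x ∈ Ioo a b ∧ T x = t - t0 := by
    intro t
    obtain ⟨x, hx, hTx⟩ := hsurj (t - t0)
    exact ⟨x, hx, hTx⟩
  set X : ℝ → ℝ := fun t => Classical.choose (hex t) with hX_def
  have hX : ∀ t, X t ∈ Ioo a b ∧ T (X t) = t - t0 := fun t => Classical.choose_spec (hex t)
  have hXt0 : X t0 = x0 := by
    apply hTanti.injOn (hX t0).1 hx0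
    rw [(hX t0).2, sub_self, hTx0]
  have hXle : ∀ t, t0 ≤ t → X t ≤ x0 := by
    intro t ht
    by_contra hlt
    push_neg at hlt
    have := hTanti hx0 (hX t).1 hlt
    rw [(hX t).2, hTx0] at this
    linarith
  -- continuity of X
  have hXcont : ∀ t, ContinuousAt X t := by
    intro t
    rw [Metric.continuousAt_iff]
    intro ε hε
    set x := X t with hx_def
    have hxm := (hX t).1
    set ε' : ℝ := min (ε/2) (min ((x - a)/2) ((b - x)/2)) with hε'_def
    have hε'0 : 0 < ε' := by
      apply lt_min (by linarith) (lt_min (by have := hxm.1; linarith) (by have := hxm.2; linarith))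
    have hε'a : ε' ≤ (x - a)/2 := le_trans (min_le_right _ _) (min_le_left _ _)
    have hε'b : ε' ≤ (b - x)/2 := le_trans (min_le_right _ _) (min_le_right _ _)
    have hε'ε : ε' ≤ ε/2 := min_le_left _ _
    have hm1 : x - ε' ∈ Ioo a b := ⟨by have := hxm.1; linarith, by have := hxm.2; linarith⟩
    have hm2 : x + ε' ∈ Ioo a b := ⟨by have := hxm.1; linarith, by have := hxm.2; linarith⟩
    have hτp : t - t0 < T (x - ε') := by
      have := hTanti hm1 hxm (by linarith)
      rw [(hX t).2] at this; linarith
    have hτm : T (x + ε') < t - t0 := by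
      have := hTanti hxm hm2 (by linarith)
      rw [(hX t).2] at this; linarith
    refine ⟨min (T (x - ε') - (t - t0)) ((t - t0) - T (x + ε')), by apply lt_min <;> linarith, ?_⟩
    intro s hs
    rw [Real.dist_eq] at hs
    have hs1 : s - t0 < T (x - ε') := by
      have := abs_lt.1 (lt_of_lt_of_le hs (min_le_left _ _))
      linarith [this.1, this.2]
    have hs2 : T (x + ε') < s - t0 := by
      have := abs_lt.1 (lt_of_lt_of_le hs (min_le_right _ _))
      linarith [this.1, this.2]
    have hXsm := (hX s).1
    have hXsv := (hX s).2
    have hlow : x - ε' < X s := by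
      by_contra hcon
      push_neg at hcon
      rcases eq_or_lt_of_le hcon with heq | hlt
      · rw [← heq, hXsv] at hs1; linarith
      · have := hTanti hXsm hm1 hlt
        rw [hXsv] at this; linarith
    have hhigh : X s < x + ε' := by
      by_contra hcon
      push_neg at hcon
      rcases eq_or_lt_of_le hcon with heq | hlt
      · rw [heq, hXsv] at hs2; linarith
      · have := hTanti hm2 hXsm hlt
        rw [hXsv] at this; linarith
    rw [Real.dist_eq, abs_lt]
    constructor <;> [skip; skip] <;> nlinarith [hε'ε, hε'0]
  -- derivative of X
  have hXd : ∀ t, HasDerivAt X (-G (X t)) t := by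
    intro t
    have hxm := (hX t).1
    have hT' : HasDerivAt (fun y => t0 + T y) (-(f (X t))) (X t) :=
      (hTd (X t) hxm).const_add t0
    have hinv : ∀ᶠ s in nhds t, (fun y => t0 + T y) (X s) = s := by
      filter_upwards with s
      show t0 + T (X s) = s
      rw [(hX s).2]; ring
    have := HasDerivAt.of_local_left_inverse (hXcont t) hT' (by
      have h0 := hfpos (X t) hxm
      intro h
      rw [neg_eq_zero] at h
      rw [h] at h0
      exact lt_irrefl _ h0) hinv
    exact this.congr_deriv (by simp [hf_def])
  exact ⟨X, hXt0, fun t => (hX t).1, hXd, hXle⟩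



set_option maxHeartbeats 2000000 in
/-- The admissible set of the controlled SIR model equals `G_Π` iff
`β_min (1 − I_max) ≤ γ`. -/
theorem sir_admissible_eq_GPi_iff
    (γ βmin βmax Imax t0 : ℝ)
    (hγ : 0 < γ) (hβmin : 0 < βmin) (hβ : βmin ≤ βmax)
    (hI0 : 0 < Imax) (hI1 : Imax < 1) :
    (∀ S0 I0 : ℝ, (S0, I0) ∈ GPiSIR Imax →
        ∃ S I β : ℝ → ℝ,
          Differentiable ℝ S ∧ Differentiable ℝ I ∧
          (∀ t, t0 ≤ t → β t ∈ Set.Icc βmin βmax) ∧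
          (∀ t, t0 ≤ t → HasDerivAt S (-(β t * S t * I t)) t) ∧
          (∀ t, t0 ≤ t → HasDerivAt I (β t * S t * I t - γ * I t) t) ∧
          S t0 = S0 ∧ I t0 = I0 ∧
          (∀ t, t0 ≤ t → (S t, I t) ∈ GPiSIR Imax))
      ↔ βmin * (1 - Imax) ≤ γ := by
  constructor
  · -- (i) → (ii)
    intro h
    by_contra hc
    push_neg at hc
    obtain ⟨S, I, β, hdS, hdI, hβr, hS', hI', hSt0, hIt0, hmem⟩ :=
      h (1 - Imax) Imax ⟨show (0:ℝ) ≤ 1 - Imax by linarith, show (0:ℝ) ≤ Imax from hI0.le,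
        show 1 - Imax + Imax ≤ (1:ℝ) by linarith, show Imax ≤ Imax from le_rfl⟩
    have hd := hI' t0 le_rfl
    have hmax : ∀ t, t0 ≤ t → I t ≤ I t0 := by
      intro t ht
      rw [hIt0]
      exact (hmem t ht).2.2.2
    have hnp := slope_nonpos_of_max I t0 _ hd hmax
    have hb := (hβr t0 le_rfl).1
    rw [hSt0, hIt0] at hnp
    have h1 : βmin * (1 - Imax) * Imax ≤ β t0 * (1 - Imax) * Imax :=
      mul_le_mul_of_nonneg_right (mul_le_mul_of_nonneg_right hb (by linarith)) hI0.le
    nlinarith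
  · -- (ii) → (i)
    intro hcond S0 I0 hmem0
    obtain ⟨hS0nn, hI0nn, hsum, hImax⟩ := hmem0
    simp only at hS0nn hI0nn hsum hImax
    rcases eq_or_lt_of_le hI0nn with hI0z | hI0pos
    · -- I0 = 0
      refine ⟨fun _ => S0, fun _ => 0, fun _ => βmin, differentiable_const _,
        differentiable_const _, fun t _ => ⟨le_rfl, hβ⟩, ?_, ?_, rfl, hI0z.symm ▸ rfl, ?_⟩
      · intro t _
        have : -(βmin * S0 * 0) = (0 : ℝ) := by ring
        rw [this]
        exact hasDerivAt_const t S0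
      · intro t _
        have : βmin * S0 * 0 - γ * 0 = (0 : ℝ) := by ring
        rw [this]
        exact hasDerivAt_const t 0
      · intro t _
        exact ⟨hS0nn, le_rfl, by simpa using (by linarith : S0 + (0:ℝ) ≤ 1), hI0.le⟩
    rcases eq_or_lt_of_le hS0nn with hS0z | hS0pos
    · -- S0 = 0
      refine ⟨fun _ => 0, fun t => I0 * Real.exp (-γ * (t - t0)), fun _ => βmin,
        differentiable_const _, by fun_prop, fun t _ => ⟨le_rfl, hβ⟩, ?_, ?_, hS0z.symm ▸ rfl,
        by simp, ?_⟩
      · intro t _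
        have : -(βmin * 0 * (I0 * Real.exp (-γ * (t - t0)))) = (0 : ℝ) := by ring
        rw [this]
        exact hasDerivAt_const t 0
      · intro t _
        have hD : HasDerivAt (fun t => I0 * Real.exp (-γ * (t - t0)))
            (I0 * (Real.exp (-γ * (t - t0)) * (-γ * 1))) t := by
          exact (((hasDerivAt_id t).sub_const t0).const_mul (-γ)).exp.const_mul I0
        convert hD using 1
        ring
      · intro t ht
        have hexp1 : Real.exp (-γ * (t - t0)) ≤ 1 := by
          apply Real.exp_le_one_iff.2
          nlinarith
        have hexp0 : 0 < Real.exp (-γ * (t - t0)) := Real.exp_pos _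
        refine ⟨le_rfl, by positivity, ?_, ?_⟩
        · simp only
          nlinarith
        · simp only
          nlinarith
    · -- main case: S0 > 0 and I0 > 0
      set x0 := Real.log S0 with hx0_def
      clear_value x0
      have hexpx0 : Real.exp x0 = S0 := by rw [hx0_def]; exact Real.exp_log hS0pos
      set c1 := S0 + I0 with hc1_def
      clear_value c1
      have hc1pos : 0 < c1 := by rw [hc1_def]; linarith
      set G : ℝ → ℝ := fun x => βmin * (c1 - Real.exp x) + γ * (x - x0) with hG_def
      clear_value G
      have hGd : ∀ x, HasDerivAt G (γ - βmin * Real.exp x) x := by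
        intro x
        have h1 : HasDerivAt (fun x : ℝ => βmin * (c1 - Real.exp x)) (βmin * (0 - Real.exp x)) x :=
          ((hasDerivAt_const x c1).sub (Real.hasDerivAt_exp x)).const_mul βmin
        have h2 : HasDerivAt (fun x : ℝ => γ * (x - x0)) (γ * 1) x :=
          ((hasDerivAt_id x).sub_const x0).const_mul γ
        rw [hG_def]
        exact (h1.add h2).congr_deriv (by ring)
      have hGcont : Continuous G := by
        rw [hG_def]; fun_prop
      have hGx0 : G x0 = βmin * I0 := by
        simp only [hG_def]
        rw [hexpx0, hc1_def]
        ring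
      have hGx0pos : 0 < G x0 := by
        rw [hGx0]; positivity
      -- a point to the left where G is negative
      set z : ℝ := x0 - (βmin * c1 + γ) / γ with hz_def
      clear_value z
      have hzx0 : z < x0 := by
        have h1 : 0 < (βmin * c1 + γ) / γ := by positivity
        rw [hz_def]; linarith
      have hγz : γ * (z - x0) = -(βmin * c1) - γ := by
        rw [hz_def]; field_simp; ring
      have hGz : G z < 0 := by
        have he := Real.exp_pos z
        simp only [hG_def]
        nlinarith [mul_pos hβmin he]
      -- a point to the right where G is negative
      set s : ℝ := 4 * (βmin * c1 + γ) / (βmin * S0) + 4 with hs_def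
      clear_value s
      have hs4 : (4:ℝ) ≤ s := by
        have h1 : 0 ≤ 4 * (βmin * c1 + γ) / (βmin * S0) := by positivity
        rw [hs_def]; linarith
      have hsbig : 4 * (βmin * c1 + γ) = βmin * S0 * (s - 4) := by
        rw [hs_def]; field_simp; ring
      have hexps : s ^ 2 / 4 ≤ Real.exp s := by
        have h1 : s / 2 + 1 ≤ Real.exp (s / 2) := Real.add_one_le_exp (s / 2)
        have h2 : Real.exp (s / 2) * Real.exp (s / 2) = Real.exp s := by
          rw [← Real.exp_add]; ring_nf
        nlinarith [Real.exp_pos (s / 2),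
          mul_le_mul h1 h1 (by linarith : (0:ℝ) ≤ s / 2 + 1) (Real.exp_pos (s / 2)).le]
      set z' : ℝ := x0 + s with hz'_def
      clear_value z'
      have hx0z' : x0 < z' := by rw [hz'_def]; linarith
      have hGz' : G z' < 0 := by
        simp only [hG_def, hz'_def]
        rw [Real.exp_add, hexpx0]
        have h3 : βmin * S0 * (s ^ 2 / 4) ≤ βmin * S0 * Real.exp s :=
          mul_le_mul_of_nonneg_left hexps (by positivity)
        have h4 : 4 * (βmin * c1 + γ) * s = βmin * S0 * (s - 4) * s := by rw [hsbig]
        have h5 : βmin * S0 * (s ^ 2 / 4) = (βmin * c1 + γ) * s + βmin * S0 * s := by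
          linear_combination (-1/4 : ℝ) * h4
        have h6 : 4 * (βmin * c1) + γ * s + 4 * (βmin * S0) ≤ (βmin * c1 + γ) * s + βmin * S0 * s := by
          nlinarith [mul_nonneg (mul_pos hβmin hc1pos).le (by linarith : (0:ℝ) ≤ s - 4),
            mul_nonneg (mul_pos hβmin hS0pos).le (by linarith : (0:ℝ) ≤ s - 4)]
        have h7 : 0 < βmin * c1 := mul_pos hβmin hc1pos
        have h8 : 0 < βmin * S0 := mul_pos hβmin hS0pos
        have h9 : βmin * (c1 - S0 * Real.exp s) + γ * (x0 + s - x0)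
            = βmin * c1 + γ * s - βmin * S0 * Real.exp s := by ring
        rw [h9]
        linarith
      -- the zeros x_* < x0 < y_*
      set Z1 : Set ℝ := {x | G x = 0} ∩ Iic x0 with hZ1_def
      have hZ1closed : IsClosed Z1 := (isClosed_singleton.preimage hGcont).inter isClosed_Iic
      have hZ1ne : Z1.Nonempty := by
        obtain ⟨w, hw, hGw⟩ := intermediate_value_Icc hzx0.le hGcont.continuousOn ⟨hGz.le, hGx0pos.le⟩
        exact ⟨w, hGw, hw.2⟩
      have hZ1bdd : BddAbove Z1 := BddAbove.mono Set.inter_subset_right bddAbove_Iic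
      set xs : ℝ := sSup Z1 with hxs_def
      clear_value xs
      have hxsmem : xs ∈ Z1 := by rw [hxs_def]; exact hZ1closed.csSup_mem hZ1ne hZ1bdd
      have hGxs : G xs = 0 := hxsmem.1
      have hxslt : xs < x0 := by
        rcases eq_or_lt_of_le (mem_Iic.1 hxsmem.2) with h | h
        · rw [h] at hGxs; rw [hGxs] at hGx0pos; exact absurd hGx0pos (lt_irrefl 0)
        · exact h
      set Z2 : Set ℝ := {x | G x = 0} ∩ Icc x0 z' with hZ2_def
      have hZ2closed : IsClosed Z2 := (isClosed_singleton.preimage hGcont).inter isClosed_Icc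
      have hZ2ne : Z2.Nonempty := by
        obtain ⟨w, hw, hGw⟩ :=
          intermediate_value_Icc' hx0z'.le hGcont.continuousOn ⟨hGz'.le, hGx0pos.le⟩
        exact ⟨w, hGw, hw⟩
      have hZ2bdd : BddBelow Z2 := BddBelow.mono Set.inter_subset_right bddBelow_Icc
      set ys : ℝ := sInf Z2 with hys_def
      clear_value ys
      have hysmem : ys ∈ Z2 := by rw [hys_def]; exact hZ2closed.csInf_mem hZ2ne hZ2bdd
      have hGys : G ys = 0 := hysmem.1
      have hysz' : ys ≤ z' := (mem_Icc.1 hysmem.2).2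
      have hx0ys : x0 < ys := by
        rcases eq_or_lt_of_le (mem_Icc.1 hysmem.2).1 with h | h
        · rw [← h] at hGys; rw [hGys] at hGx0pos; exact absurd hGx0pos (lt_irrefl 0)
        · exact h
      -- G positive on (x_*, y_*)
      have hGpos : ∀ x ∈ Ioo xs ys, 0 < G x := by
        intro p hp
        by_contra hnp
        push_neg at hnp
        rcases lt_trichotomy p x0 with hlt | heq | hgt
        · obtain ⟨w, hw, hGw⟩ :=
            intermediate_value_Icc hlt.le hGcont.continuousOn ⟨hnp, hGx0pos.le⟩
          have : w ≤ xs := by rw [hxs_def]; exact le_csSup hZ1bdd ⟨hGw, hw.2⟩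
          linarith [hp.1, hw.1]
        · rw [heq] at hnp; linarith
        · obtain ⟨w, hw, hGw⟩ :=
            intermediate_value_Icc' hgt.le hGcont.continuousOn ⟨hnp, hGx0pos.le⟩
          have hwz' : w ≤ z' := le_trans (mem_Icc.1 hw).2 (le_trans hp.2.le hysz')
          have : ys ≤ w := by rw [hys_def]; exact csInf_le hZ2bdd ⟨hGw, (mem_Icc.1 hw).1, hwz'⟩
          linarith [hp.2, hw.2]
      -- the Lipschitz-type bounds
      set M : ℝ := γ + βmin * Real.exp ys with hM_def
      clear_value M
      have hMpos : 0 < M := by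
        rw [hM_def]; positivity
      have hMa : ∀ x ∈ Ioo xs ys, G x ≤ M * (x - xs) := by
        intro x hx
        have hH : ∀ y, HasDerivAt (fun y => M * y - G y) (M * 1 - (γ - βmin * Real.exp y)) y :=
          fun y => ((hasDerivAt_id y).const_mul M).sub (hGd y)
        have hmono : Monotone (fun y => M * y - G y) := by
          apply monotone_of_deriv_nonneg (fun y => (hH y).differentiableAt)
          intro y
          rw [(hH y).deriv]
          have h1 := Real.exp_pos y
          have h2 := Real.exp_pos ys
          rw [hM_def]
          nlinarith [mul_pos hβmin h1, mul_pos hβmin h2]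
        have h3 := hmono (le_of_lt hx.1 : xs ≤ x)
        simp only [hGxs] at h3
        linarith
      have hMb : ∀ x ∈ Ioo xs ys, G x ≤ M * (ys - x) := by
        intro x hx
        have hK : ∀ y, HasDerivAt (fun y => M * y + G y) (M * 1 + (γ - βmin * Real.exp y)) y :=
          fun y => ((hasDerivAt_id y).const_mul M).add (hGd y)
        have hmono : MonotoneOn (fun y => M * y + G y) (Iic ys) := by
          apply monotoneOn_of_deriv_nonneg (convex_Iic ys)
          · exact ((continuous_const.mul continuous_id).add hGcont).continuousOn
          · exact fun y _ => (hK y).differentiableAt.differentiableWithinAt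
          · intro y hy
            rw [interior_Iic] at hy
            rw [(hK y).deriv]
            have h1 : Real.exp y ≤ Real.exp ys := Real.exp_le_exp.2 hy.le
            rw [hM_def]
            nlinarith [mul_le_mul_of_nonneg_left h1 hβmin.le]
        have h3 := hmono (mem_Iic.2 hx.2.le) (mem_Iic.2 le_rfl) hx.2.le
        simp only [hGys] at h3
        linarith
      -- solve the ODE
      obtain ⟨X, hXt0, hXmem, hXd, hXle⟩ :=
        exists_global_ode G xs ys x0 t0 M hGcont hxslt hx0ys hGpos hMpos hMa hMb
      -- the key invariant: G stays below βmin * Imax on the left of x0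
      have hkey : ∀ p ∈ Ioo xs ys, p ≤ x0 → G p ≤ βmin * Imax := by
        intro p hp hpx0
        by_cases hcase : βmin * S0 ≤ γ
        · have hmono : MonotoneOn G (Iic x0) := by
            apply monotoneOn_of_deriv_nonneg (convex_Iic x0) hGcont.continuousOn
            · exact fun y _ => (hGd y).differentiableAt.differentiableWithinAt
            · intro y hy
              rw [interior_Iic] at hy
              rw [(hGd y).deriv]
              have h1 : Real.exp y ≤ Real.exp x0 := Real.exp_le_exp.2 hy.le
              rw [hexpx0] at h1
              nlinarith [mul_le_mul_of_nonneg_left h1 hβmin.le]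
          have h2 := hmono (mem_Iic.2 hpx0) (mem_Iic.2 le_rfl) hpx0
          rw [hGx0] at h2
          nlinarith [mul_le_mul_of_nonneg_left hImax hβmin.le]
        · push_neg at hcase
          set xc : ℝ := Real.log (γ / βmin) with hxc_def
          clear_value xc
          have hgb : 0 < γ / βmin := by positivity
          have hexc : Real.exp xc = γ / βmin := by rw [hxc_def]; exact Real.exp_log hgb
          have hxcx0 : xc < x0 := by
            rw [hxc_def, hx0_def]
            apply Real.log_lt_log hgb
            rw [div_lt_iff₀ hβmin]
            linarith
          have hGxc : G xc < βmin * Imax := by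
            simp only [hG_def]
            rw [hexc]
            have h1 : βmin * (c1 - γ / βmin) = βmin * c1 - γ := by field_simp
            have h2 : γ * (xc - x0) < 0 := by nlinarith
            have h3 : βmin * c1 ≤ βmin := by nlinarith
            nlinarith
          have hple : G p ≤ G xc := by
            rcases le_total p xc with h | h
            · have hmono : MonotoneOn G (Iic xc) := by
                apply monotoneOn_of_deriv_nonneg (convex_Iic xc) hGcont.continuousOn
                · exact fun y _ => (hGd y).differentiableAt.differentiableWithinAt
                · intro y hy
                  rw [interior_Iic] at hy
                  rw [(hGd y).deriv]
                  have h1 : Real.exp y ≤ Real.exp xc := Real.exp_le_exp.2 hy.le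
                  rw [hexc] at h1
                  have h2 : βmin * Real.exp y ≤ βmin * (γ / βmin) :=
                    mul_le_mul_of_nonneg_left h1 hβmin.le
                  have h3 : βmin * (γ / βmin) = γ := by field_simp
                  linarith
              exact hmono (mem_Iic.2 h) (mem_Iic.2 le_rfl) h
            · have hanti : AntitoneOn G (Ici xc) := by
                apply antitoneOn_of_deriv_nonpos (convex_Ici xc) hGcont.continuousOn
                · exact fun y _ => (hGd y).differentiableAt.differentiableWithinAt
                · intro y hy
                  rw [interior_Ici] at hy
                  rw [(hGd y).deriv]
                  have h1 : Real.exp xc ≤ Real.exp y := Real.exp_le_exp.2 hy.le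
                  rw [hexc] at h1
                  have h2 : βmin * (γ / βmin) ≤ βmin * Real.exp y :=
                    mul_le_mul_of_nonneg_left h1 hβmin.le
                  have h3 : βmin * (γ / βmin) = γ := by field_simp
                  linarith
              exact hanti (mem_Ici.2 le_rfl) (mem_Ici.2 h) h
          linarith
      -- assemble the trajectory
      refine ⟨fun t => Real.exp (X t), fun t => G (X t) / βmin, fun _ => βmin,
        ?_, ?_, fun t _ => ⟨le_rfl, hβ⟩, ?_, ?_, ?_, ?_, ?_⟩
      · exact fun t => ((hXd t).exp).differentiableAt
      · exact fun t => (((hGd (X t)).comp t (hXd t)).div_const βmin).differentiableAt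
      · intro t _
        have h1 := (hXd t).exp
        convert h1 using 1
        field_simp
      · intro t _
        have h1 := ((hGd (X t)).comp t (hXd t)).div_const βmin
        exact h1.congr_deriv (by ring)
      · show Real.exp (X t0) = S0
        rw [hXt0]; exact hexpx0
      · show G (X t0) / βmin = I0
        rw [hXt0, hGx0]; field_simp
      · intro t ht
        have hm := hXmem t
        have hle := hXle t ht
        have hGp := hGpos _ hm
        refine ⟨(Real.exp_pos _).le, div_nonneg hGp.le hβmin.le, ?_, ?_⟩
        · show Real.exp (X t) + G (X t) / βmin ≤ 1
          have heq : Real.exp (X t) + G (X t) / βmin = c1 + γ * (X t - x0) / βmin := by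
            simp only [hG_def]
            field_simp
            ring
          rw [heq]
          have h2 : γ * (X t - x0) / βmin ≤ 0 := by
            apply div_nonpos_of_nonpos_of_nonneg _ hβmin.le
            nlinarith
          linarith [hsum, h2]
        · show G (X t) / βmin ≤ Imax
          have h2 := hkey _ hm hle
          rw [div_le_iff₀ hβmin]
          linarith
end

section
/- Consider the closed-loop uncertain SIR model under the affine feedback β̂. The following are equivalent: (i) every uncertain trajectory (S, I, γ) with (S(t0), I(t0)) ∈ G_Π satisfies (S(t), I(t)) ∈ G_Π for all t ≥ t0 (i.e. the maximal robust positively invariant set of the closed-loop system equals G_Π); (ii) β_min (1 − I_max) ≤ γ_min. -/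
/-- The affine feedback `β̂(I) = β_min (I/I_max) + β_max (1 − I/I_max)`. -/
noncomputable def betaHat (βmin βmax Imax i : ℝ) : ℝ :=
  βmin * (i / Imax) + βmax * (1 - i / Imax)

section SIRAux
open Set Filter Topology

open Set Filter Topology

/-- If `|f'| ≤ K|f|` on `[a,b]` and `f a = 0` then `f ≡ 0` on `[a,b]`. -/
lemma eq_zero_of_abs_deriv_le {f f' : ℝ → ℝ} {K a b : ℝ}
    (hd : ∀ t ∈ Icc a b, HasDerivAt f (f' t) t)
    (hb : ∀ t ∈ Icc a b, |f' t| ≤ K * |f t|)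
    (ha : f a = 0) : ∀ t ∈ Icc a b, f t = 0 := by
  intro t ht
  have hcont : ContinuousOn f (Icc a b) := fun s hs => ((hd s hs).continuousAt).continuousWithinAt
  have := norm_le_gronwallBound_of_norm_deriv_right_le (E := ℝ) (δ := 0) (K := K) (ε := 0)
    hcont (fun x hx => ((hd x (Ico_subset_Icc_self hx)).hasDerivWithinAt))
    (by simp [ha]) (fun x hx => by
      simpa [Real.norm_eq_abs] using hb x (Ico_subset_Icc_self hx)) t ht
  rw [gronwallBound_ε0_δ0] at this
  simpa [Real.norm_eq_abs, abs_nonpos_iff] using this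

/-- Nonnegativity preservation: if `|f'| ≤ K|f|` on `[a,b]` and `f a ≥ 0` then `f ≥ 0`. -/
lemma nonneg_of_abs_deriv_le {f f' : ℝ → ℝ} {K a b : ℝ}
    (hd : ∀ t ∈ Icc a b, HasDerivAt f (f' t) t)
    (hb : ∀ t ∈ Icc a b, |f' t| ≤ K * |f t|)
    (ha : 0 ≤ f a) : ∀ t ∈ Icc a b, 0 ≤ f t := by
  by_contra hcon
  push_neg at hcon
  obtain ⟨t1, ht1, ht1neg⟩ := hcon
  have hat1 : a ≤ t1 := ht1.1
  have hsub : Icc a t1 ⊆ Icc a b := Icc_subset_Icc le_rfl ht1.2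
  have hcont : ContinuousOn f (Icc a t1) :=
    fun s hs => ((hd s (hsub hs)).continuousAt).continuousWithinAt
  set s : Set ℝ := {t ∈ Icc a t1 | 0 ≤ f t} with hs_def
  have hne : s.Nonempty := ⟨a, ⟨le_rfl, hat1⟩, ha⟩
  have hbdd : BddAbove s := BddAbove.mono (fun x hx => hx.1) bddAbove_Icc
  have hclosed : IsClosed s := by
    have heq : s = Icc a t1 ∩ f ⁻¹' (Ici 0) := by
      ext x; constructor
      · rintro ⟨h1, h2⟩; exact ⟨h1, h2⟩
      · rintro ⟨h1, h2⟩; exact ⟨h1, h2⟩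
    rw [heq]
    exact hcont.preimage_isClosed_of_isClosed isClosed_Icc isClosed_Ici
  set c := sSup s with hc_def
  have hcs : c ∈ s := hclosed.csSup_mem hne hbdd
  have hfc : 0 ≤ f c := hcs.2
  have hcmem : c ∈ Icc a t1 := hcs.1
  have hct1 : c < t1 := lt_of_le_of_ne hcmem.2 (fun h => absurd hfc (not_le.2 (h ▸ ht1neg)))
  have hneg : ∀ u ∈ Ioc c t1, f u < 0 := by
    intro u hu
    by_contra hge
    push_neg at hge
    exact absurd (le_csSup hbdd (⟨⟨hcmem.1.trans hu.1.le, hu.2⟩, hge⟩ : u ∈ s)) (not_le.2 hu.1)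
  -- f c ≤ 0 by right-continuity
  have hfc0 : f c = 0 := by
    refine le_antisymm ?_ hfc
    have hca : ContinuousAt f c := (hd c (hsub hcmem)).continuousAt
    have hev : ∀ᶠ u in 𝓝[>] c, f u ≤ 0 := by
      filter_upwards [Ioo_mem_nhdsGT_of_mem ⟨le_rfl, hct1⟩] with u hu
      exact (hneg u ⟨hu.1, hu.2.le⟩).le
    have : Tendsto f (𝓝[>] c) (𝓝 (f c)) := hca.continuousWithinAt.tendsto
    exact le_of_tendsto this hev
  have := eq_zero_of_abs_deriv_le (a := c) (b := t1)
    (fun u hu => hd u (hsub ⟨hcmem.1.trans hu.1, hu.2⟩))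
    (fun u hu => hb u (hsub ⟨hcmem.1.trans hu.1, hu.2⟩)) hfc0 t1 ⟨hct1.le, le_rfl⟩
  exact absurd this (ne_of_lt ht1neg)

open Set Filter Topology

/-- Barrier lemma: if `f' ≤ 0` whenever `f ≥ c`, and `f a ≤ c`, then `f ≤ c` on `[a,b]`. -/
lemma le_of_deriv_nonpos_above {f f' : ℝ → ℝ} {c a b : ℝ}
    (hd : ∀ t ∈ Icc a b, HasDerivAt f (f' t) t)
    (hb : ∀ t ∈ Icc a b, c ≤ f t → f' t ≤ 0)
    (ha : f a ≤ c) : ∀ t ∈ Icc a b, f t ≤ c := by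
  by_contra hcon
  push_neg at hcon
  obtain ⟨t1, ht1, ht1gt⟩ := hcon
  have hat1 : a ≤ t1 := ht1.1
  have hsub : Icc a t1 ⊆ Icc a b := Icc_subset_Icc le_rfl ht1.2
  have hcont : ContinuousOn f (Icc a t1) :=
    fun s hs => ((hd s (hsub hs)).continuousAt).continuousWithinAt
  set s : Set ℝ := {t ∈ Icc a t1 | f t ≤ c} with hs_def
  have hne : s.Nonempty := ⟨a, ⟨le_rfl, hat1⟩, ha⟩
  have hbdd : BddAbove s := BddAbove.mono (fun x hx => hx.1) bddAbove_Icc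
  have hclosed : IsClosed s := by
    have heq : s = Icc a t1 ∩ f ⁻¹' (Iic c) := by
      ext x; constructor
      · rintro ⟨h1, h2⟩; exact ⟨h1, h2⟩
      · rintro ⟨h1, h2⟩; exact ⟨h1, h2⟩
    rw [heq]
    exact hcont.preimage_isClosed_of_isClosed isClosed_Icc isClosed_Iic
  set u := sSup s with hu_def
  have hus : u ∈ s := hclosed.csSup_mem hne hbdd
  have hfu : f u ≤ c := hus.2
  have humem : u ∈ Icc a t1 := hus.1
  have hut1 : u < t1 := lt_of_le_of_ne humem.2 (fun h => absurd hfu (not_le.2 (h ▸ ht1gt)))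
  have hgt : ∀ x ∈ Ioc u t1, c < f x := by
    intro x hx
    by_contra hge
    push_neg at hge
    exact absurd (le_csSup hbdd (⟨⟨humem.1.trans hx.1.le, hx.2⟩, hge⟩ : x ∈ s)) (not_le.2 hx.1)
  -- on [u, t1], f ≥ c everywhere
  have hge : ∀ x ∈ Icc u t1, c ≤ f x := by
    intro x hx
    rcases eq_or_lt_of_le hx.1 with h | h
    · rw [← h]
      refine ge_of_tendsto (((hd u (hsub humem)).continuousAt).continuousWithinAt.tendsto
        (s := Ioi u)) ?_
      filter_upwards [Ioo_mem_nhdsGT_of_mem ⟨le_rfl, hut1⟩] with y hy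
      exact (hgt y ⟨hy.1, hy.2.le⟩).le
    · exact (hgt x ⟨h, hx.2⟩).le
  have hanti : AntitoneOn f (Icc u t1) := by
    apply antitoneOn_of_deriv_nonpos (convex_Icc u t1)
    · exact hcont.mono (Icc_subset_Icc humem.1 le_rfl)
    · intro x hx
      rw [interior_Icc] at hx
      have hxm : x ∈ Icc a b := hsub ⟨humem.1.trans hx.1.le, hx.2.le⟩
      exact ((hd x hxm).differentiableAt).differentiableWithinAt
    · intro x hx
      rw [interior_Icc] at hx
      have hxm : x ∈ Icc a b := hsub ⟨humem.1.trans hx.1.le, hx.2.le⟩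
      rw [(hd x hxm).deriv]
      exact hb x hxm (hge x ⟨hx.1.le, hx.2.le⟩)
  have := hanti ⟨le_rfl, hut1.le⟩ ⟨hut1.le, le_rfl⟩ hut1.le
  exact absurd (this.trans hfu) (not_le.2 ht1gt)

lemma le_init_of_deriv_nonpos {f f' : ℝ → ℝ} {a b : ℝ}
    (hd : ∀ t ∈ Icc a b, HasDerivAt f (f' t) t)
    (hb : ∀ t ∈ Icc a b, f' t ≤ 0) :
    ∀ t ∈ Icc a b, f t ≤ f a := by
  intro t ht
  have hanti : AntitoneOn f (Icc a b) := by
    apply antitoneOn_of_deriv_nonpos (convex_Icc a b)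
    · exact fun x hx => ((hd x hx).continuousAt).continuousWithinAt
    · intro x hx
      rw [interior_Icc] at hx
      exact ((hd x (Ioo_subset_Icc_self hx)).differentiableAt).differentiableWithinAt
    · intro x hx
      rw [interior_Icc] at hx
      rw [(hd x (Ioo_subset_Icc_self hx)).deriv]
      exact hb x (Ioo_subset_Icc_self hx)
  exact hanti ⟨le_rfl, ht.1.trans ht.2⟩ ht ht.1

lemma abs_betaHat_le {βmin βmax Imax i M : ℝ} (h1 : 0 ≤ βmin) (h2 : βmin ≤ βmax)
    (hI : 0 < Imax) (hiM : |i| ≤ M) :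
    |betaHat βmin βmax Imax i| ≤ βmax + (βmin + βmax) * (M / Imax) := by
  unfold betaHat
  have h3 : |i / Imax| ≤ M / Imax := by
    rw [abs_div, abs_of_pos hI]
    exact (div_le_div_iff_of_pos_right hI).2 hiM
  have h4 := neg_abs_le (i / Imax)
  have h5 := le_abs_self (i / Imax)
  rw [abs_le]
  constructor <;> nlinarith

lemma betaHat_le_of_ge {βmin βmax Imax i : ℝ} (h2 : βmin ≤ βmax) (hI : 0 < Imax)
    (hi : Imax ≤ i) : betaHat βmin βmax Imax i ≤ βmin := by
  unfold betaHat
  have hx : (1 : ℝ) ≤ i / Imax := (one_le_div hI).2 hi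
  nlinarith

theorem sir_invariance {βmin βmax γmin γmax Imax t0 : ℝ}
    (hβmin : 0 < βmin) (hβ : βmin ≤ βmax)
    (hγmin : 0 < γmin) (hγ : γmin ≤ γmax)
    (hI0 : 0 < Imax) (hI1 : Imax < 1)
    (hineq : βmin * (1 - Imax) ≤ γmin)
    (S I γ : ℝ → ℝ)
    (hγb : ∀ t, t0 ≤ t → γ t ∈ Set.Icc γmin γmax)
    (hS : ∀ t, t0 ≤ t → HasDerivAt S (-(betaHat βmin βmax Imax (I t) * S t * I t)) t)
    (hI : ∀ t, t0 ≤ t → HasDerivAt I (betaHat βmin βmax Imax (I t) * S t * I t - γ t * I t) t)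
    (h0 : (S t0, I t0) ∈ GPiSIR Imax) :
    ∀ t, t0 ≤ t → (S t, I t) ∈ GPiSIR Imax := by
  obtain ⟨hS0, hI0', hsum0, hImax0⟩ := h0
  intro t1 ht1
  -- work on the interval J = [t0, t1]
  have hmem : ∀ t ∈ Icc t0 t1, t0 ≤ t := fun t ht => ht.1
  have hScont : ContinuousOn S (Icc t0 t1) :=
    fun t ht => ((hS t (hmem t ht)).continuousAt).continuousWithinAt
  have hIcont : ContinuousOn I (Icc t0 t1) :=
    fun t ht => ((hI t (hmem t ht)).continuousAt).continuousWithinAt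
  obtain ⟨MS, hMS⟩ := isCompact_Icc.exists_bound_of_continuousOn hScont
  obtain ⟨MI, hMI⟩ := isCompact_Icc.exists_bound_of_continuousOn hIcont
  set M : ℝ := max 0 (max MS MI) with hM_def
  have hM0 : 0 ≤ M := le_max_left _ _
  have hSM : ∀ t ∈ Icc t0 t1, |S t| ≤ M :=
    fun t ht => (hMS t ht).trans ((le_max_left MS MI).trans (le_max_right _ _))
  have hIM : ∀ t ∈ Icc t0 t1, |I t| ≤ M :=
    fun t ht => (hMI t ht).trans ((le_max_right MS MI).trans (le_max_right _ _))
  set B : ℝ := βmax + (βmin + βmax) * (M / Imax) with hB_def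
  have hB0 : 0 ≤ B := by
    rw [hB_def]
    have h1 : 0 ≤ (βmin + βmax) := by linarith
    have h2 : 0 ≤ M / Imax := div_nonneg hM0 hI0.le
    nlinarith
  have hβhat : ∀ t ∈ Icc t0 t1, |betaHat βmin βmax Imax (I t)| ≤ B :=
    fun t ht => abs_betaHat_le hβmin.le hβ hI0 (hIM t ht)
  have hγabs : ∀ t ∈ Icc t0 t1, |γ t| ≤ γmax := by
    intro t ht
    obtain ⟨hg1, hg2⟩ := hγb t (hmem t ht)
    rw [abs_le]; constructor <;> linarith
  set K : ℝ := B * M + γmax with hK_def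
  -- Step 1 : I is nonnegative on J
  have hInn : ∀ t ∈ Icc t0 t1, 0 ≤ I t := by
    apply nonneg_of_abs_deriv_le (f' := fun t => betaHat βmin βmax Imax (I t) * S t * I t - γ t * I t)
      (K := K) (fun t ht => hI t (hmem t ht)) _ hI0'
    intro t ht
    have h1 : betaHat βmin βmax Imax (I t) * S t * I t - γ t * I t
        = (betaHat βmin βmax Imax (I t) * S t - γ t) * I t := by ring
    rw [h1, abs_mul]
    apply mul_le_mul_of_nonneg_right _ (abs_nonneg _)
    calc |betaHat βmin βmax Imax (I t) * S t - γ t|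
        ≤ |betaHat βmin βmax Imax (I t) * S t| + |γ t| := abs_sub _ _
      _ ≤ B * M + γmax := by
          rw [abs_mul]
          exact add_le_add (mul_le_mul (hβhat t ht) (hSM t ht) (abs_nonneg _) hB0) (hγabs t ht)
  -- Step 2 : S is nonnegative on J
  have hSnn : ∀ t ∈ Icc t0 t1, 0 ≤ S t := by
    apply nonneg_of_abs_deriv_le (f' := fun t => -(betaHat βmin βmax Imax (I t) * S t * I t))
      (K := K) (fun t ht => hS t (hmem t ht)) _ hS0
    intro t ht
    have h1 : -(betaHat βmin βmax Imax (I t) * S t * I t)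
        = (-(betaHat βmin βmax Imax (I t) * I t)) * S t := by ring
    rw [h1, abs_mul]
    apply mul_le_mul_of_nonneg_right _ (abs_nonneg _)
    rw [abs_neg, abs_mul]
    calc |betaHat βmin βmax Imax (I t)| * |I t| ≤ B * M :=
          mul_le_mul (hβhat t ht) (hIM t ht) (abs_nonneg _) hB0
      _ ≤ K := by
          have hgm : (0:ℝ) < γmax := lt_of_lt_of_le hγmin hγ
          rw [hK_def]; linarith
  -- Step 3 : S + I ≤ 1 on J
  have hsum : ∀ t ∈ Icc t0 t1, S t + I t ≤ 1 := by
    intro t ht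
    have hd : ∀ u ∈ Icc t0 t1, HasDerivAt (fun z => S z + I z) (-(γ u * I u)) u := by
      intro u hu
      have := (hS u (hmem u hu)).add (hI u (hmem u hu))
      have he : -(betaHat βmin βmax Imax (I u) * S u * I u)
          + (betaHat βmin βmax Imax (I u) * S u * I u - γ u * I u) = -(γ u * I u) := by ring
      rwa [he] at this
    have := le_init_of_deriv_nonpos hd (fun u hu => by
      have h1 : 0 ≤ γ u := le_trans hγmin.le (hγb u (hmem u hu)).1
      have h2 : 0 ≤ I u := hInn u hu
      simp only [neg_nonpos]
      positivity) t ht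
    linarith
  -- Step 4 : I ≤ Imax on J
  have hIle : ∀ t ∈ Icc t0 t1, I t ≤ Imax := by
    apply le_of_deriv_nonpos_above
      (f' := fun t => betaHat βmin βmax Imax (I t) * S t * I t - γ t * I t)
      (fun t ht => hI t (hmem t ht)) _ hImax0
    intro t ht hge
    have hb1 : betaHat βmin βmax Imax (I t) ≤ βmin := betaHat_le_of_ge hβ hI0 hge
    have hSn : 0 ≤ S t := hSnn t ht
    have hIn : 0 ≤ I t := hInn t ht
    have hSle : S t ≤ 1 - Imax := by have := hsum t ht; linarith
    have hγ1 : γmin ≤ γ t := (hγb t (hmem t ht)).1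
    have hγt : 0 ≤ γ t := le_trans hγmin.le hγ1
    rcases le_or_gt (betaHat βmin βmax Imax (I t)) 0 with hc | hc
    · have hSI : 0 ≤ S t * I t := mul_nonneg hSn hIn
      nlinarith [mul_nonneg hSI (neg_nonneg.2 hc), mul_nonneg hγt hIn]
    · have hbs : betaHat βmin βmax Imax (I t) * S t ≤ βmin * (1 - Imax) :=
        mul_le_mul hb1 hSle hSn (by linarith)
      nlinarith [mul_nonneg hIn (by linarith : (0:ℝ) ≤ γ t - betaHat βmin βmax Imax (I t) * S t)]
  exact ⟨hSnn t1 ⟨ht1, le_rfl⟩, hInn t1 ⟨ht1, le_rfl⟩, hsum t1 ⟨ht1, le_rfl⟩, hIle t1 ⟨ht1, le_rfl⟩⟩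




/-- clamp to [0,1] -/
noncomputable def clamp01 (x : ℝ) : ℝ := max 0 (min x 1)

lemma clamp01_nonneg (x : ℝ) : 0 ≤ clamp01 x := le_max_left _ _
lemma clamp01_le_one (x : ℝ) : clamp01 x ≤ 1 := max_le zero_le_one (min_le_right _ _)
lemma clamp01_of_mem {x : ℝ} (h0 : 0 ≤ x) (h1 : x ≤ 1) : clamp01 x = x := by
  unfold clamp01; rw [min_eq_left h1, max_eq_right h0]
lemma clamp01_zero : clamp01 0 = 0 := by norm_num [clamp01]
lemma clamp01_lip (x y : ℝ) : |clamp01 x - clamp01 y| ≤ |x - y| := by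
  unfold clamp01
  calc |max 0 (min x 1) - max 0 (min y 1)|
      = |max (min x 1) 0 - max (min y 1) 0| := by rw [max_comm (min x 1) 0, max_comm (min y 1) 0]
    _ ≤ |min x 1 - min y 1| := abs_max_sub_max_le_abs _ _ _
    _ ≤ max |x - y| |(1:ℝ) - 1| := abs_min_sub_min_le_max _ _ _ _
    _ = |x - y| := by simp
lemma clamp01_le_abs (x : ℝ) : clamp01 x ≤ |x| := by
  have := clamp01_lip x 0
  rw [clamp01_zero, sub_zero, sub_zero] at this
  exact le_trans (le_abs_self _) this

noncomputable def sirg (βmin βmax Imax i : ℝ) : ℝ := betaHat βmin βmax Imax i * i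

lemma sirg_eq {βmin βmax Imax : ℝ} (hI : Imax ≠ 0) (i : ℝ) :
    sirg βmin βmax Imax i = βmax * i - ((βmax - βmin) / Imax) * i ^ 2 := by
  unfold sirg betaHat
  field_simp
  ring

noncomputable def sirLg (βmin βmax Imax : ℝ) : ℝ := βmax + 2 * ((βmax - βmin) / Imax)

lemma sirLg_nonneg {βmin βmax Imax : ℝ} (h0 : 0 ≤ βmin) (h : βmin ≤ βmax) (hI : 0 < Imax) :
    0 ≤ sirLg βmin βmax Imax := by
  unfold sirLg
  have : 0 ≤ (βmax - βmin) / Imax := div_nonneg (by linarith) hI.le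
  linarith

lemma sirg_lip {βmin βmax Imax : ℝ} (h0 : 0 ≤ βmin) (h : βmin ≤ βmax) (hI : 0 < Imax)
    {x y : ℝ} (hx : x ∈ Set.Icc (0:ℝ) 1) (hy : y ∈ Set.Icc (0:ℝ) 1) :
    |sirg βmin βmax Imax x - sirg βmin βmax Imax y| ≤ sirLg βmin βmax Imax * |x - y| := by
  have hk : 0 ≤ (βmax - βmin) / Imax := div_nonneg (by linarith) hI.le
  set k := (βmax - βmin) / Imax with hk_def
  have he : sirg βmin βmax Imax x - sirg βmin βmax Imax y
      = (x - y) * (βmax - k * (x + y)) := by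
    rw [sirg_eq hI.ne' x, sirg_eq hI.ne' y]; ring
  rw [he, abs_mul, mul_comm]
  apply mul_le_mul_of_nonneg_right _ (abs_nonneg _)
  rw [abs_le]
  unfold sirLg
  obtain ⟨hx0, hx1⟩ := hx
  obtain ⟨hy0, hy1⟩ := hy
  constructor <;> nlinarith
lemma sirg_bound {βmin βmax Imax : ℝ} (h0 : 0 ≤ βmin) (h : βmin ≤ βmax) (hI : 0 < Imax)
    {x : ℝ} (hx : x ∈ Set.Icc (0:ℝ) 1) :
    |sirg βmin βmax Imax x| ≤ sirLg βmin βmax Imax := by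
  have := sirg_lip h0 h hI hx (Set.mem_Icc.2 ⟨le_rfl, zero_le_one⟩)
  have hz : sirg βmin βmax Imax 0 = 0 := by simp [sirg]
  rw [hz, sub_zero, sub_zero] at this
  calc |sirg βmin βmax Imax x| ≤ sirLg βmin βmax Imax * |x| := this
    _ ≤ sirLg βmin βmax Imax * 1 := by
        apply mul_le_mul_of_nonneg_left _ (sirLg_nonneg h0 h hI)
        rw [abs_of_nonneg hx.1]; exact hx.2
    _ = _ := mul_one _

noncomputable def sirF (βmin βmax γmin Imax : ℝ) (p : ℝ × ℝ) : ℝ × ℝ :=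
  (-(sirg βmin βmax Imax (clamp01 p.2) * clamp01 p.1),
    sirg βmin βmax Imax (clamp01 p.2) * clamp01 p.1 - γmin * clamp01 p.2)

lemma sirF_bound {βmin βmax γmin Imax : ℝ} (h0 : 0 ≤ βmin) (h : βmin ≤ βmax)
    (hγ : 0 ≤ γmin) (hI : 0 < Imax) (p : ℝ × ℝ) :
    ‖sirF βmin βmax γmin Imax p‖ ≤ sirLg βmin βmax Imax + γmin := by
  have hLg := sirLg_nonneg h0 h hI
  have hw : clamp01 p.2 ∈ Set.Icc (0:ℝ) 1 := ⟨clamp01_nonneg _, clamp01_le_one _⟩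
  have hu1 : |clamp01 p.1| ≤ 1 := by
    rw [abs_of_nonneg (clamp01_nonneg _)]; exact clamp01_le_one _
  have hw1 : |clamp01 p.2| ≤ 1 := by
    rw [abs_of_nonneg (clamp01_nonneg _)]; exact clamp01_le_one _
  have hg := sirg_bound h0 h hI hw
  have h1 : |sirg βmin βmax Imax (clamp01 p.2) * clamp01 p.1| ≤ sirLg βmin βmax Imax := by
    rw [abs_mul]
    calc |sirg βmin βmax Imax (clamp01 p.2)| * |clamp01 p.1|
        ≤ sirLg βmin βmax Imax * 1 := mul_le_mul hg hu1 (abs_nonneg _) hLg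
      _ = _ := mul_one _
  rw [sirF, Prod.norm_def]
  apply max_le
  · rw [Real.norm_eq_abs, abs_neg]; linarith
  · rw [Real.norm_eq_abs]
    calc |sirg βmin βmax Imax (clamp01 p.2) * clamp01 p.1 - γmin * clamp01 p.2|
        ≤ |sirg βmin βmax Imax (clamp01 p.2) * clamp01 p.1| + |γmin * clamp01 p.2| := abs_sub _ _
      _ ≤ sirLg βmin βmax Imax + γmin := by
          apply add_le_add h1
          rw [abs_mul, abs_of_nonneg hγ]
          calc γmin * |clamp01 p.2| ≤ γmin * 1 := mul_le_mul_of_nonneg_left hw1 hγ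
            _ = γmin := mul_one _

lemma sirF_lipschitz {βmin βmax γmin Imax : ℝ} (h0 : 0 ≤ βmin) (h : βmin ≤ βmax)
    (hγ : 0 ≤ γmin) (hI : 0 < Imax) :
    LipschitzWith (Real.toNNReal (2 * sirLg βmin βmax Imax + γmin))
      (sirF βmin βmax γmin Imax) := by
  have hLg := sirLg_nonneg h0 h hI
  set Lg := sirLg βmin βmax Imax with hLg_def
  rw [lipschitzWith_iff_dist_le_mul]
  intro p q
  rw [Real.coe_toNNReal _ (by linarith)]
  set u := clamp01 p.1
  set u' := clamp01 q.1
  set w := clamp01 p.2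
  set w' := clamp01 q.2
  have hwmem : w ∈ Set.Icc (0:ℝ) 1 := ⟨clamp01_nonneg _, clamp01_le_one _⟩
  have hw'mem : w' ∈ Set.Icc (0:ℝ) 1 := ⟨clamp01_nonneg _, clamp01_le_one _⟩
  have hu'1 : |u'| ≤ 1 := by rw [abs_of_nonneg (clamp01_nonneg _)]; exact clamp01_le_one _
  have hd1 : |u - u'| ≤ dist p q := by
    refine (clamp01_lip _ _).trans ?_
    rw [← Real.dist_eq]
    rw [Prod.dist_eq]; exact le_max_left _ _
  have hd2 : |w - w'| ≤ dist p q := by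
    refine (clamp01_lip _ _).trans ?_
    rw [← Real.dist_eq]
    rw [Prod.dist_eq]; exact le_max_right _ _
  have hgw := sirg_bound h0 h hI hwmem
  have hglip := sirg_lip h0 h hI hwmem hw'mem
  have hkey : |sirg βmin βmax Imax w * u - sirg βmin βmax Imax w' * u'|
      ≤ 2 * Lg * dist p q := by
    have he : sirg βmin βmax Imax w * u - sirg βmin βmax Imax w' * u'
        = sirg βmin βmax Imax w * (u - u')
          + (sirg βmin βmax Imax w - sirg βmin βmax Imax w') * u' := by ring
    rw [he]
    calc |sirg βmin βmax Imax w * (u - u')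
          + (sirg βmin βmax Imax w - sirg βmin βmax Imax w') * u'|
        ≤ |sirg βmin βmax Imax w * (u - u')|
          + |(sirg βmin βmax Imax w - sirg βmin βmax Imax w') * u'| := abs_add_le _ _
      _ ≤ Lg * dist p q + Lg * dist p q := by
          apply add_le_add
          · rw [abs_mul]
            exact mul_le_mul hgw hd1 (abs_nonneg _) hLg
          · rw [abs_mul]
            calc |sirg βmin βmax Imax w - sirg βmin βmax Imax w'| * |u'|
                ≤ (Lg * |w - w'|) * 1 := mul_le_mul hglip hu'1 (abs_nonneg _)
                  (by positivity)
              _ = Lg * |w - w'| := mul_one _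
              _ ≤ Lg * dist p q := mul_le_mul_of_nonneg_left hd2 hLg
      _ = 2 * Lg * dist p q := by ring
  rw [Prod.dist_eq]
  apply max_le
  · rw [Real.dist_eq, sirF, sirF]
    simp only [neg_sub_neg]
    rw [abs_sub_comm]
    calc |sirg βmin βmax Imax w * u - sirg βmin βmax Imax w' * u'| ≤ 2 * Lg * dist p q := hkey
      _ ≤ (2 * Lg + γmin) * dist p q := by
          apply mul_le_mul_of_nonneg_right (by linarith) dist_nonneg
  · rw [Real.dist_eq, sirF, sirF]
    calc |sirg βmin βmax Imax w * u - γmin * w - (sirg βmin βmax Imax w' * u' - γmin * w')|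
        = |(sirg βmin βmax Imax w * u - sirg βmin βmax Imax w' * u') - γmin * (w - w')| := by
          ring_nf
      _ ≤ |sirg βmin βmax Imax w * u - sirg βmin βmax Imax w' * u'| + |γmin * (w - w')| :=
          abs_sub _ _
      _ ≤ 2 * Lg * dist p q + γmin * dist p q := by
          apply add_le_add hkey
          rw [abs_mul, abs_of_nonneg hγ]
          exact mul_le_mul_of_nonneg_left hd2 hγ
      _ = (2 * Lg + γmin) * dist p q := by ring
lemma sirF_exists_sol {βmin βmax γmin Imax : ℝ} (h0 : 0 ≤ βmin) (h : βmin ≤ βmax)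
    (hγ : 0 ≤ γmin) (hI : 0 < Imax) (t0 T : ℝ) (hT : t0 ≤ T) (x₀ : ℝ × ℝ) :
    ∃ f : ℝ → ℝ × ℝ, f t0 = x₀ ∧ ∀ t ∈ Icc t0 T,
      HasDerivWithinAt f (sirF βmin βmax γmin Imax (f t)) (Icc t0 T) t := by
  set C : ℝ := sirLg βmin βmax Imax + γmin with hC_def
  have hC0 : 0 ≤ C := by
    have := sirLg_nonneg h0 h hI
    rw [hC_def]; linarith
  have hpl : IsPicardLindelof (fun _ p => sirF βmin βmax γmin Imax p) (tmin := t0) (tmax := T)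
      ⟨t0, le_rfl, hT⟩ x₀ (Real.toNNReal (C * (T - t0))) 0 (Real.toNNReal C)
      (Real.toNNReal (2 * sirLg βmin βmax Imax + γmin)) :=
    IsPicardLindelof.of_time_independent
      (fun x _ => by rw [Real.coe_toNNReal _ hC0]; exact sirF_bound h0 h hγ hI x)
      ((sirF_lipschitz h0 h hγ hI).lipschitzOnWith)
      (by
        show (Real.toNNReal C : ℝ) * max (T - t0) (t0 - t0)
          ≤ (Real.toNNReal (C * (T - t0)) : ℝ) - ((0 : NNReal) : ℝ)
        rw [Real.coe_toNNReal _ hC0, Real.coe_toNNReal _ (mul_nonneg hC0 (by linarith)),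
          NNReal.coe_zero, sub_zero, sub_self, max_eq_left (by linarith : (0:ℝ) ≤ T - t0)])
  exact IsPicardLindelof.exists_eq_forall_mem_Icc_hasDerivWithinAt₀ hpl

lemma sirF_exists_global {βmin βmax γmin Imax : ℝ} (h0 : 0 ≤ βmin) (h : βmin ≤ βmax)
    (hγ : 0 ≤ γmin) (hI : 0 < Imax) (t0 : ℝ) (x₀ : ℝ × ℝ) :
    ∃ X : ℝ → ℝ × ℝ, X t0 = x₀ ∧
      (∀ t, t0 ≤ t → HasDerivAt X (sirF βmin βmax γmin Imax (X t)) t) ∧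
      (∀ t, t < t0 → HasDerivAt X (sirF βmin βmax γmin Imax x₀) t) := by
  classical
  set F := sirF βmin βmax γmin Imax with hF_def
  have hcast : ∀ n : ℕ, t0 ≤ t0 + n + 1 := by
    intro n
    have : (0:ℝ) ≤ n := Nat.cast_nonneg n
    linarith
  choose sol hsol0 hsolD using fun n : ℕ =>
    sirF_exists_sol h0 h hγ hI t0 (t0 + n + 1) (hcast n) x₀
  have hLip : ∀ s : ℝ, LipschitzWith (Real.toNNReal (2 * sirLg βmin βmax Imax + γmin))
      ((fun (_ : ℝ) (p : ℝ × ℝ) => F p) s) := fun _ => sirF_lipschitz h0 h hγ hI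
  -- agreement of solutions on overlapping intervals
  have hagree : ∀ m n : ℕ, (m : ℝ) ≤ n → ∀ t ∈ Icc t0 (t0 + m + 1), sol m t = sol n t := by
    intro m n hmn t ht
    have hmn' : t0 + m + 1 ≤ t0 + n + 1 := by linarith
    have hsub : Icc t0 (t0 + (m:ℝ) + 1) ⊆ Icc t0 (t0 + n + 1) := Icc_subset_Icc le_rfl hmn'
    refine ODE_solution_unique (v := fun (_ : ℝ) (p : ℝ × ℝ) => F p) hLip
      (fun s hs => (hsolD m s hs).continuousWithinAt)
      (fun s hs => (hsolD m s (Ico_subset_Icc_self hs)).mono_of_mem_nhdsWithin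
        (Icc_mem_nhdsGE_of_mem hs))
      (fun s hs => ((hsolD n s (hsub hs)).continuousWithinAt).mono hsub)
      (fun s hs => (hsolD n s (hsub (Ico_subset_Icc_self hs))).mono_of_mem_nhdsWithin
        (Icc_mem_nhdsGE_of_mem ⟨hs.1, lt_of_lt_of_le hs.2 hmn'⟩))
      ((hsol0 m).trans (hsol0 n).symm) ht
  set line : ℝ → ℝ × ℝ := fun t => x₀ + (t - t0) • F x₀ with hline_def
  set X : ℝ → ℝ × ℝ := fun t => if t0 ≤ t then sol ⌊t - t0⌋₊ t else line t with hX_def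
  have hfloor : ∀ t : ℝ, t < t0 + ⌊t - t0⌋₊ + 1 := by
    intro t
    have := Nat.lt_floor_add_one (t - t0)
    linarith
  have hXeq : ∀ t, t0 ≤ t → ∀ n : ℕ, t ≤ t0 + n + 1 → X t = sol n t := by
    intro t ht n htn
    have hNmem : t ∈ Icc t0 (t0 + (⌊t - t0⌋₊ : ℝ) + 1) := ⟨ht, (hfloor t).le⟩
    rw [hX_def]
    simp only [if_pos ht]
    rcases le_total ((⌊t - t0⌋₊ : ℝ)) (n : ℝ) with hc | hc
    · exact hagree _ n hc t hNmem
    · exact (hagree n _ hc t ⟨ht, htn⟩).symm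
  have hX0 : X t0 = x₀ := by
    rw [hXeq t0 le_rfl 0 (by norm_num : t0 ≤ t0 + (0:ℕ) + 1), hsol0 0]
  have hline_deriv : ∀ t : ℝ, HasDerivAt line (F x₀) t := by
    intro t
    have h1 : HasDerivAt (fun s : ℝ => (s - t0) • F x₀) ((1:ℝ) • F x₀) t :=
      ((hasDerivAt_id t).sub_const t0).smul_const (F x₀)
    rw [one_smul] at h1
    exact h1.const_add x₀
  have hXlineIic : ∀ s ∈ Iic t0, X s = line s := by
    intro s hs
    rcases lt_or_eq_of_le (mem_Iic.1 hs) with hlt | rfl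
    · rw [hX_def]; simp only [if_neg (not_le.2 hlt)]
    · rw [hX0, hline_def]
      simp
  refine ⟨X, hX0, ?_, ?_⟩
  · intro t ht
    rcases eq_or_lt_of_le ht with rfl | htgt
    · -- t = t0 : combine left (line) and right (sol 0) derivatives
      have h01 : t0 < t0 + (0:ℕ) + 1 := by norm_num
      have hR : HasDerivWithinAt X (F (sol 0 t0)) (Ici t0) t0 := by
        have h1 : HasDerivWithinAt (sol 0) (F (sol 0 t0)) (Icc t0 (t0 + (0:ℕ) + 1)) t0 :=
          hsolD 0 t0 ⟨le_rfl, h01.le⟩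
        have h2 := h1.mono_of_mem_nhdsWithin (Icc_mem_nhdsGE_of_mem ⟨le_rfl, h01⟩)
        refine h2.congr_of_eventuallyEq ?_ (by rw [hXeq t0 le_rfl 0 h01.le])
        filter_upwards [Icc_mem_nhdsGE_of_mem (⟨le_rfl, h01⟩ : t0 ∈ Ico t0 (t0 + (0:ℕ) + 1))]
          with s hs
        exact hXeq s hs.1 0 hs.2
      have hL : HasDerivWithinAt X (F x₀) (Iic t0) t0 :=
        ((hline_deriv t0).hasDerivWithinAt).congr hXlineIic (hXlineIic t0 (mem_Iic.2 le_rfl))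
      rw [hsol0 0] at hR
      have := hL.union hR
      rw [Iic_union_Ici] at this
      rw [hX0]
      exact this.hasDerivAt univ_mem
    · -- t > t0 : interior of a solution interval
      set n := ⌊t - t0⌋₊ with hn_def
      have htn : t < t0 + n + 1 := hfloor t
      have hs : HasDerivAt (sol n) (F (sol n t)) t :=
        (hsolD n t ⟨ht, htn.le⟩).hasDerivAt (Icc_mem_nhds htgt htn)
      have hXev : X =ᶠ[𝓝 t] sol n := by
        filter_upwards [Ioo_mem_nhds htgt htn] with s hs'
        exact hXeq s hs'.1.le n hs'.2.le
      have := hs.congr_of_eventuallyEq hXev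
      rwa [← hXeq t ht n htn.le] at this
  · intro t hlt
    have hXev : X =ᶠ[𝓝 t] line := by
      filter_upwards [Iio_mem_nhds hlt] with s hs'
      exact hXlineIic s (mem_Iic.2 hs'.le)
    exact (hline_deriv t).congr_of_eventuallyEq hXev


lemma betaHat_at_Imax {βmin βmax Imax : ℝ} (hI : Imax ≠ 0) :
    betaHat βmin βmax Imax Imax = βmin := by
  unfold betaHat
  rw [div_self hI]
  ring

lemma sir_necessity {βmin βmax γmin γmax Imax t0 : ℝ}
    (hβmin : 0 < βmin) (hβ : βmin ≤ βmax)
    (hγmin : 0 < γmin) (hγ : γmin ≤ γmax)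
    (hI0 : 0 < Imax) (hI1 : Imax < 1)
    (H : ∀ S I γ : ℝ → ℝ,
        Differentiable ℝ S → Differentiable ℝ I →
        (∀ t, t0 ≤ t → γ t ∈ Set.Icc γmin γmax) →
        (∀ t, t0 ≤ t →
          HasDerivAt S (-(betaHat βmin βmax Imax (I t) * S t * I t)) t) →
        (∀ t, t0 ≤ t →
          HasDerivAt I (betaHat βmin βmax Imax (I t) * S t * I t - γ t * I t) t) →
        (S t0, I t0) ∈ GPiSIR Imax →
        ∀ t, t0 ≤ t → (S t, I t) ∈ GPiSIR Imax) :
    βmin * (1 - Imax) ≤ γmin := by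
  by_contra hcon
  push_neg at hcon
  -- counterexample trajectory through (1 - Imax, Imax) with constant γ = γmin
  obtain ⟨X, hX0, hode, hleft⟩ :=
    sirF_exists_global hβmin.le hβ hγmin.le hI0 t0 ((1 - Imax, Imax) : ℝ × ℝ)
  set F := sirF βmin βmax γmin Imax with hF_def
  set Sf : ℝ → ℝ := fun s => (X s).1 with hSf_def
  set If : ℝ → ℝ := fun s => (X s).2 with hIf_def
  have hLg0 : 0 ≤ sirLg βmin βmax Imax := sirLg_nonneg hβmin.le hβ hI0
  have hcomp1 : ∀ (t : ℝ) (v : ℝ × ℝ), HasDerivAt X v t → HasDerivAt Sf v.1 t := fun t v hv =>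
    (ContinuousLinearMap.fst ℝ ℝ ℝ).hasFDerivAt.comp_hasDerivAt t hv
  have hcomp2 : ∀ (t : ℝ) (v : ℝ × ℝ), HasDerivAt X v t → HasDerivAt If v.2 t := fun t v hv =>
    (ContinuousLinearMap.snd ℝ ℝ ℝ).hasFDerivAt.comp_hasDerivAt t hv
  have hXdiff : ∀ t, DifferentiableAt ℝ X t := by
    intro t
    rcases le_or_gt t0 t with ht | ht
    · exact (hode t ht).differentiableAt
    · exact (hleft t ht).differentiableAt
  have hdiffS : Differentiable ℝ Sf := fun t => (hXdiff t).fst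
  have hdiffI : Differentiable ℝ If := fun t => (hXdiff t).snd
  -- raw (clamped) derivatives on [t0, ∞)
  have hSd : ∀ t, t0 ≤ t →
      HasDerivAt Sf (-(sirg βmin βmax Imax (clamp01 (If t)) * clamp01 (Sf t))) t :=
    fun t ht => hcomp1 t _ (hode t ht)
  have hId : ∀ t, t0 ≤ t →
      HasDerivAt If (sirg βmin βmax Imax (clamp01 (If t)) * clamp01 (Sf t)
        - γmin * clamp01 (If t)) t :=
    fun t ht => hcomp2 t _ (hode t ht)
  have hS00 : Sf t0 = 1 - Imax := by rw [hSf_def]; simp only [hX0]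
  have hI00 : If t0 = Imax := by rw [hIf_def]; simp only [hX0]
  -- the box invariance  :  0 ≤ Sf, 0 ≤ If, Sf + If ≤ 1  on [t0, ∞)
  have hbox : ∀ t, t0 ≤ t → 0 ≤ Sf t ∧ 0 ≤ If t ∧ Sf t + If t ≤ 1 := by
    intro t1 ht1
    have hmem : ∀ t ∈ Icc t0 t1, t0 ≤ t := fun t ht => ht.1
    have hgbd : ∀ t, |sirg βmin βmax Imax (clamp01 (If t))| ≤ sirLg βmin βmax Imax :=
      fun t => sirg_bound hβmin.le hβ hI0 ⟨clamp01_nonneg _, clamp01_le_one _⟩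
    have hglip : ∀ t, |sirg βmin βmax Imax (clamp01 (If t))|
        ≤ sirLg βmin βmax Imax * |If t| := by
      intro t
      have h1 := sirg_lip hβmin.le hβ hI0
        (⟨clamp01_nonneg (If t), clamp01_le_one _⟩ : clamp01 (If t) ∈ Icc (0:ℝ) 1)
        (⟨le_rfl, zero_le_one⟩ : (0:ℝ) ∈ Icc (0:ℝ) 1)
      have hz : sirg βmin βmax Imax 0 = 0 := by simp [sirg]
      rw [hz, sub_zero, sub_zero] at h1
      refine h1.trans ?_
      apply mul_le_mul_of_nonneg_left _ hLg0
      rw [abs_of_nonneg (clamp01_nonneg _)]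
      exact clamp01_le_abs _
    have hSnn : ∀ t ∈ Icc t0 t1, 0 ≤ Sf t := by
      apply nonneg_of_abs_deriv_le
        (f' := fun t => -(sirg βmin βmax Imax (clamp01 (If t)) * clamp01 (Sf t)))
        (K := sirLg βmin βmax Imax)
        (fun t ht => hSd t (hmem t ht)) _ (by rw [hS00]; linarith)
      intro t ht
      rw [abs_neg, abs_mul]
      apply mul_le_mul (hgbd t) _ (abs_nonneg _) hLg0
      rw [abs_of_nonneg (clamp01_nonneg _)]
      exact clamp01_le_abs _
    have hInn : ∀ t ∈ Icc t0 t1, 0 ≤ If t := by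
      apply nonneg_of_abs_deriv_le
        (f' := fun t => sirg βmin βmax Imax (clamp01 (If t)) * clamp01 (Sf t)
          - γmin * clamp01 (If t))
        (K := sirLg βmin βmax Imax + γmin)
        (fun t ht => hId t (hmem t ht)) _ (by rw [hI00]; linarith)
      intro t ht
      have hc1 : |clamp01 (Sf t)| ≤ 1 := by
        rw [abs_of_nonneg (clamp01_nonneg _)]; exact clamp01_le_one _
      have hc2 : |clamp01 (If t)| ≤ |If t| := by
        rw [abs_of_nonneg (clamp01_nonneg _)]; exact clamp01_le_abs _
      calc |sirg βmin βmax Imax (clamp01 (If t)) * clamp01 (Sf t) - γmin * clamp01 (If t)|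
          ≤ |sirg βmin βmax Imax (clamp01 (If t)) * clamp01 (Sf t)|
            + |γmin * clamp01 (If t)| := abs_sub _ _
        _ ≤ sirLg βmin βmax Imax * |If t| + γmin * |If t| := by
            apply add_le_add
            · rw [abs_mul]
              calc |sirg βmin βmax Imax (clamp01 (If t))| * |clamp01 (Sf t)|
                  ≤ (sirLg βmin βmax Imax * |If t|) * 1 :=
                    mul_le_mul (hglip t) hc1 (abs_nonneg _) (by positivity)
                _ = sirLg βmin βmax Imax * |If t| := mul_one _
            · rw [abs_mul, abs_of_nonneg hγmin.le]
              exact mul_le_mul_of_nonneg_left hc2 hγmin.le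
        _ = (sirLg βmin βmax Imax + γmin) * |If t| := by ring
    have hsum : ∀ t ∈ Icc t0 t1, Sf t + If t ≤ 1 := by
      intro t ht
      have hd : ∀ u ∈ Icc t0 t1,
          HasDerivAt (fun z => Sf z + If z) (-(γmin * clamp01 (If u))) u := by
        intro u hu
        have := (hSd u (hmem u hu)).add (hId u (hmem u hu))
        have he : -(sirg βmin βmax Imax (clamp01 (If u)) * clamp01 (Sf u))
            + (sirg βmin βmax Imax (clamp01 (If u)) * clamp01 (Sf u)
              - γmin * clamp01 (If u)) = -(γmin * clamp01 (If u)) := by ring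
        rwa [he] at this
      have := le_init_of_deriv_nonpos hd (fun u hu => by
        have := clamp01_nonneg (If u)
        simp only [neg_nonpos]
        positivity) t ht
      rw [hS00, hI00] at this
      linarith
    exact ⟨hSnn t1 ⟨ht1, le_rfl⟩, hInn t1 ⟨ht1, le_rfl⟩, hsum t1 ⟨ht1, le_rfl⟩⟩
  -- on [t0, ∞) the clamps are the identity, so X solves the true SIR system
  have hclampS : ∀ t, t0 ≤ t → clamp01 (Sf t) = Sf t := by
    intro t ht
    obtain ⟨h1, h2, h3⟩ := hbox t ht
    exact clamp01_of_mem h1 (by linarith)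
  have hclampI : ∀ t, t0 ≤ t → clamp01 (If t) = If t := by
    intro t ht
    obtain ⟨h1, h2, h3⟩ := hbox t ht
    exact clamp01_of_mem h2 (by linarith)
  have hS' : ∀ t, t0 ≤ t →
      HasDerivAt Sf (-(betaHat βmin βmax Imax (If t) * Sf t * If t)) t := by
    intro t ht
    have hd := hSd t ht
    rw [hclampS t ht, hclampI t ht] at hd
    have he : -(sirg βmin βmax Imax (If t) * Sf t)
        = -(betaHat βmin βmax Imax (If t) * Sf t * If t) := by
      unfold sirg; ring
    rwa [he] at hd
  have hI' : ∀ t, t0 ≤ t →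
      HasDerivAt If (betaHat βmin βmax Imax (If t) * Sf t * If t - γmin * If t) t := by
    intro t ht
    have hd := hId t ht
    rw [hclampS t ht, hclampI t ht] at hd
    have he : sirg βmin βmax Imax (If t) * Sf t - γmin * If t
        = betaHat βmin βmax Imax (If t) * Sf t * If t - γmin * If t := by
      unfold sirg; ring
    rwa [he] at hd
  -- apply the invariance hypothesis
  have hinv := H Sf If (fun _ => γmin) hdiffS hdiffI
    (fun t _ => ⟨le_rfl, hγ⟩) hS' hI'
    (by
      refine ⟨?_, ?_, ?_, ?_⟩ <;> simp only [hS00, hI00] <;> [skip; skip; skip; skip] <;> linarith)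
  -- but the derivative of If at t0 is positive, contradiction
  have hd0 : HasDerivAt If (betaHat βmin βmax Imax (If t0) * Sf t0 * If t0 - γmin * If t0) t0 :=
    hI' t0 le_rfl
  rw [hS00, hI00, betaHat_at_Imax hI0.ne'] at hd0
  have hdpos : 0 < βmin * (1 - Imax) * Imax - γmin * Imax := by nlinarith
  have hslope := hasDerivAt_iff_tendsto_slope.1 hd0
  have hmono : 𝓝[>] t0 ≤ 𝓝[≠] t0 :=
    nhdsWithin_mono t0 (fun x (hx : t0 < x) => (hx.ne' : x ≠ t0))
  have hev : ∀ᶠ s in 𝓝[>] t0, 0 < slope If t0 s :=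
    (hslope.mono_left hmono).eventually (lt_mem_nhds hdpos)
  obtain ⟨s, hs_pos, hs_gt⟩ := (hev.and self_mem_nhdsWithin).exists
  have hden : (0:ℝ) < s - t0 := sub_pos.2 hs_gt
  rw [slope_def_field] at hs_pos
  have hnum : 0 < If s - If t0 := by
    rcases div_pos_iff.1 hs_pos with ⟨h1, _⟩ | ⟨_, h2⟩
    · exact h1
    · linarith
  have hle : If s ≤ Imax := (hinv s hs_gt.le).2.2.2
  rw [hI00] at hnum
  linarith

end SIRAux

/-- The MRPI of the closed-loop uncertain SIR model under the affine feedback `β̂`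
equals `G_Π` iff `β_min (1 − I_max) ≤ γ_min`. -/
theorem sir_imperfect_mrpi_eq_GPi_iff
    (βmin βmax γmin γmax Imax t0 : ℝ)
    (hβmin : 0 < βmin) (hβ : βmin ≤ βmax)
    (hγmin : 0 < γmin) (hγ : γmin ≤ γmax)
    (hI0 : 0 < Imax) (hI1 : Imax < 1) :
    (∀ S I γ : ℝ → ℝ,
        Differentiable ℝ S → Differentiable ℝ I →
        (∀ t, t0 ≤ t → γ t ∈ Set.Icc γmin γmax) →
        (∀ t, t0 ≤ t →
          HasDerivAt S (-(betaHat βmin βmax Imax (I t) * S t * I t)) t) →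
        (∀ t, t0 ≤ t →
          HasDerivAt I (betaHat βmin βmax Imax (I t) * S t * I t - γ t * I t) t) →
        (S t0, I t0) ∈ GPiSIR Imax →
        ∀ t, t0 ≤ t → (S t, I t) ∈ GPiSIR Imax)
      ↔ βmin * (1 - Imax) ≤ γmin := by
  constructor
  · intro H
    exact sir_necessity hβmin hβ hγmin hγ hI0 hI1 H
  · intro hineq S I γ _ _ hγb hS hI h0
    exact sir_invariance hβmin hβ hγmin hγ hI0 hI1 hineq S I γ hγb hS hI h0
end

section
/- Consider the controlled SEIR model. The following are equivalent: (i) for every admissible controlled trajectory (S, E, I, β, γ) with (S(t0), E(t0), I(t0)) ∈ G_Π one has (S(t), E(t), I(t)) ∈ G_Π for all t ≥ t0 (i.e. the maximal robust positively invariant set equals G_Π); (ii) η (1 − I_max) ≤ γ_min I_max. -/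
open Filter Topology Set

/-- The constraint set `G_Π` for the SEIR model:
`{(S, E, I) : S ≥ 0, E ≥ 0, I ≥ 0, S + E + I ≤ 1, I ≤ I_max}`. -/
def GPiSEIR (Imax : ℝ) : Set (ℝ × ℝ × ℝ) :=
  {p | 0 ≤ p.1 ∧ 0 ≤ p.2.1 ∧ 0 ≤ p.2.2 ∧ p.1 + p.2.1 + p.2.2 ≤ 1 ∧ p.2.2 ≤ Imax}

lemma ev_pos_right (f : ℝ → ℝ) (a c : ℝ) (hf : HasDerivAt f c a) (hc : 0 < c)
    (h0 : f a = 0) : ∀ᶠ t in 𝓝[>] a, 0 < f t := by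
  have hs := hasDerivAt_iff_tendsto_slope.mp hf
  have hs' : Tendsto (slope f a) (𝓝[>] a) (𝓝 c) :=
    hs.mono_left (nhdsWithin_mono a (fun x hx => ne_of_gt hx))
  have h1 : ∀ᶠ t in 𝓝[>] a, 0 < slope f a t := hs'.eventually (eventually_gt_nhds hc)
  filter_upwards [h1, self_mem_nhdsWithin] with t ht hta
  have hta' : 0 < t - a := sub_pos.mpr hta
  have : slope f a t = (f t - f a) / (t - a) := slope_def_field f a t
  rw [this, h0, sub_zero] at ht
  have := mul_pos ht hta'
  rw [div_mul_cancel₀] at this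
  · linarith
  · exact ne_of_gt hta'

lemma no_max_of_pos_deriv (f : ℝ → ℝ) (a c : ℝ) (hf : HasDerivAt f c a) (hc : 0 < c)
    (h : ∀ t, a ≤ t → f t ≤ f a) : False := by
  have := ev_pos_right (fun t => f t - f a) a c (hf.sub_const (f a)) hc (by show f a - f a = 0; ring)
  rcases (this.and self_mem_nhdsWithin).exists with ⟨t, ht1, ht2⟩
  have h2 := h t (le_of_lt ht2)
  have : 0 < f t - f a := ht1
  linarith

lemma barrier (g : ℝ → ℝ) (t0 t1 : ℝ)
    (hg : ContinuousOn g (Set.Icc t0 t1)) (h0 : 0 < g t0) (ht01 : t0 ≤ t1)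
    (key : ∀ t ∈ Set.Ioc t0 t1, (∀ s ∈ Set.Icc t0 t, 0 ≤ g s) → g t = 0 →
      ∀ᶠ u in 𝓝[>] t, 0 < g u) :
    ∀ t ∈ Set.Icc t0 t1, 0 ≤ g t := by
  by_contra hbad
  push_neg at hbad
  obtain ⟨t2, ht2, hgt2⟩ := hbad
  set A : Set ℝ := {t | t ∈ Set.Icc t0 t1 ∧ g t < 0} with hA
  have hAsub : A ⊆ Set.Icc t0 t1 := fun x hx => hx.1
  have hAne : A.Nonempty := ⟨t2, ht2, hgt2⟩
  have hAbdd : BddBelow A := ⟨t0, fun x hx => hx.1.1⟩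
  set c := sInf A with hc
  have hct0 : t0 ≤ c := le_csInf hAne (fun x hx => hx.1.1)
  have hct1 : c ≤ t1 := le_trans (csInf_le hAbdd ⟨ht2, hgt2⟩) ht2.2
  have hcIcc : c ∈ Set.Icc t0 t1 := ⟨hct0, hct1⟩
  -- t0 < c
  have ht0c : t0 < c := by
    have hcw : ContinuousWithinAt g (Set.Icc t0 t1) t0 :=
      hg.continuousWithinAt (Set.left_mem_Icc.mpr ht01)
    have hev : ∀ᶠ u in 𝓝[Set.Icc t0 t1] t0, 0 < g u :=
      hcw.eventually (eventually_gt_nhds h0)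
    rw [eventually_nhdsWithin_iff] at hev
    obtain ⟨δ, hδ, hball⟩ := Metric.eventually_nhds_iff.mp hev
    have hlow : ∀ a ∈ A, t0 + δ/2 ≤ a := by
      intro a ha
      by_contra hlt
      push_neg at hlt
      have h1 : dist a t0 < δ := by
        rw [Real.dist_eq, abs_lt]
        constructor <;> [linarith [ha.1.1]; linarith]
      exact absurd (hball h1 ha.1) (not_lt.mpr (le_of_lt ha.2))
    linarith [le_csInf hAne hlow]
  -- goodness on [t0, c)
  have hgood : ∀ s ∈ Set.Ico t0 c, 0 ≤ g s := by
    intro s hs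
    by_contra hneg
    push_neg at hneg
    have : s ∈ A := ⟨⟨hs.1, le_trans (le_of_lt hs.2) hct1⟩, hneg⟩
    exact absurd (csInf_le hAbdd this) (not_le.mpr hs.2)
  -- g c ≥ 0
  have hgc0 : 0 ≤ g c := by
    haveI : (𝓝[Set.Ico t0 c] c).NeBot := by
      rw [← mem_closure_iff_nhdsWithin_neBot, closure_Ico (ne_of_lt ht0c)]
      exact Set.right_mem_Icc.mpr hct0
    have htt : Filter.Tendsto g (𝓝[Set.Ico t0 c] c) (𝓝 (g c)) :=
      (hg.continuousWithinAt hcIcc).mono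
        (fun x hx => ⟨hx.1, le_trans (le_of_lt hx.2) hct1⟩)
    exact ge_of_tendsto htt (eventually_of_mem self_mem_nhdsWithin hgood)
  have hcA : c ∉ A := fun h => absurd hgc0 (not_le.mpr h.2)
  -- frequently bad points just to the right of c
  have hfreq : ∃ᶠ u in 𝓝[>] c, u ∈ A := by
    rw [Filter.frequently_iff]
    intro U hU
    obtain ⟨u, hu, hsub⟩ := mem_nhdsGT_iff_exists_Ioc_subset.mp hU
    obtain ⟨a, haA, halt⟩ := Real.lt_sInf_add_pos hAne (sub_pos.mpr hu)
    have hac : c ≤ a := csInf_le hAbdd haA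
    have hane : a ≠ c := fun h => hcA (h ▸ haA)
    refine ⟨a, hsub ⟨lt_of_le_of_ne hac (Ne.symm hane), ?_⟩, haA⟩
    linarith
  -- eventually good just to the right of c
  have hev : ∀ᶠ u in 𝓝[>] c, u ∈ Set.Icc t0 t1 → 0 < g u := by
    rcases eq_or_lt_of_le hgc0 with heq | hlt
    · have hkey := key c ⟨ht0c, hct1⟩ ?_ heq.symm
      · exact hkey.mono (fun u hu _ => hu)
      · intro s hs
        rcases eq_or_lt_of_le hs.2 with h | h
        · rw [h]; exact hgc0
        · exact hgood s ⟨hs.1, h⟩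
    · have hcw := (hg.continuousWithinAt hcIcc).eventually (eventually_gt_nhds hlt)
      rw [eventually_nhdsWithin_iff] at hcw
      exact (hcw.filter_mono nhdsWithin_le_nhds)
  obtain ⟨u, huA, hug⟩ := (hfreq.and_eventually hev).exists
  exact absurd (hug huA.1) (not_lt.mpr (le_of_lt huA.2))

lemma mul_ge_aux (b bmax x c : ℝ) (hb0 : 0 < b) (hb : b ≤ bmax) (hx : -c ≤ x)
    (hc : 0 ≤ c) : -(bmax * c) ≤ b * x := by
  rcases le_or_gt 0 x with h | h
  · nlinarith
  · nlinarith

lemma prod_ge_aux (x y M D : ℝ) (hx : -D ≤ x) (hy : -D ≤ y) (hxM : |x| ≤ M)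
    (hyM : |y| ≤ M) (hD : 0 < D) : -(M * D) ≤ x * y := by
  have hxM' := abs_le.mp hxM
  have hyM' := abs_le.mp hyM
  rcases le_or_gt 0 x with hs | hs
  · rcases le_or_gt 0 y with hi | hi
    · nlinarith
    · nlinarith
  · rcases le_or_gt 0 y with hi | hi
    · nlinarith
    · nlinarith [mul_pos_of_neg_of_neg hs hi]


lemma arithS (b bmax M dt It x : ℝ) (hb : 0 < b) (hbm : b ≤ bmax) (hI : |It| ≤ M)
    (hd : 0 < dt) (hx : 0 ≤ x) : 0 < b * dt * It + (bmax * M + x + 1) * dt := by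
  have h1 := abs_le.mp hI
  have h2 : (b * dt) * (-M) ≤ (b * dt) * It :=
    mul_le_mul_of_nonneg_left h1.1 (by positivity)
  have h3 : b * (dt * M) ≤ bmax * (dt * M) := by
    have hM : 0 ≤ M := le_trans (abs_nonneg _) hI
    have : 0 ≤ dt * M := by positivity
    exact mul_le_mul_of_nonneg_right hbm this
  nlinarith

set_option maxHeartbeats 1000000 in
lemma seir_nonneg
    (η βmin βmax γmin γmax t0 : ℝ)
    (S E I β γ : ℝ → ℝ)
    (hS : Differentiable ℝ S) (hE : Differentiable ℝ E) (hI : Differentiable ℝ I)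
    (hβr : ∀ t, t0 ≤ t → β t ∈ Set.Icc βmin βmax)
    (hγr : ∀ t, t0 ≤ t → γ t ∈ Set.Icc γmin γmax)
    (hS' : ∀ t, t0 ≤ t → HasDerivAt S (-(β t * S t * I t)) t)
    (hE' : ∀ t, t0 ≤ t → HasDerivAt E (β t * S t * I t - η * E t) t)
    (hI' : ∀ t, t0 ≤ t → HasDerivAt I (η * E t - γ t * I t) t)
    (hη : 0 < η) (hβmin : 0 < βmin) (hγmin0 : 0 < γmin)
    (h0 : 0 ≤ S t0 ∧ 0 ≤ E t0 ∧ 0 ≤ I t0) :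
    ∀ t, t0 ≤ t → 0 ≤ S t ∧ 0 ≤ E t ∧ 0 ≤ I t := by
  intro t1 ht1
  obtain ⟨MS, hMS⟩ := isCompact_Icc.exists_bound_of_continuousOn
    (hS.continuous.continuousOn (s := Set.Icc t0 t1))
  obtain ⟨ME, hME⟩ := isCompact_Icc.exists_bound_of_continuousOn
    (hE.continuous.continuousOn (s := Set.Icc t0 t1))
  obtain ⟨MI, hMI⟩ := isCompact_Icc.exists_bound_of_continuousOn
    (hI.continuous.continuousOn (s := Set.Icc t0 t1))
  set M : ℝ := max 1 (max MS (max ME MI)) with hM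
  have hM1 : 1 ≤ M := le_max_left _ _
  have hM0 : 0 < M := lt_of_lt_of_le one_pos hM1
  have hMSb : ∀ s ∈ Set.Icc t0 t1, |S s| ≤ M := fun s hs =>
    le_trans (hMS s hs) (le_trans (le_max_left _ _) (le_max_right _ _))
  have hMEb : ∀ s ∈ Set.Icc t0 t1, |E s| ≤ M := fun s hs =>
    le_trans (hME s hs) (le_trans (le_trans (le_max_left _ _) (le_max_right _ _)) (le_max_right _ _))
  have hMIb : ∀ s ∈ Set.Icc t0 t1, |I s| ≤ M := fun s hs =>
    le_trans (hMI s hs) (le_trans (le_trans (le_max_right _ _) (le_max_right _ _)) (le_max_right _ _))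
  set K : ℝ := βmax * M + η + 1 with hK
  have hβmax : 0 < βmax :=
    lt_of_lt_of_le hβmin ((hβr t0 le_rfl).1.trans (hβr t0 le_rfl).2)
  have hK0 : 0 < K := by positivity
  have main : ∀ ε : ℝ, 0 < ε →
      -(ε * Real.exp (K * (t1 - t0))) ≤ S t1 ∧
      -(ε * Real.exp (K * (t1 - t0))) ≤ E t1 ∧
      -(ε * Real.exp (K * (t1 - t0))) ≤ I t1 := by
    intro ε hε
    set d : ℝ → ℝ := fun u => ε * Real.exp (K * (u - t0)) with hd
    have hdpos : ∀ u, 0 < d u := fun u => by positivity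
    have hdC : Continuous d := by fun_prop
    have hdD : ∀ u : ℝ, HasDerivAt d (K * d u) u := by
      intro u
      have h1 : HasDerivAt (fun v : ℝ => K * (v - t0)) (K * 1) u :=
        ((hasDerivAt_id u).sub_const t0).const_mul K
      have h2 := (h1.exp).const_mul ε
      refine h2.congr_deriv (Eq.symm ?_)
      simp [hd]
      ring
    set g : ℝ → ℝ := fun u => min (S u + d u) (min (E u + d u) (I u + d u)) with hg
    have hgC : Continuous g :=
      ((hS.continuous.add hdC).min ((hE.continuous.add hdC).min (hI.continuous.add hdC)))
    have hgb := barrier g t0 t1 hgC.continuousOn ?_ ht1 ?_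
    · have := hgb t1 (Set.right_mem_Icc.mpr ht1)
      rw [hg] at this
      simp only [le_min_iff] at this
      have hdt1 : d t1 = ε * Real.exp (K * (t1 - t0)) := rfl
      refine ⟨by linarith [this.1], by linarith [this.2.1], by linarith [this.2.2]⟩
    · -- g t0 > 0
      have : d t0 = ε := by simp [hd]
      simp only [hg, lt_min_iff]
      refine ⟨by linarith [h0.1, hdpos t0], by linarith [h0.2.1, hdpos t0],
        by linarith [h0.2.2, hdpos t0]⟩
    · -- key step
      intro t ht hgood hgt
      have ht0t : t0 ≤ t := le_of_lt ht.1
      have htIcc : t ∈ Set.Icc t0 t1 := ⟨ht0t, ht.2⟩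
      have hgt' : 0 ≤ g t := le_of_eq hgt.symm
      simp only [hg, le_min_iff] at hgt'
      obtain ⟨hSt, hEt, hIt⟩ : 0 ≤ S t + d t ∧ 0 ≤ E t + d t ∧ 0 ≤ I t + d t :=
        ⟨hgt'.1, hgt'.2.1, hgt'.2.2⟩
      have hβt := hβr t ht0t
      have hγt := hγr t ht0t
      have hSM := hMSb t htIcc
      have hEM := hMEb t htIcc
      have hIM := hMIb t htIcc
      have hIM' := abs_le.mp hIM
      have hdt := hdpos t
      -- per-component eventual positivity
      have compS : ∀ᶠ u in 𝓝[>] t, 0 < S u + d u := by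
        rcases eq_or_lt_of_le hSt with h | h
        · refine ev_pos_right _ t _ ((hS' t ht0t).add (hdD t)) ?_ h.symm
          have hSe : S t = -d t := by linarith
          have harith := arithS (β t) βmax M (d t) (I t) η
            (lt_of_lt_of_le hβmin hβt.1) hβt.2 hIM hdt hη.le
          have heq : -(β t * S t * I t) + K * d t
              = β t * d t * I t + (βmax * M + η + 1) * d t := by rw [hSe, hK]; ring
          rw [heq]
          exact harith
        · have : ContinuousAt (fun u => S u + d u) t := (hS.continuous.add hdC).continuousAt
          exact (this.eventually (eventually_gt_nhds h)).filter_mono nhdsWithin_le_nhds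
      have compE : ∀ᶠ u in 𝓝[>] t, 0 < E u + d u := by
        rcases eq_or_lt_of_le hEt with h | h
        · refine ev_pos_right _ t _ ((hE' t ht0t).add (hdD t)) ?_ h.symm
          have hEe : E t = -d t := by linarith
          have hprod : -(M * d t) ≤ S t * I t :=
            prod_ge_aux (S t) (I t) M (d t) (by linarith) (by linarith) hSM hIM hdt
          have h1 : -(βmax * (M * d t)) ≤ β t * (S t * I t) :=
            mul_ge_aux (β t) βmax (S t * I t) (M * d t)
              (lt_of_lt_of_le hβmin hβt.1) hβt.2 hprod (by positivity)
          have heq : β t * S t * I t - η * E t + K * d t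
              = β t * (S t * I t) + η * d t + (βmax * M + η + 1) * d t := by
            rw [hEe, hK]; ring
          rw [heq]
          nlinarith [mul_pos (mul_pos hβmax hM0) hdt, mul_pos hη hdt]
        · have : ContinuousAt (fun u => E u + d u) t := (hE.continuous.add hdC).continuousAt
          exact (this.eventually (eventually_gt_nhds h)).filter_mono nhdsWithin_le_nhds
      have compI : ∀ᶠ u in 𝓝[>] t, 0 < I u + d u := by
        rcases eq_or_lt_of_le hIt with h | h
        · refine ev_pos_right _ t _ ((hI' t ht0t).add (hdD t)) ?_ h.symm
          have hIe : I t = -d t := by linarith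
          have h2 : η * E t - γ t * I t + K * d t
              = η * (E t + d t) + γ t * d t + (βmax * M + 1) * d t := by
            rw [hIe, hK]; ring
          rw [h2]
          have hγ0 : 0 ≤ γ t * d t := mul_nonneg (le_trans hγmin0.le hγt.1) hdt.le
          have hη0 : 0 ≤ η * (E t + d t) := mul_nonneg hη.le hEt
          nlinarith [mul_pos (mul_pos hβmax hM0) hdt]
        · have : ContinuousAt (fun u => I u + d u) t := (hI.continuous.add hdC).continuousAt
          exact (this.eventually (eventually_gt_nhds h)).filter_mono nhdsWithin_le_nhds
      filter_upwards [compS, compE, compI] with u h1 h2 h3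
      exact lt_min h1 (lt_min h2 h3)
  -- conclude each component nonneg
  set C : ℝ := Real.exp (K * (t1 - t0)) with hC
  have hC0 : 0 < C := Real.exp_pos _
  have conc : ∀ x : ℝ, (∀ ε : ℝ, 0 < ε → -(ε * C) ≤ x) → 0 ≤ x := by
    intro x hx
    by_contra hneg
    push_neg at hneg
    have := hx (-x / (2 * C)) (div_pos (neg_pos.mpr hneg) (by positivity))
    have hh : -(-x / (2 * C) * C) = x / 2 := by field_simp
    rw [hh] at this
    linarith
  exact ⟨conc _ (fun ε hε => (main ε hε).1), conc _ (fun ε hε => (main ε hε).2.1),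
    conc _ (fun ε hε => (main ε hε).2.2)⟩

lemma seir_sum_le
    (η βmin βmax γmin γmax t0 : ℝ)
    (S E I β γ : ℝ → ℝ)
    (hS : Differentiable ℝ S) (hE : Differentiable ℝ E) (hI : Differentiable ℝ I)
    (hγr : ∀ t, t0 ≤ t → γ t ∈ Set.Icc γmin γmax)
    (hS' : ∀ t, t0 ≤ t → HasDerivAt S (-(β t * S t * I t)) t)
    (hE' : ∀ t, t0 ≤ t → HasDerivAt E (β t * S t * I t - η * E t) t)
    (hI' : ∀ t, t0 ≤ t → HasDerivAt I (η * E t - γ t * I t) t)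
    (hγmin0 : 0 < γmin)
    (hIpos : ∀ t, t0 ≤ t → 0 ≤ I t)
    (hsum0 : S t0 + E t0 + I t0 ≤ 1) :
    ∀ t, t0 ≤ t → S t + E t + I t ≤ 1 := by
  set N : ℝ → ℝ := fun u => S u + E u + I u with hN
  have hanti : AntitoneOn N (Set.Ici t0) := by
    apply antitoneOn_of_deriv_nonpos (convex_Ici t0)
    · exact ((hS.continuous.add hE.continuous).add hI.continuous).continuousOn
    · exact ((hS.add hE).add hI).differentiableOn
    · intro x hx
      rw [interior_Ici] at hx
      have hx0 : t0 ≤ x := le_of_lt hx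
      have hD : HasDerivAt N (-(β x * S x * I x) + (β x * S x * I x - η * E x)
          + (η * E x - γ x * I x)) x := ((hS' x hx0).add (hE' x hx0)).add (hI' x hx0)
      rw [hD.deriv]
      have : -(β x * S x * I x) + (β x * S x * I x - η * E x) + (η * E x - γ x * I x)
          = -(γ x * I x) := by ring
      rw [this]
      have := mul_nonneg (le_trans hγmin0.le (hγr x hx0).1) (hIpos x hx0)
      linarith
  intro t ht
  have := hanti (Set.self_mem_Ici) ht ht
  simp only [hN] at this
  linarith

lemma seir_I_le
    (η βmin βmax γmin γmax Imax t0 : ℝ)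
    (S E I β γ : ℝ → ℝ)
    (hS : Differentiable ℝ S) (hE : Differentiable ℝ E) (hI : Differentiable ℝ I)
    (hγr : ∀ t, t0 ≤ t → γ t ∈ Set.Icc γmin γmax)
    (hI' : ∀ t, t0 ≤ t → HasDerivAt I (η * E t - γ t * I t) t)
    (hη : 0 < η) (hγmin0 : 0 < γmin) (hIm0 : 0 < Imax)
    (hcond : η * (1 - Imax) ≤ γmin * Imax)
    (hSpos : ∀ t, t0 ≤ t → 0 ≤ S t)
    (hsum : ∀ t, t0 ≤ t → S t + E t + I t ≤ 1)
    (hI0 : I t0 ≤ Imax) :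
    ∀ t, t0 ≤ t → I t ≤ Imax := by
  intro t1 ht1
  have main : ∀ ε : ℝ, 0 < ε → I t1 ≤ Imax + ε * (1 + (t1 - t0)) := by
    intro ε hε
    set g : ℝ → ℝ := fun u => Imax + ε * (1 + (u - t0)) - I u with hg
    have hgC : Continuous g := (continuous_const.add (continuous_const.mul (continuous_const.add (continuous_id.sub continuous_const)))).sub hI.continuous
    have hgb := barrier g t0 t1 hgC.continuousOn ?_ ht1 ?_
    · have := hgb t1 (Set.right_mem_Icc.mpr ht1)
      simp only [hg] at this
      linarith
    · simp only [hg]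
      linarith
    · intro t ht hgood hgt
      have ht0t : t0 ≤ t := le_of_lt ht.1
      simp only [hg] at hgt
      have hIt : I t = Imax + ε * (1 + (t - t0)) := by linarith
      have hItge : Imax + ε ≤ I t := by nlinarith
      have hItpos : 0 < I t := by linarith
      have hγt := hγr t ht0t
      have hE1 : E t ≤ 1 - I t := by
        have := hsum t ht0t
        have := hSpos t ht0t
        linarith
      have hDg : HasDerivAt g (ε - (η * E t - γ t * I t)) t := by
        have h1 : HasDerivAt (fun u : ℝ => Imax + ε * (1 + (u - t0))) ε t := by
          simpa using (((hasDerivAt_id t).sub_const t0).const_add (1:ℝ)).const_mul ε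
            |>.const_add Imax
        exact h1.sub (hI' t ht0t)
      refine ev_pos_right g t _ hDg ?_ hgt
      have f1 : η * E t ≤ η * (1 - I t) := mul_le_mul_of_nonneg_left hE1 hη.le
      have f2 : γmin * I t ≤ γ t * I t := mul_le_mul_of_nonneg_right hγt.1 hItpos.le
      have f3 : (η + γmin) * (Imax + ε) ≤ (η + γmin) * I t :=
        mul_le_mul_of_nonneg_left hItge (by positivity)
      nlinarith [mul_pos hη hε, mul_pos hγmin0 hε]
  by_contra hneg
  push_neg at hneg
  have hc : (0:ℝ) < 1 + (t1 - t0) := by linarith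
  have := main ((I t1 - Imax) / (2 * (1 + (t1 - t0))))
    (div_pos (by linarith) (by positivity))
  have hh : (I t1 - Imax) / (2 * (1 + (t1 - t0))) * (1 + (t1 - t0)) = (I t1 - Imax)/2 := by
    field_simp
  rw [hh] at this
  linarith


lemma expDeriv (c t0 t : ℝ) :
    HasDerivAt (fun u => Real.exp (-c * (u - t0))) (-c * Real.exp (-c * (t - t0))) t := by
  have h1 : HasDerivAt (fun u : ℝ => -c * (u - t0)) (-c) t := by
    simpa using ((hasDerivAt_id t).sub_const t0).const_mul (-c)
  simpa [mul_comm] using h1.exp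

lemma forward_dir
    (η βmin βmax γmin γmax Imax t0 : ℝ)
    (hη : 0 < η) (hβmin : 0 < βmin) (hβ : βmin ≤ βmax)
    (hγmin : 0 < γmin) (hγ : γmin ≤ γmax)
    (hI0 : 0 < Imax) (hI1 : Imax < 1)
    (hinv : ∀ S E I β γ : ℝ → ℝ,
        Differentiable ℝ S → Differentiable ℝ E → Differentiable ℝ I →
        (∀ t, t0 ≤ t → β t ∈ Set.Icc βmin βmax) →
        (∀ t, t0 ≤ t → γ t ∈ Set.Icc γmin γmax) →
        (∀ t, t0 ≤ t → HasDerivAt S (-(β t * S t * I t)) t) →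
        (∀ t, t0 ≤ t → HasDerivAt E (β t * S t * I t - η * E t) t) →
        (∀ t, t0 ≤ t → HasDerivAt I (η * E t - γ t * I t) t) →
        (S t0, E t0, I t0) ∈ GPiSEIR Imax →
        ∀ t, t0 ≤ t → (S t, E t, I t) ∈ GPiSEIR Imax) :
    η * (1 - Imax) ≤ γmin * Imax := by
  by_contra hlt
  push_neg at hlt
  set a : ℝ := 1 - Imax with ha
  have ha0 : 0 < a := by linarith
  set S : ℝ → ℝ := fun _ => 0 with hSdef
  set E : ℝ → ℝ := fun t => a * Real.exp (-η * (t - t0)) with hEdef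
  set β : ℝ → ℝ := fun _ => βmin with hβdef
  set γ : ℝ → ℝ := fun _ => γmin with hγdef
  have hEder : ∀ t, HasDerivAt E (-η * E t) t := by
    intro t
    have := (expDeriv η t0 t).const_mul a
    simpa [hEdef, mul_comm, mul_left_comm] using this
  have key : ∀ I : ℝ → ℝ, Differentiable ℝ I → I t0 = Imax →
      (∀ t, HasDerivAt I (η * E t - γmin * I t) t) → False := by
    intro I hIdiff hIt0 hIder
    have hmem : (S t0, E t0, I t0) ∈ GPiSEIR Imax := by
      refine ⟨le_refl 0, ?_, ?_, ?_, ?_⟩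
      · simp [hEdef]; positivity
      · rw [hIt0]; exact hI0.le
      · simp [hSdef, hEdef, hIt0, ha]
      · rw [hIt0]
    have hall := hinv S E I β γ (by fun_prop)
      (by fun_prop) hIdiff
      (fun t _ => ⟨le_refl _, hβ⟩) (fun t _ => ⟨le_refl _, hγ⟩)
      (fun t _ => by simpa [hSdef, hβdef] using hasDerivAt_const t (0:ℝ))
      (fun t _ => by
        have h := hEder t
        have : β t * S t * I t - η * E t = -η * E t := by
          simp only [hSdef, hβdef]
          ring
        rw [this]
        exact h)
      (fun t _ => hIder t)
      hmem
    have hIle : ∀ t, t0 ≤ t → I t ≤ I t0 := by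
      intro t ht
      have := (hall t ht).2.2.2.2
      rw [hIt0]
      exact this
    have hEt0 : E t0 = a := by simp [hEdef]
    have hderpos : 0 < η * E t0 - γmin * I t0 := by
      rw [hEt0, hIt0]
      linarith [hlt]
    exact no_max_of_pos_deriv I t0 _ (hIder t0) hderpos hIle
  by_cases hres : γmin = η
  · -- resonant case
    set I : ℝ → ℝ := fun t => (η * a * (t - t0) + Imax) * Real.exp (-η * (t - t0)) with hIdef
    refine key I (by fun_prop) (by simp [hIdef]) ?_
    intro t
    have h1 : HasDerivAt (fun u : ℝ => η * a * (u - t0) + Imax) (η * a) t := by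
      simpa using (((hasDerivAt_id t).sub_const t0).const_mul (η * a)).add_const Imax
    have h2 := h1.mul (expDeriv η t0 t)
    have : I t = (η * a * (t - t0) + Imax) * Real.exp (-η * (t - t0)) := rfl
    refine h2.congr_deriv (Eq.symm ?_)
    rw [hres]
    simp only [hEdef, hIdef]
    ring
  · -- non-resonant case
    have hγη : γmin - η ≠ 0 := sub_ne_zero.mpr hres
    obtain ⟨k, hkeq⟩ : ∃ k : ℝ, k * (γmin - η) = η * a :=
      ⟨η * a / (γmin - η), div_mul_cancel₀ _ hγη⟩
    set I : ℝ → ℝ := fun t => k * Real.exp (-η * (t - t0))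
      + (Imax - k) * Real.exp (-γmin * (t - t0)) with hIdef
    refine key I (by fun_prop) (by simp [hIdef]) ?_
    intro t
    have h1 := ((expDeriv η t0 t).const_mul k).add ((expDeriv γmin t0 t).const_mul (Imax - k))
    refine h1.congr_deriv (Eq.symm ?_)
    simp only [hEdef, hIdef]
    linear_combination (-(Real.exp (-η * (t - t0)))) * hkeq

/-- The MRPI of the controlled SEIR model equals `G_Π` iff
`η (1 − I_max) ≤ γ_min I_max`. -/
theorem seir_mrpi_eq_GPi_iff
    (η βmin βmax γmin γmax Imax t0 : ℝ)
    (hη : 0 < η) (hβmin : 0 < βmin) (hβ : βmin ≤ βmax)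
    (hγmin : 0 < γmin) (hγ : γmin ≤ γmax)
    (hI0 : 0 < Imax) (hI1 : Imax < 1) :
    (∀ S E I β γ : ℝ → ℝ,
        Differentiable ℝ S → Differentiable ℝ E → Differentiable ℝ I →
        (∀ t, t0 ≤ t → β t ∈ Set.Icc βmin βmax) →
        (∀ t, t0 ≤ t → γ t ∈ Set.Icc γmin γmax) →
        (∀ t, t0 ≤ t → HasDerivAt S (-(β t * S t * I t)) t) →
        (∀ t, t0 ≤ t → HasDerivAt E (β t * S t * I t - η * E t) t) →
        (∀ t, t0 ≤ t → HasDerivAt I (η * E t - γ t * I t) t) →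
        (S t0, E t0, I t0) ∈ GPiSEIR Imax →
        ∀ t, t0 ≤ t → (S t, E t, I t) ∈ GPiSEIR Imax)
      ↔ η * (1 - Imax) ≤ γmin * Imax := by
  constructor
  · intro hinv
    exact forward_dir η βmin βmax γmin γmax Imax t0 hη hβmin hβ hγmin hγ hI0 hI1 hinv
  · intro hcond S E I β γ hdS hdE hdI hβr hγr hS' hE' hI' hinit t ht
    obtain ⟨h1, h2, h3, h4, h5⟩ := hinit
    have hnn := seir_nonneg η βmin βmax γmin γmax t0 S E I β γ hdS hdE hdI hβr hγr
      hS' hE' hI' hη hβmin hγmin ⟨h1, h2, h3⟩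
    have hsum := seir_sum_le η βmin βmax γmin γmax t0 S E I β γ hdS hdE hdI hγr
      hS' hE' hI' hγmin (fun u hu => (hnn u hu).2.2) h4
    have hImx := seir_I_le η βmin βmax γmin γmax Imax t0 S E I β γ hdS hdE hdI hγr
      hI' hη hγmin hI0 hcond (fun u hu => (hnn u hu).1) hsum h5
    exact ⟨(hnn t ht).1, (hnn t ht).2.1, (hnn t ht).2.2, hsum t ht, hImx t ht⟩
end

section
/- Consider the controlled SEIR model. The following are equivalent: (i) for every point (S0, E0, I0) ∈ G_Π there exists an admissible controlled trajectory (S, E, I, β, γ) with (S(t0), E(t0), I(t0)) = (S0, E0, I0) and (S(t), E(t), I(t)) ∈ G_Π for all t ≥ t0 (i.e. the admissible set equals G_Π); (ii) η (1 − I_max) ≤ γ_max I_max. -/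
open Set Topology
open scoped NNReal

lemma seir_abs_sub_le (a b : ℝ) : |a - b| ≤ |a| + |b| := by
  calc |a - b| = |a + -b| := by ring_nf
  _ ≤ |a| + |-b| := abs_add_le _ _
  _ = |a| + |b| := by rw [abs_neg]

/-- If `f` has nonpositive derivative (within `Icc a b`) then `f t ≤ f a` on `Icc a b`. -/
lemma seir_key_mono {a b : ℝ} {f g : ℝ → ℝ}
    (hf : ∀ t ∈ Icc a b, HasDerivWithinAt f (g t) (Icc a b) t)
    (hg : ∀ t ∈ Icc a b, g t ≤ 0) :
    ∀ t ∈ Icc a b, f t ≤ f a := by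
  intro t ht
  have hA : AntitoneOn f (Icc a b) := by
    apply antitoneOn_of_hasDerivWithinAt_nonpos (convex_Icc a b)
      (fun s hs => (hf s hs).continuousWithinAt)
      (fun s hs => ((hf s (interior_subset hs)).mono interior_subset))
      (fun s hs => hg s (interior_subset hs))
  exact hA ⟨le_rfl, ht.1.trans ht.2⟩ ht ht.1

/-- Gronwall-type: if `f a ≤ 0` and `f' ≤ C f` then `f ≤ 0`. -/
lemma seir_key_nonpos {a b C : ℝ} {f g : ℝ → ℝ}
    (hf : ∀ t ∈ Icc a b, HasDerivWithinAt f (g t) (Icc a b) t)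
    (hfa : f a ≤ 0)
    (hg : ∀ t ∈ Icc a b, g t ≤ C * f t) :
    ∀ t ∈ Icc a b, f t ≤ 0 := by
  have hexp : ∀ t : ℝ, HasDerivAt (fun s => Real.exp (-C * s)) (-C * Real.exp (-C * t)) t := by
    intro t
    have h1 : HasDerivAt (fun s : ℝ => -C * s) (-C) t := by
      simpa using (hasDerivAt_id t).const_mul (-C)
    have := (Real.hasDerivAt_exp (-C * t)).comp t h1
    simpa [Function.comp_def, mul_comm] using this
  have key : ∀ t ∈ Icc a b, f t * Real.exp (-C * t) ≤ f a * Real.exp (-C * a) := by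
    apply seir_key_mono (g := fun t => g t * Real.exp (-C * t) + f t * (-C * Real.exp (-C * t)))
    · intro t ht
      exact (hf t ht).mul (hexp t).hasDerivWithinAt
    · intro t ht
      have h1 : g t - C * f t ≤ 0 := sub_nonpos.2 (hg t ht)
      have h2 : 0 < Real.exp (-C * t) := Real.exp_pos _
      nlinarith
  intro t ht
  have h1 := key t ht
  have h2 : f a * Real.exp (-C * a) ≤ 0 :=
    mul_nonpos_of_nonpos_of_nonneg hfa (Real.exp_pos _).le
  have h3 : 0 < Real.exp (-C * t) := Real.exp_pos _
  nlinarith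

/-- The function `x ↦ (min x 0)^2` is differentiable with derivative `2 * min x 0`. -/
lemma seir_hasDerivAt_minsq (x : ℝ) :
    HasDerivAt (fun y : ℝ => (min y 0) ^ 2) (2 * min x 0) x := by
  rcases lt_trichotomy x 0 with hx | hx | hx
  · have h1 : HasDerivAt (fun y : ℝ => y ^ 2) (2 * x) x := by
      simpa using hasDerivAt_pow 2 x
    have h2 : (fun y : ℝ => (min y 0) ^ 2) =ᶠ[nhds x] fun y : ℝ => y ^ 2 := by
      filter_upwards [Iio_mem_nhds hx] with y hy
      rw [min_eq_left (le_of_lt hy)]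
    rw [min_eq_left hx.le]
    exact h1.congr_of_eventuallyEq h2
  · subst hx
    rw [hasDerivAt_iff_tendsto_slope]
    simp only [min_self, ne_eq]
    have hb : ∀ y : ℝ, ‖slope (fun y : ℝ => (min y 0) ^ 2) 0 y‖ ≤ |y| := by
      intro y
      rcases le_or_gt y 0 with hy | hy
      · have : slope (fun y : ℝ => (min y 0) ^ 2) 0 y = min y 0 ^ 2 / y := by
          simp [slope_def_field, div_eq_inv_mul]
        rcases eq_or_lt_of_le hy with rfl | hy'
        · simp [slope]
        · rw [this, min_eq_left hy, Real.norm_eq_abs, abs_div, abs_of_nonpos hy,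
            abs_of_nonneg (sq_nonneg y)]
          rw [div_le_iff₀ (by linarith : (0:ℝ) < -y)]
          nlinarith
      · have : slope (fun y : ℝ => (min y 0) ^ 2) 0 y = 0 := by
          simp [slope_def_field, min_eq_right hy.le]
        rw [this]
        simp [abs_nonneg]
    have habs : Filter.Tendsto (fun y : ℝ => |y|) (nhdsWithin 0 {x | x ≠ 0}) (nhds 0) := by
      have : Filter.Tendsto (fun y : ℝ => |y|) (nhds 0) (nhds 0) := by
        simpa using (continuous_abs.tendsto (0:ℝ))
      exact this.mono_left nhdsWithin_le_nhds
    rw [mul_zero]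
    exact squeeze_zero_norm hb habs
  · have h2 : (fun y : ℝ => (min y 0) ^ 2) =ᶠ[nhds x] fun _ : ℝ => (0:ℝ) := by
      filter_upwards [Ioi_mem_nhds hx] with y hy
      rw [min_eq_right (le_of_lt hy)]
      norm_num
    rw [min_eq_right hx.le]
    simpa using (hasDerivAt_const x (0:ℝ)).congr_of_eventuallyEq h2

/-- The SEIR vector field with constant controls `β = βmin`, `γ = γmax`. -/
def seirF (η βmin γmax : ℝ) (p : ℝ × ℝ × ℝ) : ℝ × ℝ × ℝ :=
  (-(βmin * p.1 * p.2.2), βmin * p.1 * p.2.2 - η * p.2.1, η * p.2.1 - γmax * p.2.2)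

/-- Uniform time-step for the Picard-Lindelöf iteration. -/
noncomputable def seirEps (η βmin γmax : ℝ) : ℝ := 1 / (4 * βmin + 2 * η + 2 * γmax)

lemma seirK_pos {η βmin γmax : ℝ} (hη : 0 < η) (hβmin : 0 < βmin) (hγmax : 0 < γmax) :
    0 < 4 * βmin + 2 * η + 2 * γmax := by linarith

lemma seirEps_pos {η βmin γmax : ℝ} (hη : 0 < η) (hβmin : 0 < βmin) (hγmax : 0 < γmax) :
    0 < seirEps η βmin γmax :=
  div_pos one_pos (seirK_pos hη hβmin hγmax)

/-- Extract the first component of a vector-valued derivative. -/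
lemma seir_fst3 {f : ℝ → ℝ × ℝ × ℝ} {v : ℝ × ℝ × ℝ} {s : Set ℝ} {t : ℝ}
    (h : HasDerivWithinAt f v s t) :
    HasDerivWithinAt (fun u => (f u).1) v.1 s t := by
  have h2 := ((ContinuousLinearMap.fst ℝ ℝ (ℝ × ℝ)).hasFDerivAt (x := f t)).comp_hasFDerivWithinAt t h.hasFDerivWithinAt
  have h3 := h2.hasDerivWithinAt
  exact h.fst

lemma seir_snd3 {f : ℝ → ℝ × ℝ × ℝ} {v : ℝ × ℝ × ℝ} {s : Set ℝ} {t : ℝ}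
    (h : HasDerivWithinAt f v s t) :
    HasDerivWithinAt (fun u => (f u).2.1) v.2.1 s t := by
  have h2 := ((ContinuousLinearMap.snd ℝ ℝ (ℝ × ℝ)).hasFDerivAt (x := f t)).comp_hasFDerivWithinAt t h.hasFDerivWithinAt
  have h4 := ((ContinuousLinearMap.fst ℝ ℝ ℝ).hasFDerivAt (x := (f t).2)).comp_hasFDerivWithinAt t h2
  have h3 := h4.hasDerivWithinAt
  exact h.snd.fst

lemma seir_trd3 {f : ℝ → ℝ × ℝ × ℝ} {v : ℝ × ℝ × ℝ} {s : Set ℝ} {t : ℝ}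
    (h : HasDerivWithinAt f v s t) :
    HasDerivWithinAt (fun u => (f u).2.2) v.2.2 s t := by
  have h2 := ((ContinuousLinearMap.snd ℝ ℝ (ℝ × ℝ)).hasFDerivAt (x := f t)).comp_hasFDerivWithinAt t h.hasFDerivWithinAt
  have h4 := ((ContinuousLinearMap.snd ℝ ℝ ℝ).hasFDerivAt (x := (f t).2)).comp_hasFDerivWithinAt t h2
  have h3 := h4.hasDerivWithinAt
  exact h.snd.snd

lemma seir_coord_bounds {x₀ x : ℝ × ℝ × ℝ} (h0 : ‖x₀‖ ≤ 1) (hx : x ∈ Metric.closedBall x₀ 1) :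
    |x.1| ≤ 2 ∧ |x.2.1| ≤ 2 ∧ |x.2.2| ≤ 2 := by
  have hd : dist x x₀ ≤ 1 := Metric.mem_closedBall.1 hx
  have hdf : dist x.1 x₀.1 ≤ dist x x₀ := by rw [Prod.dist_eq]; exact le_max_left _ _
  have hds : dist x.2 x₀.2 ≤ dist x x₀ := by rw [Prod.dist_eq]; exact le_max_right _ _
  have hdf2 : dist x.2.1 x₀.2.1 ≤ dist x.2 x₀.2 := by rw [Prod.dist_eq]; exact le_max_left _ _
  have hds2 : dist x.2.2 x₀.2.2 ≤ dist x.2 x₀.2 := by rw [Prod.dist_eq]; exact le_max_right _ _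
  have h1 : dist x.1 x₀.1 ≤ 1 := le_trans hdf hd
  have h2 : dist x.2 x₀.2 ≤ 1 := le_trans hds hd
  have h21 : dist x.2.1 x₀.2.1 ≤ 1 := le_trans (le_trans hdf2 hds) hd
  have h22 : dist x.2.2 x₀.2.2 ≤ 1 := le_trans (le_trans hds2 hds) hd
  have n1 : |x₀.1| ≤ 1 := le_trans (norm_fst_le x₀) h0
  have n2 : ‖x₀.2‖ ≤ 1 := le_trans (norm_snd_le x₀) h0
  have n21 : |x₀.2.1| ≤ 1 := le_trans (norm_fst_le x₀.2) n2
  have n22 : |x₀.2.2| ≤ 1 := le_trans (norm_snd_le x₀.2) n2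
  rw [Real.dist_eq] at h1 h21 h22
  refine ⟨?_, ?_, ?_⟩
  · calc |x.1| = |(x.1 - x₀.1) + x₀.1| := by ring_nf
    _ ≤ |x.1 - x₀.1| + |x₀.1| := abs_add_le _ _
    _ ≤ 2 := by linarith
  · calc |x.2.1| = |(x.2.1 - x₀.2.1) + x₀.2.1| := by ring_nf
    _ ≤ |x.2.1 - x₀.2.1| + |x₀.2.1| := abs_add_le _ _
    _ ≤ 2 := by linarith
  · calc |x.2.2| = |(x.2.2 - x₀.2.2) + x₀.2.2| := by ring_nf
    _ ≤ |x.2.2 - x₀.2.2| + |x₀.2.2| := abs_add_le _ _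
    _ ≤ 2 := by linarith

lemma seir_quad_est {b x1 x3 y1 y3 d : ℝ} (hb : 0 ≤ b) (h1 : |x1| ≤ 2) (h3 : |y3| ≤ 2)
    (d1 : |x1 - y1| ≤ d) (d3 : |x3 - y3| ≤ d) :
    |b * x1 * x3 - b * y1 * y3| ≤ 4 * b * d := by
  have e0 : b * x1 * x3 - b * y1 * y3 = b * (x1 * (x3 - y3)) + b * (y3 * (x1 - y1)) := by ring
  calc |b * x1 * x3 - b * y1 * y3| ≤ |b * (x1 * (x3 - y3))| + |b * (y3 * (x1 - y1))| := by
        rw [e0]; exact abs_add_le _ _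
  _ = b * (|x1| * |x3 - y3|) + b * (|y3| * |x1 - y1|) := by
        rw [abs_mul, abs_mul, abs_mul, abs_mul, abs_of_nonneg hb]
  _ ≤ 4 * b * d := by
        have hd3 : (0:ℝ) ≤ |x3 - y3| := abs_nonneg _
        have hd1 : (0:ℝ) ≤ |x1 - y1| := abs_nonneg _
        have hx1 : (0:ℝ) ≤ |x1| := abs_nonneg _
        have hy3 : (0:ℝ) ≤ |y3| := abs_nonneg _
        have t1 : |x1| * |x3 - y3| ≤ 2 * d := mul_le_mul h1 d3 hd3 (by norm_num)
        have t2 : |y3| * |x1 - y1| ≤ 2 * d := mul_le_mul h3 d1 hd1 (by norm_num)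
        nlinarith [mul_le_mul_of_nonneg_left t1 hb, mul_le_mul_of_nonneg_left t2 hb]

/-- Local existence of solutions to the SEIR ODE, with uniform step size. -/
lemma seir_local {η βmin γmax : ℝ} (hη : 0 < η) (hβmin : 0 < βmin) (hγmax : 0 < γmax)
    (a : ℝ) (x₀ : ℝ × ℝ × ℝ) (hx₀ : ‖x₀‖ ≤ 1) :
    ∃ f : ℝ → ℝ × ℝ × ℝ,
      f a = x₀ ∧ (∀ t, t ≤ a → f t = x₀) ∧
      (∀ t, a + seirEps η βmin γmax ≤ t → f t = f (a + seirEps η βmin γmax)) ∧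
      (∀ t ∈ Icc a (a + seirEps η βmin γmax),
        HasDerivWithinAt f (seirF η βmin γmax (f t)) (Icc a (a + seirEps η βmin γmax)) t) ∧
      (∀ t, dist (f t) x₀ ≤ 1) := by
  obtain ⟨K, hKdef⟩ : ∃ K : ℝ, K = 4 * βmin + 2 * η + 2 * γmax := ⟨_, rfl⟩
  have hK : 0 < K := hKdef ▸ seirK_pos hη hβmin hγmax
  obtain ⟨ε, hεdef⟩ : ∃ ε : ℝ, ε = seirEps η βmin γmax := ⟨_, rfl⟩
  rw [← hεdef]
  have hε : 0 < ε := hεdef ▸ seirEps_pos hη hβmin hγmax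
  have hKε : K * ε = 1 := by
    rw [hεdef, seirEps, hKdef]
    have := seirK_pos hη hβmin hγmax
    field_simp
  have hcoe : ((K.toNNReal : ℝ≥0) : ℝ) = K := Real.coe_toNNReal _ hK.le
  have haε : a ≤ a + ε := by linarith
  -- the Picard-Lindelöf data
  have hpl : IsPicardLindelof (fun _ : ℝ => seirF η βmin γmax)
      (⟨a, left_mem_Icc.2 haε⟩ : Icc a (a + ε)) x₀
      (1 : ℝ≥0) (0 : ℝ≥0) K.toNNReal (K.toNNReal : ℝ≥0) := by
    constructor
    · intro t _
      rw [lipschitzOnWith_iff_dist_le_mul]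
      intro x hx y hy
      obtain ⟨bx1, bx2, bx3⟩ := seir_coord_bounds hx₀ hx
      obtain ⟨by1, by2, by3⟩ := seir_coord_bounds hx₀ hy
      set d : ℝ := dist x y with hd
      have c1 : dist x.1 y.1 ≤ d := by rw [hd, Prod.dist_eq]; exact le_max_left _ _
      have c2' : dist x.2 y.2 ≤ d := by rw [hd, Prod.dist_eq]; exact le_max_right _ _
      have c2 : dist x.2.1 y.2.1 ≤ d :=
        le_trans (by rw [Prod.dist_eq]; exact le_max_left _ _) c2'
      have c3 : dist x.2.2 y.2.2 ≤ d :=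
        le_trans (by rw [Prod.dist_eq]; exact le_max_right _ _) c2'
      rw [Real.dist_eq] at c1 c2 c3
      have hquad : |βmin * x.1 * x.2.2 - βmin * y.1 * y.2.2| ≤ 4 * βmin * d :=
        seir_quad_est hβmin.le bx1 by3 c1 c3
      rw [hcoe]
      rw [Prod.dist_eq, Prod.dist_eq]
      have goal1 : dist (seirF η βmin γmax x).1 (seirF η βmin γmax y).1 ≤ K * d := by
        rw [Real.dist_eq]
        simp only [seirF]
        have : -(βmin * x.1 * x.2.2) - -(βmin * y.1 * y.2.2)
            = -(βmin * x.1 * x.2.2 - βmin * y.1 * y.2.2) := by ring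
        rw [this, abs_neg]
        have hdpos : 0 ≤ d := dist_nonneg
        rw [hKdef]
        nlinarith [abs_nonneg (x.2.1 - y.2.1)]
      have goal2 : dist (seirF η βmin γmax x).2.1 (seirF η βmin γmax y).2.1 ≤ K * d := by
        rw [Real.dist_eq]
        simp only [seirF]
        have e : βmin * x.1 * x.2.2 - η * x.2.1 - (βmin * y.1 * y.2.2 - η * y.2.1)
            = (βmin * x.1 * x.2.2 - βmin * y.1 * y.2.2) + (-η) * (x.2.1 - y.2.1) := by ring
        rw [e]
        calc |(βmin * x.1 * x.2.2 - βmin * y.1 * y.2.2) + (-η) * (x.2.1 - y.2.1)|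
            ≤ |βmin * x.1 * x.2.2 - βmin * y.1 * y.2.2| + |(-η) * (x.2.1 - y.2.1)| := abs_add_le _ _
        _ ≤ 4 * βmin * d + η * d := by
            rw [abs_mul, abs_neg, abs_of_nonneg hη.le]
            have := mul_le_mul_of_nonneg_left c2 hη.le
            linarith
        _ ≤ K * d := by
            have hdpos : 0 ≤ d := dist_nonneg
            rw [hKdef]
            nlinarith
      have goal3 : dist (seirF η βmin γmax x).2.2 (seirF η βmin γmax y).2.2 ≤ K * d := by
        rw [Real.dist_eq]
        simp only [seirF]
        have e : η * x.2.1 - γmax * x.2.2 - (η * y.2.1 - γmax * y.2.2)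
            = η * (x.2.1 - y.2.1) + (-γmax) * (x.2.2 - y.2.2) := by ring
        rw [e]
        calc |η * (x.2.1 - y.2.1) + (-γmax) * (x.2.2 - y.2.2)|
            ≤ |η * (x.2.1 - y.2.1)| + |(-γmax) * (x.2.2 - y.2.2)| := abs_add_le _ _
        _ ≤ η * d + γmax * d := by
            rw [abs_mul, abs_mul, abs_neg, abs_of_nonneg hη.le, abs_of_nonneg hγmax.le]
            have h1 := mul_le_mul_of_nonneg_left c2 hη.le
            have h2 := mul_le_mul_of_nonneg_left c3 hγmax.le
            linarith
        _ ≤ K * d := by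
            have hdpos : 0 ≤ d := dist_nonneg
            rw [hKdef]
            nlinarith
      exact max_le goal1 (max_le goal2 goal3)
    · intro x _
      exact continuousOn_const
    · intro t _ x hx
      obtain ⟨bx1, bx2, bx3⟩ := seir_coord_bounds hx₀ hx
      rw [hcoe]
      rw [Prod.norm_def, Prod.norm_def]
      have babs : |βmin * x.1 * x.2.2| ≤ 4 * βmin := by
        rw [abs_mul, abs_mul, abs_of_nonneg hβmin.le]
        have h4 : |x.1| * |x.2.2| ≤ 2 * 2 :=
          mul_le_mul bx1 bx3 (abs_nonneg _) (by norm_num)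
        nlinarith [mul_le_mul_of_nonneg_left h4 hβmin.le, abs_nonneg x.1, abs_nonneg x.2.2]
      have g1 : ‖(seirF η βmin γmax x).1‖ ≤ K := by
        simp only [seirF, Real.norm_eq_abs, abs_neg]
        rw [hKdef]
        nlinarith
      have g2 : ‖(seirF η βmin γmax x).2.1‖ ≤ K := by
        simp only [seirF, Real.norm_eq_abs]
        have he : |η * x.2.1| = η * |x.2.1| := by rw [abs_mul, abs_of_nonneg hη.le]
        calc |βmin * x.1 * x.2.2 - η * x.2.1| ≤ |βmin * x.1 * x.2.2| + |η * x.2.1| := seir_abs_sub_le _ _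
        _ ≤ K := by
            rw [he, hKdef]
            nlinarith
      have g3 : ‖(seirF η βmin γmax x).2.2‖ ≤ K := by
        simp only [seirF, Real.norm_eq_abs]
        have he : |η * x.2.1| = η * |x.2.1| := by rw [abs_mul, abs_of_nonneg hη.le]
        have hg : |γmax * x.2.2| = γmax * |x.2.2| := by rw [abs_mul, abs_of_nonneg hγmax.le]
        calc |η * x.2.1 - γmax * x.2.2| ≤ |η * x.2.1| + |γmax * x.2.2| := seir_abs_sub_le _ _
        _ ≤ K := by
            rw [he, hg, hKdef]
            nlinarith
      exact max_le g1 (max_le g2 g3)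
    · rw [hcoe]
      have : max (a + ε - a) (a - a) = ε := by
        rw [max_eq_left (by linarith)]
        ring
      show K * max (a + ε - a) (a - a) ≤ _
      rw [this, hKε]
      norm_num
  -- the Picard-Lindelöf structure and its fixed point
  obtain ⟨fx, hfx⟩ := ODE.FunSpace.exists_isFixedPt_next hpl (Metric.mem_closedBall_self (by simp))
  have h0 : fx ⟨a, left_mem_Icc.2 haε⟩ = x₀ := by
    rw [← hfx, ODE.FunSpace.next_apply₀]
  refine ⟨fx.compProj, ?_, ?_, ?_, ?_, ?_⟩
  · rw [ODE.FunSpace.compProj_of_mem (left_mem_Icc.2 haε)]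
    exact h0
  · intro t ht
    rw [ODE.FunSpace.compProj_apply, Set.projIcc_of_le_left _ ht]
    exact h0
  · intro t ht
    rw [ODE.FunSpace.compProj_apply, ODE.FunSpace.compProj_apply, Set.projIcc_of_right_le _ ht,
      Set.projIcc_of_right_le _ le_rfl]
  · intro t ht
    apply ODE.hasDerivWithinAt_picard_Icc (left_mem_Icc.2 haε) hpl.continuousOn_uncurry
      fx.continuous_compProj.continuousOn (fun _ _ ↦ fx.compProj_mem_closedBall hpl.mul_max_le)
      x₀ ht |>.congr_of_mem _ ht
    intro t' ht'
    nth_rw 1 [← hfx]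
    rw [ODE.FunSpace.compProj_of_mem ht', ODE.FunSpace.next_apply]
  · intro t
    have := fx.compProj_mem_closedBall hpl.mul_max_le (t := t)
    simpa using this

lemma seir_norm_le_one_of_mem {Imax : ℝ} (hImax : Imax ≤ 1) {p : ℝ × ℝ × ℝ}
    (hp : p ∈ GPiSEIR Imax) : ‖p‖ ≤ 1 := by
  obtain ⟨h1, h2, h3, h4, h5⟩ := hp
  rw [Prod.norm_def, Prod.norm_def]
  have e1 : ‖p.1‖ ≤ 1 := by rw [Real.norm_eq_abs, abs_of_nonneg h1]; linarith
  have e2 : ‖p.2.1‖ ≤ 1 := by rw [Real.norm_eq_abs, abs_of_nonneg h2]; linarith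
  have e3 : ‖p.2.2‖ ≤ 1 := by rw [Real.norm_eq_abs, abs_of_nonneg h3]; linarith
  exact max_le e1 (max_le e2 e3)

lemma seir_stage1_bound {βmin S I : ℝ} (hβ : 0 < βmin) (hI : |I| ≤ 2) :
    2 * min S 0 * (-(βmin * S * I)) ≤ 4 * βmin * (min S 0) ^ 2 := by
  obtain ⟨M, hM⟩ : ∃ M : ℝ, M = min S 0 := ⟨_, rfl⟩
  rw [← hM]
  have hMS : M * S = M ^ 2 := by
    rcases le_or_gt S 0 with h | h
    · rw [hM, min_eq_left h]; ring
    · rw [hM, min_eq_right h.le]; ring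
  have e : 2 * M * (-(βmin * S * I)) = 2 * βmin * M ^ 2 * (-I) := by
    have : 2 * M * (-(βmin * S * I)) = 2 * βmin * (M * S) * (-I) := by ring
    rw [this, hMS]
  rw [e]
  have hsq : 0 ≤ βmin * M ^ 2 := mul_nonneg hβ.le (sq_nonneg _)
  have h2 : -I ≤ 2 := by have := abs_le.1 hI; linarith
  nlinarith [mul_le_mul_of_nonneg_left h2 hsq]

lemma seir_stage2_bound {βmin η γmax S E I : ℝ} (hβ : 0 < βmin) (hη : 0 < η) (hγ : 0 < γmax)
    (hS0 : 0 ≤ S) (hS2 : S ≤ 2) (hE2 : |E| ≤ 2) (hI2 : |I| ≤ 2) :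
    2 * min E 0 * (βmin * S * I - η * E) + 2 * min I 0 * (η * E - γmax * I)
      ≤ (8 * βmin + 4 * η + 4 * γmax) * ((min E 0) ^ 2 + (min I 0) ^ 2) := by
  obtain ⟨ME, hME⟩ : ∃ M : ℝ, M = min E 0 := ⟨_, rfl⟩
  obtain ⟨MI, hMI⟩ : ∃ M : ℝ, M = min I 0 := ⟨_, rfl⟩
  rw [← hME, ← hMI]
  have hMEnp : ME ≤ 0 := hME ▸ min_le_right _ _
  have hMInp : MI ≤ 0 := hMI ▸ min_le_right _ _
  have hMEE : ME * E = ME ^ 2 := by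
    rcases le_or_gt E 0 with h | h
    · rw [hME, min_eq_left h]; ring
    · rw [hME, min_eq_right h.le]; ring
  have hMII : MI * I = MI ^ 2 := by
    rcases le_or_gt I 0 with h | h
    · rw [hMI, min_eq_left h]; ring
    · rw [hMI, min_eq_right h.le]; ring
  have keyE : 2 * ME * (βmin * S * I) ≤ 2 * βmin * (ME ^ 2 + MI ^ 2) := by
    rcases le_or_gt 0 I with h | h
    · have h1 : ME * (S * I) ≤ 0 :=
        mul_nonpos_of_nonpos_of_nonneg hMEnp (mul_nonneg hS0 h)
      have e : 2 * ME * (βmin * S * I) = 2 * βmin * (ME * (S * I)) := by ring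
      rw [e]
      nlinarith [sq_nonneg ME, sq_nonneg MI]
    · have hMIeq : MI = I := by rw [hMI, min_eq_left h.le]
      have h1 : (0:ℝ) ≤ ME * I := by
        rw [← hMIeq]
        nlinarith [mul_nonneg (neg_nonneg.2 hMEnp) (neg_nonneg.2 hMInp)]
      have h2 : S * (ME * I) ≤ 2 * (ME * I) := by nlinarith
      have e : 2 * ME * (βmin * S * I) = 2 * βmin * (S * (ME * I)) := by ring
      rw [e]
      have h3 : 2 * βmin * (S * (ME * I)) ≤ 2 * βmin * (2 * (ME * I)) := by
        apply mul_le_mul_of_nonneg_left h2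
        positivity
      have h4 : 2 * βmin * (2 * (ME * I)) ≤ 2 * βmin * (ME ^ 2 + MI ^ 2) := by
        rw [← hMIeq] at h1 ⊢
        nlinarith [sq_nonneg (ME - MI), hβ.le]
      linarith
  have keyI : 2 * MI * (η * E) ≤ 2 * η * (ME ^ 2 + MI ^ 2) := by
    rcases le_or_gt 0 E with h | h
    · have h1 : MI * E ≤ 0 := mul_nonpos_of_nonpos_of_nonneg hMInp h
      have e : 2 * MI * (η * E) = 2 * η * (MI * E) := by ring
      rw [e]
      nlinarith [sq_nonneg ME, sq_nonneg MI]
    · have hMEeq : ME = E := by rw [hME, min_eq_left h.le]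
      have e : 2 * MI * (η * E) = 2 * η * (MI * ME) := by rw [hMEeq]; ring
      rw [e]
      nlinarith [sq_nonneg (ME - MI), sq_nonneg (ME + MI), hη.le, sq_nonneg ME, sq_nonneg MI]
  have eE : 2 * ME * (βmin * S * I - η * E)
      = 2 * ME * (βmin * S * I) - 2 * η * ME ^ 2 := by
    have : 2 * ME * (βmin * S * I - η * E) = 2 * ME * (βmin * S * I) - 2 * η * (ME * E) := by
      ring
    rw [this, hMEE]
  have eI : 2 * MI * (η * E - γmax * I) = 2 * MI * (η * E) - 2 * γmax * MI ^ 2 := by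
    have : 2 * MI * (η * E - γmax * I) = 2 * MI * (η * E) - 2 * γmax * (MI * I) := by ring
    rw [this, hMII]
  rw [eE, eI]
  nlinarith [sq_nonneg ME, sq_nonneg MI, hβ.le, hη.le, hγ.le,
    mul_nonneg hβ.le (sq_nonneg ME), mul_nonneg hβ.le (sq_nonneg MI),
    mul_nonneg hη.le (sq_nonneg ME), mul_nonneg hη.le (sq_nonneg MI),
    mul_nonneg hγ.le (sq_nonneg ME), mul_nonneg hγ.le (sq_nonneg MI)]

/-- Invariance of `G_Π` under the SEIR flow with `β = βmin`, `γ = γmax`. -/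
lemma seir_invariant {η βmin γmax Imax : ℝ}
    (hη : 0 < η) (hβmin : 0 < βmin) (hγmax : 0 < γmax)
    (hImax0 : 0 < Imax) (hImax1 : Imax < 1)
    (hcond : η * (1 - Imax) ≤ γmax * Imax)
    {a b : ℝ} (hab : a ≤ b) {f : ℝ → ℝ × ℝ × ℝ}
    (hf : ∀ t ∈ Icc a b, HasDerivWithinAt f (seirF η βmin γmax (f t)) (Icc a b) t)
    (hbd : ∀ t ∈ Icc a b, dist (f t) (f a) ≤ 1)
    (ha : f a ∈ GPiSEIR Imax) :
    ∀ t ∈ Icc a b, f t ∈ GPiSEIR Imax := by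
  obtain ⟨ha1, ha2, ha3, ha4, ha5⟩ := ha
  have hanorm : ‖f a‖ ≤ 1 := seir_norm_le_one_of_mem hImax1.le ⟨ha1, ha2, ha3, ha4, ha5⟩
  have hbS : ∀ t ∈ Icc a b, |(f t).1| ≤ 2 := fun t ht =>
    (seir_coord_bounds hanorm (Metric.mem_closedBall.2 (hbd t ht))).1
  have hbE : ∀ t ∈ Icc a b, |(f t).2.1| ≤ 2 := fun t ht =>
    (seir_coord_bounds hanorm (Metric.mem_closedBall.2 (hbd t ht))).2.1
  have hbI : ∀ t ∈ Icc a b, |(f t).2.2| ≤ 2 := fun t ht =>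
    (seir_coord_bounds hanorm (Metric.mem_closedBall.2 (hbd t ht))).2.2
  have hS : ∀ t ∈ Icc a b,
      HasDerivWithinAt (fun u => (f u).1) (-(βmin * (f t).1 * (f t).2.2)) (Icc a b) t :=
    fun t ht => seir_fst3 (hf t ht)
  have hE : ∀ t ∈ Icc a b,
      HasDerivWithinAt (fun u => (f u).2.1)
        (βmin * (f t).1 * (f t).2.2 - η * (f t).2.1) (Icc a b) t :=
    fun t ht => seir_snd3 (hf t ht)
  have hI : ∀ t ∈ Icc a b,
      HasDerivWithinAt (fun u => (f u).2.2)
        (η * (f t).2.1 - γmax * (f t).2.2) (Icc a b) t :=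
    fun t ht => seir_trd3 (hf t ht)
  -- Stage 1 : S ≥ 0
  have hSnn : ∀ t ∈ Icc a b, 0 ≤ (f t).1 := by
    have key : ∀ t ∈ Icc a b, (min ((f t).1) 0) ^ 2 ≤ 0 := by
      apply seir_key_nonpos (C := 4 * βmin)
        (g := fun t => 2 * min ((f t).1) 0 * (-(βmin * (f t).1 * (f t).2.2)))
      · intro t ht
        exact (seir_hasDerivAt_minsq ((f t).1)).comp_hasDerivWithinAt t (hS t ht)
      · rw [min_eq_right ha1]
        norm_num
      · intro t ht
        exact seir_stage1_bound hβmin (hbI t ht)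
    intro t ht
    have h2 : (min ((f t).1) 0) ^ 2 = 0 := le_antisymm (key t ht) (sq_nonneg _)
    have h3 : min ((f t).1) 0 = 0 := pow_eq_zero_iff (by norm_num) |>.1 h2
    rcases le_or_gt 0 ((f t).1) with h | h
    · exact h
    · rw [min_eq_left h.le] at h3; linarith
  -- Stage 2 : E ≥ 0 and I ≥ 0
  have hEInn : ∀ t ∈ Icc a b, 0 ≤ (f t).2.1 ∧ 0 ≤ (f t).2.2 := by
    have key : ∀ t ∈ Icc a b, (min ((f t).2.1) 0) ^ 2 + (min ((f t).2.2) 0) ^ 2 ≤ 0 := by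
      apply seir_key_nonpos (C := 8 * βmin + 4 * η + 4 * γmax)
        (g := fun t => 2 * min ((f t).2.1) 0 * (βmin * (f t).1 * (f t).2.2 - η * (f t).2.1)
          + 2 * min ((f t).2.2) 0 * (η * (f t).2.1 - γmax * (f t).2.2))
      · intro t ht
        exact ((seir_hasDerivAt_minsq ((f t).2.1)).comp_hasDerivWithinAt t (hE t ht)).add
          ((seir_hasDerivAt_minsq ((f t).2.2)).comp_hasDerivWithinAt t (hI t ht))
      · rw [min_eq_right ha2, min_eq_right ha3]
        norm_num
      · intro t ht
        exact seir_stage2_bound hβmin hη hγmax (hSnn t ht) (abs_le.1 (hbS t ht)).2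
          (hbE t ht) (hbI t ht)
    intro t ht
    have h1 := key t ht
    have sE := sq_nonneg (min ((f t).2.1) 0)
    have sI := sq_nonneg (min ((f t).2.2) 0)
    have h2 : (min ((f t).2.1) 0) ^ 2 = 0 := by linarith
    have h3 : (min ((f t).2.2) 0) ^ 2 = 0 := by linarith
    constructor
    · have h4 : min ((f t).2.1) 0 = 0 := pow_eq_zero_iff (by norm_num) |>.1 h2
      rcases le_or_gt 0 ((f t).2.1) with h | h
      · exact h
      · rw [min_eq_left h.le] at h4; linarith
    · have h4 : min ((f t).2.2) 0 = 0 := pow_eq_zero_iff (by norm_num) |>.1 h3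
      rcases le_or_gt 0 ((f t).2.2) with h | h
      · exact h
      · rw [min_eq_left h.le] at h4; linarith
  -- Stage 3 : S + E + I ≤ 1
  have hsum : ∀ t ∈ Icc a b, (f t).1 + (f t).2.1 + (f t).2.2 ≤ 1 := by
    have key : ∀ t ∈ Icc a b,
        (f t).1 + (f t).2.1 + (f t).2.2 ≤ (f a).1 + (f a).2.1 + (f a).2.2 := by
      apply seir_key_mono (g := fun t => -(γmax * (f t).2.2))
      · intro t ht
        have hd := ((hS t ht).add (hE t ht)).add (hI t ht)
        have e : -(βmin * (f t).1 * (f t).2.2) + (βmin * (f t).1 * (f t).2.2 - η * (f t).2.1)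
            + (η * (f t).2.1 - γmax * (f t).2.2) = -(γmax * (f t).2.2) := by ring
        rw [e] at hd
        exact hd
      · intro t ht
        have h1 := (hEInn t ht).2
        have h2 : 0 ≤ γmax * (f t).2.2 := mul_nonneg hγmax.le h1
        linarith
    intro t ht
    exact le_trans (key t ht) ha4
  -- Stage 4 : I ≤ Imax
  have hImaxI : ∀ t ∈ Icc a b, (f t).2.2 ≤ Imax := by
    obtain ⟨lam, hlam⟩ : ∃ lam : ℝ, lam = η + γmax := ⟨_, rfl⟩
    have hlampos : 0 < lam := by rw [hlam]; linarith
    obtain ⟨Kq, hKq⟩ : ∃ Kq : ℝ, Kq = η / lam := ⟨_, rfl⟩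
    have hKqImax : Kq ≤ Imax := by
      rw [hKq, div_le_iff₀ hlampos, hlam]
      nlinarith
    have hlamKq : lam * Kq = η := by
      rw [hKq]
      field_simp
    have hexp : ∀ t : ℝ, HasDerivAt (fun s => Real.exp (lam * s)) (lam * Real.exp (lam * t)) t := by
      intro t
      have h1 : HasDerivAt (fun s : ℝ => lam * s) lam t := by
        simpa using (hasDerivAt_id t).const_mul lam
      have := (Real.hasDerivAt_exp (lam * t)).comp t h1
      simpa [Function.comp_def, mul_comm] using this
    have key : ∀ t ∈ Icc a b,
        ((f t).2.2 - Kq) * Real.exp (lam * t) ≤ ((f a).2.2 - Kq) * Real.exp (lam * a) := by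
      apply seir_key_mono (g := fun t => (η * (f t).2.1 - γmax * (f t).2.2) * Real.exp (lam * t)
        + ((f t).2.2 - Kq) * (lam * Real.exp (lam * t)))
      · intro t ht
        exact ((hI t ht).sub_const Kq).mul (hexp t).hasDerivWithinAt
      · intro t ht
        have hsum' := hsum t ht
        have hSnn' := hSnn t ht
        have hepos : 0 < Real.exp (lam * t) := Real.exp_pos _
        have e : (η * (f t).2.1 - γmax * (f t).2.2) * Real.exp (lam * t)
            + ((f t).2.2 - Kq) * (lam * Real.exp (lam * t))
            = (η * (f t).2.1 - γmax * (f t).2.2 + lam * (f t).2.2 - lam * Kq)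
              * Real.exp (lam * t) := by ring
        rw [e, hlamKq, hlam]
        have e2 : η * (f t).2.1 - γmax * (f t).2.2 + (η + γmax) * (f t).2.2 - η
            = η * ((f t).2.1 + (f t).2.2 - 1) := by ring
        rw [e2]
        have h5 : (f t).2.1 + (f t).2.2 - 1 ≤ 0 := by linarith
        have h6 : η * ((f t).2.1 + (f t).2.2 - 1) ≤ 0 :=
          mul_nonpos_of_nonneg_of_nonpos hη.le h5
        exact mul_nonpos_of_nonpos_of_nonneg h6 (Real.exp_pos _).le
    intro t ht
    have h1 := key t ht
    rcases le_or_gt ((f t).2.2) Kq with h | h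
    · linarith
    · have hta : a ≤ t := ht.1
      have he1 : Real.exp (lam * a) ≤ Real.exp (lam * t) := by
        apply Real.exp_le_exp.2
        nlinarith
      have hepos : 0 < Real.exp (lam * a) := Real.exp_pos _
      have h2 : ((f t).2.2 - Kq) * Real.exp (lam * a) ≤ ((f t).2.2 - Kq) * Real.exp (lam * t) := by
        apply mul_le_mul_of_nonneg_left he1
        linarith
      have h3 : (f t).2.2 - Kq ≤ (f a).2.2 - Kq :=
        le_of_mul_le_mul_right (le_trans h2 h1) hepos
      linarith
  intro t ht
  exact ⟨hSnn t ht, (hEInn t ht).1, (hEInn t ht).2, hsum t ht, hImaxI t ht⟩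

lemma seir_hasDerivWithinAt_of_nmem_closure {f : ℝ → ℝ × ℝ × ℝ} {s : Set ℝ} {x : ℝ}
    (h : x ∉ closure s) (v : ℝ × ℝ × ℝ) : HasDerivWithinAt f v s x := by
  rw [hasDerivWithinAt_iff_tendsto_slope]
  have h1 : 𝓝[s] x = ⊥ := by
    rw [mem_closure_iff_nhdsWithin_neBot] at h
    exact Filter.not_neBot.1 h
  have h2 : 𝓝[s \ {x}] x = ⊥ :=
    le_bot_iff.1 (le_trans (nhdsWithin_mono x diff_subset) (le_of_eq h1))
  rw [h2]
  exact Filter.tendsto_bot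

lemma seir_hasDerivWithinAt_singleton (f : ℝ → ℝ × ℝ × ℝ) (x : ℝ) (v : ℝ × ℝ × ℝ) :
    HasDerivWithinAt f v {x} x := by
  rw [hasDerivWithinAt_iff_tendsto_slope]
  have : ({x} : Set ℝ) \ {x} = ∅ := by simp
  rw [this]
  rw [nhdsWithin_empty]
  exact Filter.tendsto_bot

/-- One-step extension of a solution. -/
lemma seir_step {η βmin γmax Imax : ℝ}
    (hη : 0 < η) (hβmin : 0 < βmin) (hγmax : 0 < γmax)
    (hImax0 : 0 < Imax) (hImax1 : Imax < 1)
    (hcond : η * (1 - Imax) ≤ γmax * Imax)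
    {a b : ℝ} (hab : a ≤ b) {t0 : ℝ} (ht0 : t0 ≤ a) {x₀ : ℝ × ℝ × ℝ}
    {f : ℝ → ℝ × ℝ × ℝ}
    (hf1 : f t0 = x₀) (hf2 : ∀ t, t ≤ t0 → f t = x₀)
    (hf3 : ∀ t, a ≤ t → f t = f a)
    (hf4 : ∀ t ∈ Icc t0 a, HasDerivWithinAt f (seirF η βmin γmax (f t)) (Icc t0 a) t)
    (hf5 : ∀ t ∈ Icc t0 a, f t ∈ GPiSEIR Imax)
    (hb : b = a + seirEps η βmin γmax) :
    ∃ g : ℝ → ℝ × ℝ × ℝ,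
      g t0 = x₀ ∧ (∀ t, t ≤ t0 → g t = x₀) ∧ (∀ t, b ≤ t → g t = g b) ∧
      (∀ t ∈ Icc t0 b, HasDerivWithinAt g (seirF η βmin γmax (g t)) (Icc t0 b) t) ∧
      (∀ t ∈ Icc t0 b, g t ∈ GPiSEIR Imax) ∧
      (∀ t, t ≤ a → g t = f t) := by
  have hε : 0 < seirEps η βmin γmax := seirEps_pos hη hβmin hγmax
  have hamem : a ∈ Icc t0 a := right_mem_Icc.2 ht0
  have hfaG : f a ∈ GPiSEIR Imax := hf5 a hamem
  have hfanorm : ‖f a‖ ≤ 1 := seir_norm_le_one_of_mem hImax1.le hfaG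
  obtain ⟨h, h1, h2, h3, h4, h5⟩ := seir_local hη hβmin hγmax a (f a) hfanorm
  rw [← hb] at h3 h4
  have hab' : a ≤ b := by rw [hb]; linarith
  -- the glued function
  obtain ⟨g, hgdef⟩ : ∃ g : ℝ → ℝ × ℝ × ℝ, g = fun t => f t + h t - f a := ⟨_, rfl⟩
  have hgl : ∀ t, t ≤ a → g t = f t := by
    intro t ht
    rw [hgdef]
    show f t + h t - f a = f t
    rw [h2 t ht]
    abel
  have hgr : ∀ t, a ≤ t → g t = h t := by
    intro t ht
    rw [hgdef]
    show f t + h t - f a = h t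
    rw [hf3 t ht]
    abel
  -- invariance for h on [a, b]
  have hinv : ∀ t ∈ Icc a b, h t ∈ GPiSEIR Imax := by
    apply seir_invariant hη hβmin hγmax hImax0 hImax1 hcond hab' h4
    · intro t _
      rw [h1]
      exact h5 t
    · rw [h1]; exact hfaG
  refine ⟨g, ?_, ?_, ?_, ?_, ?_, hgl⟩
  · rw [hgl t0 ht0]; exact hf1
  · intro t ht; rw [hgl t (le_trans ht ht0)]; exact hf2 t ht
  · intro t ht
    rw [hgr t (le_trans hab' ht), hgr b hab']
    exact h3 t ht
  · intro t ht
    have hset : Icc t0 a ∪ Icc a b = Icc t0 b := Icc_union_Icc_eq_Icc ht0 hab'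
    have hleft : HasDerivWithinAt g (seirF η βmin γmax (g t)) (Icc t0 a) t := by
      rcases le_or_gt t a with hta | hta
      · have hmem : t ∈ Icc t0 a := ⟨ht.1, hta⟩
        have h6 := (hf4 t hmem).congr (fun y hy => hgl y hy.2) (hgl t hta)
        rw [hgl t hta]
        exact h6
      · have : t ∉ closure (Icc t0 a) := by
          rw [isClosed_Icc.closure_eq]
          intro hc
          exact absurd hc.2 (not_le.2 hta)
        exact seir_hasDerivWithinAt_of_nmem_closure this _
    have hright : HasDerivWithinAt g (seirF η βmin γmax (g t)) (Icc a b) t := by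
      rcases le_or_gt a t with hta | hta
      · have hmem : t ∈ Icc a b := ⟨hta, ht.2⟩
        have h6 := (h4 t hmem).congr (fun y hy => hgr y hy.1) (hgr t hta)
        rw [hgr t hta]
        exact h6
      · have : t ∉ closure (Icc a b) := by
          rw [isClosed_Icc.closure_eq]
          intro hc
          exact absurd hc.1 (not_le.2 hta)
        exact seir_hasDerivWithinAt_of_nmem_closure this _
    have := hleft.union hright
    rw [hset] at this
    exact this
  · intro t ht
    rcases le_or_gt t a with hta | hta
    · rw [hgl t hta]; exact hf5 t ⟨ht.1, hta⟩
    · rw [hgr t hta.le]; exact hinv t ⟨hta.le, ht.2⟩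

/-- Global existence of an invariant solution on `[t0, ∞)`. -/
lemma seir_global {η βmin γmax Imax : ℝ}
    (hη : 0 < η) (hβmin : 0 < βmin) (hγmax : 0 < γmax)
    (hImax0 : 0 < Imax) (hImax1 : Imax < 1)
    (hcond : η * (1 - Imax) ≤ γmax * Imax)
    (t0 : ℝ) (x₀ : ℝ × ℝ × ℝ) (hx₀ : x₀ ∈ GPiSEIR Imax) :
    ∃ f : ℝ → ℝ × ℝ × ℝ, f t0 = x₀ ∧ (∀ t, t ≤ t0 → f t = x₀) ∧
      (∀ t ∈ Ici t0, HasDerivWithinAt f (seirF η βmin γmax (f t)) (Ici t0) t) ∧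
      (∀ t ∈ Ici t0, f t ∈ GPiSEIR Imax) := by
  obtain ⟨ε, hεdef⟩ : ∃ ε : ℝ, ε = seirEps η βmin γmax := ⟨_, rfl⟩
  have hε : 0 < ε := hεdef ▸ seirEps_pos hη hβmin hγmax
  obtain ⟨Q, hQ⟩ : ∃ Q : ℕ → (ℝ → ℝ × ℝ × ℝ) → Prop, Q = fun (n : ℕ) (f : ℝ → ℝ × ℝ × ℝ) =>
      f t0 = x₀ ∧ (∀ t, t ≤ t0 → f t = x₀) ∧
      (∀ t, t0 + (n : ℝ) * ε ≤ t → f t = f (t0 + (n : ℝ) * ε)) ∧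
      (∀ t ∈ Icc t0 (t0 + (n : ℝ) * ε),
        HasDerivWithinAt f (seirF η βmin γmax (f t)) (Icc t0 (t0 + (n : ℝ) * ε)) t) ∧
      (∀ t ∈ Icc t0 (t0 + (n : ℝ) * ε), f t ∈ GPiSEIR Imax) := ⟨_, rfl⟩
  have hbase : Q 0 (fun _ => x₀) := by
    rw [hQ]
    have h0 : t0 + (0 : ℕ) * ε = t0 := by push_cast; ring
    refine ⟨rfl, fun _ _ => rfl, fun _ _ => rfl, ?_, ?_⟩
    · intro t ht
      rw [h0, Icc_self] at ht
      have h' : t = t0 := ht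
      subst h'
      rw [h0, Icc_self]
      exact seir_hasDerivWithinAt_singleton _ _ _
    · intro t _
      exact hx₀
  have hstep : ∀ (n : ℕ) (f : ℝ → ℝ × ℝ × ℝ), Q n f →
      ∃ g, Q (n + 1) g ∧ ∀ t, t ≤ t0 + n * ε → g t = f t := by
    intro n f hQf
    rw [hQ] at hQf
    obtain ⟨hf1, hf2, hf3, hf4, hf5⟩ := hQf
    have hnn : (0:ℝ) ≤ (n : ℝ) * ε := mul_nonneg (Nat.cast_nonneg n) hε.le
    have ht0a : t0 ≤ t0 + n * ε := by linarith
    have hcast : t0 + ((n : ℕ) + 1 : ℕ) * ε = (t0 + n * ε) + ε := by push_cast; ring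
    obtain ⟨g, hg1, hg2, hg3, hg4, hg5, hg6⟩ :=
      seir_step hη hβmin hγmax hImax0 hImax1 hcond
        (le_of_lt (by linarith : t0 + (n:ℝ) * ε < (t0 + n * ε) + ε)) ht0a
        hf1 hf2 hf3 hf4 hf5 (by rw [hεdef] : (t0 + (n:ℝ) * ε) + ε = (t0 + n * ε) + seirEps η βmin γmax)
    refine ⟨g, ?_, hg6⟩
    rw [← hcast] at hg3 hg4 hg5
    rw [hQ]
    exact ⟨hg1, hg2, hg3, hg4, hg5⟩
  -- build the sequence of solutions
  let seq : ∀ n : ℕ, {f : ℝ → ℝ × ℝ × ℝ // Q n f} := fun n =>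
    Nat.rec ⟨fun _ => x₀, hbase⟩
      (fun n p => ⟨(hstep n p.1 p.2).choose, (hstep n p.1 p.2).choose_spec.1⟩) n
  have hcons : ∀ (n : ℕ) (t : ℝ), t ≤ t0 + n * ε → (seq (n + 1)).1 t = (seq n).1 t :=
    fun n t ht => (hstep n (seq n).1 (seq n).2).choose_spec.2 t ht
  have hQn : ∀ n, Q n (seq n).1 := fun n => (seq n).2
  -- agreement of the sequence
  have hagree : ∀ (n m : ℕ), n ≤ m → ∀ t : ℝ, t ≤ t0 + n * ε → (seq m).1 t = (seq n).1 t := by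
    intro n m hnm
    induction m with
    | zero =>
      have : n = 0 := Nat.le_zero.1 hnm
      subst this
      intro t _; rfl
    | succ m ih =>
      rcases Nat.lt_or_ge n (m + 1) with h | h
      · have hnm' : n ≤ m := Nat.lt_succ_iff.1 h
        intro t ht
        have hm : t ≤ t0 + m * ε := by
          have : (n : ℝ) * ε ≤ (m : ℝ) * ε :=
            mul_le_mul_of_nonneg_right (Nat.cast_le.2 hnm') hε.le
          linarith
        rw [hcons m t hm]
        exact ih hnm' t ht
      · have : n = m + 1 := le_antisymm hnm h
        subst this
        intro t _; rfl
  -- the global solution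
  obtain ⟨X, hXdef⟩ : ∃ X : ℝ → ℝ × ℝ × ℝ,
      X = fun t => (seq (⌈(t - t0) / ε⌉₊ + 1)).1 t := ⟨_, rfl⟩
  have hceil : ∀ t : ℝ, t ≤ t0 + (⌈(t - t0) / ε⌉₊ : ℝ) * ε := by
    intro t
    rcases le_or_gt t t0 with h | h
    · have : (0:ℝ) ≤ (⌈(t - t0) / ε⌉₊ : ℝ) * ε :=
        mul_nonneg (Nat.cast_nonneg _) hε.le
      linarith
    · have h1 : (t - t0) / ε ≤ (⌈(t - t0) / ε⌉₊ : ℝ) := Nat.le_ceil _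
      rw [div_le_iff₀ hε] at h1
      linarith
  have hXeq : ∀ (t : ℝ) (n : ℕ), t ≤ t0 + n * ε → X t = (seq n).1 t := by
    intro t n ht
    rw [hXdef]
    show (seq (⌈(t - t0) / ε⌉₊ + 1)).1 t = (seq n).1 t
    rcases le_total n (⌈(t - t0) / ε⌉₊ + 1) with h | h
    · exact hagree n _ h t ht
    · have h2 : t ≤ t0 + (⌈(t - t0) / ε⌉₊ + 1 : ℕ) * ε := by
        have := hceil t
        push_cast
        linarith
      exact (hagree _ n h t h2).symm
  have hXlt : ∀ t : ℝ, t < t0 + (⌈(t - t0) / ε⌉₊ + 1 : ℕ) * ε := by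
    intro t
    have := hceil t
    push_cast
    linarith
  refine ⟨X, ?_, ?_, ?_, ?_⟩
  · have h1 : t0 ≤ t0 + (1:ℕ) * ε := by push_cast; linarith
    have hq := hQn 1
    simp only [hQ] at hq
    exact (hXeq t0 1 h1).trans hq.1
  · intro t ht
    have h1 : t ≤ t0 + (1:ℕ) * ε := by push_cast; linarith
    have hq := hQn 1
    simp only [hQ] at hq
    exact (hXeq t 1 h1).trans (hq.2.1 t ht)
  · intro t ht
    obtain ⟨n, hn⟩ : ∃ n : ℕ, n = ⌈(t - t0) / ε⌉₊ + 1 := ⟨_, rfl⟩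
    have htn : t ≤ t0 + n * ε := by rw [hn]; exact (hXlt t).le
    have htn' : t < t0 + n * ε := by rw [hn]; exact hXlt t
    have hq := hQn n
    simp only [hQ] at hq
    obtain ⟨hq1, hq2, hq3, hq4, hq5⟩ := hq
    have hxe : X t = (seq n).1 t := hXeq t n htn
    have H1 : HasDerivWithinAt X (seirF η βmin γmax (X t)) (Icc t0 (t0 + n * ε)) t := by
      have H0 := (hq4 t ⟨ht, htn⟩).congr (fun y hy => hXeq y n hy.2) hxe
      rw [← hxe] at H0
      exact H0
    apply H1.mono_of_mem_nhdsWithin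
    rw [mem_nhdsWithin]
    refine ⟨Iio (t0 + n * ε), isOpen_Iio, htn', ?_⟩
    intro y hy
    exact ⟨hy.2, le_of_lt hy.1⟩
  · intro t ht
    obtain ⟨n, hn⟩ : ∃ n : ℕ, n = ⌈(t - t0) / ε⌉₊ + 1 := ⟨_, rfl⟩
    have htn : t ≤ t0 + n * ε := by rw [hn]; exact (hXlt t).le
    have hq := hQn n
    simp only [hQ] at hq
    obtain ⟨hq1, hq2, hq3, hq4, hq5⟩ := hq
    have hxe : X t = (seq n).1 t := hXeq t n htn
    have hmem := hq5 t ⟨ht, htn⟩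
    rw [← hxe] at hmem
    exact hmem

lemma seir_fst3' {f : ℝ → ℝ × ℝ × ℝ} {v : ℝ × ℝ × ℝ} {t : ℝ} (h : HasDerivAt f v t) :
    HasDerivAt (fun u => (f u).1) v.1 t :=
  hasDerivWithinAt_univ.1 (seir_fst3 (h.hasDerivWithinAt))

lemma seir_snd3' {f : ℝ → ℝ × ℝ × ℝ} {v : ℝ × ℝ × ℝ} {t : ℝ} (h : HasDerivAt f v t) :
    HasDerivAt (fun u => (f u).2.1) v.2.1 t :=
  hasDerivWithinAt_univ.1 (seir_snd3 (h.hasDerivWithinAt))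

lemma seir_trd3' {f : ℝ → ℝ × ℝ × ℝ} {v : ℝ × ℝ × ℝ} {t : ℝ} (h : HasDerivAt f v t) :
    HasDerivAt (fun u => (f u).2.2) v.2.2 t :=
  hasDerivWithinAt_univ.1 (seir_trd3 (h.hasDerivWithinAt))

/-- The admissible set of the controlled SEIR model equals `G_Π` iff
`η (1 − I_max) ≤ γ_max I_max`. -/
theorem seir_admissible_eq_GPi_iff
    (η βmin βmax γmin γmax Imax t0 : ℝ)
    (hη : 0 < η) (hβmin : 0 < βmin) (hβ : βmin ≤ βmax)
    (hγmin : 0 < γmin) (hγ : γmin ≤ γmax)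
    (hI0 : 0 < Imax) (hI1 : Imax < 1) :
    (∀ S0 E0 I0 : ℝ, (S0, E0, I0) ∈ GPiSEIR Imax →
        ∃ S E I β γ : ℝ → ℝ,
          Differentiable ℝ S ∧ Differentiable ℝ E ∧ Differentiable ℝ I ∧
          (∀ t, t0 ≤ t → β t ∈ Set.Icc βmin βmax) ∧
          (∀ t, t0 ≤ t → γ t ∈ Set.Icc γmin γmax) ∧
          (∀ t, t0 ≤ t → HasDerivAt S (-(β t * S t * I t)) t) ∧
          (∀ t, t0 ≤ t → HasDerivAt E (β t * S t * I t - η * E t) t) ∧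
          (∀ t, t0 ≤ t → HasDerivAt I (η * E t - γ t * I t) t) ∧
          S t0 = S0 ∧ E t0 = E0 ∧ I t0 = I0 ∧
          (∀ t, t0 ≤ t → (S t, E t, I t) ∈ GPiSEIR Imax))
      ↔ η * (1 - Imax) ≤ γmax * Imax := by
  have hγmax : 0 < γmax := lt_of_lt_of_le hγmin hγ
  constructor
  · -- forward direction
    intro hadm
    obtain ⟨S, E, I, β, γ, hdS, hdE, hdI, hβr, hγr, hS', hE', hI', hS0, hE0, hI0', hG⟩ :=
      hadm 0 (1 - Imax) Imax
        ⟨le_rfl, by show (0:ℝ) ≤ 1 - Imax; linarith, hI0.le,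
          by show (0:ℝ) + (1 - Imax) + Imax ≤ 1; linarith, le_rfl⟩
    have hImono : ∀ t, t0 ≤ t → I t ≤ Imax := fun t ht => (hG t ht).2.2.2.2
    have hd := hI' t0 le_rfl
    rw [hasDerivAt_iff_tendsto_slope] at hd
    have hd2 : Filter.Tendsto (slope I t0) (𝓝[>] t0) (𝓝 (η * E t0 - γ t0 * I t0)) :=
      hd.mono_left (nhdsWithin_mono t0 (fun x hx => ne_of_gt hx))
    have hsle : ∀ᶠ s in 𝓝[>] t0, slope I t0 s ≤ 0 := by
      filter_upwards [self_mem_nhdsWithin] with s hs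
      have hs' : t0 < s := hs
      rw [slope_def_field]
      apply div_nonpos_of_nonpos_of_nonneg
      · have := hImono s hs'.le
        rw [hI0']
        linarith
      · linarith
    have hle : η * E t0 - γ t0 * I t0 ≤ 0 := le_of_tendsto hd2 hsle
    rw [hE0, hI0'] at hle
    have hγt0 : γ t0 ≤ γmax := (hγr t0 le_rfl).2
    nlinarith
  · -- backward direction
    intro hcond S0 E0 I0 hmem
    obtain ⟨f, hf1, hf2, hf3, hf4⟩ :=
      seir_global hη hβmin hγmax hI0 hI1 hcond t0 (S0, E0, I0) hmem
    obtain ⟨v, hv⟩ : ∃ v : ℝ × ℝ × ℝ, v = seirF η βmin γmax (S0, E0, I0) := ⟨_, rfl⟩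
    obtain ⟨L, hL⟩ : ∃ L : ℝ → ℝ × ℝ × ℝ, L = fun t => (S0, E0, I0) + (t - t0) • v := ⟨_, rfl⟩
    obtain ⟨Y, hY⟩ : ∃ Y : ℝ → ℝ × ℝ × ℝ,
        Y = fun t => if t0 ≤ t then f t else L t := ⟨_, rfl⟩
    have hYf : ∀ t, t0 ≤ t → Y t = f t := by
      intro t ht; rw [hY]; exact if_pos ht
    have hYL : ∀ t, t < t0 → Y t = L t := by
      intro t ht; rw [hY]; exact if_neg (not_le.2 ht)
    have hLt0 : L t0 = (S0, E0, I0) := by rw [hL]; simp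
    have hYt0 : Y t0 = (S0, E0, I0) := by rw [hYf t0 le_rfl, hf1]
    have hLder : ∀ t, HasDerivAt L v t := by
      intro t
      rw [hL]
      have h1 : HasDerivAt (fun s : ℝ => s - t0) 1 t := (hasDerivAt_id t).sub_const t0
      have h2 := (h1.smul_const v).const_add (S0, E0, I0)
      simpa using h2
    -- derivative of Y on [t0, ∞)
    have hYder : ∀ t, t0 ≤ t → HasDerivAt Y (seirF η βmin γmax (Y t)) t := by
      intro t ht
      rcases eq_or_lt_of_le ht with heq | hlt
      · -- at t = t0 : combine the two one-sided derivatives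
        subst heq
        have hleft : HasDerivWithinAt Y (seirF η βmin γmax (Y t0)) (Iic t0) t0 := by
          have h1 : HasDerivWithinAt L v (Iic t0) t0 := (hLder t0).hasDerivWithinAt
          have h2 : HasDerivWithinAt Y v (Iic t0) t0 := by
            apply h1.congr
            · intro y hy
              rcases eq_or_lt_of_le (mem_Iic.1 hy) with heq' | hy'
              · subst heq'
                rw [hYt0, hLt0]
              · exact hYL y hy'
            · rw [hYt0, hLt0]
          have hval : v = seirF η βmin γmax (Y t0) := by rw [hYt0, hv]
          rwa [hval] at h2
        have hright : HasDerivWithinAt Y (seirF η βmin γmax (Y t0)) (Ici t0) t0 := by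
          have h1 := hf3 t0 (mem_Ici.2 le_rfl)
          have h2 : HasDerivWithinAt Y (seirF η βmin γmax (f t0)) (Ici t0) t0 := by
            apply h1.congr
            · intro y hy
              exact hYf y hy
            · exact hYf t0 le_rfl
          rwa [← hYf t0 le_rfl] at h2
        have hu := hleft.union hright
        rw [Iic_union_Ici] at hu
        exact hu.hasDerivAt Filter.univ_mem
      · -- t0 < t
        have h1 := (hf3 t (mem_Ici.2 ht)).hasDerivAt (Ici_mem_nhds hlt)
        have h2 : Y =ᶠ[𝓝 t] f := by
          filter_upwards [Ioi_mem_nhds hlt] with y hy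
          exact hYf y (le_of_lt hy)
        have h3 := h1.congr_of_eventuallyEq h2
        rwa [← hYf t ht] at h3
    have hYderneg : ∀ t, t < t0 → HasDerivAt Y v t := by
      intro t ht
      apply (hLder t).congr_of_eventuallyEq
      filter_upwards [Iio_mem_nhds ht] with y hy
      exact hYL y hy
    have hYdiff : Differentiable ℝ Y := by
      intro t
      rcases lt_or_ge t t0 with h | h
      · exact (hYderneg t h).differentiableAt
      · exact (hYder t h).differentiableAt
    refine ⟨fun t => (Y t).1, fun t => (Y t).2.1, fun t => (Y t).2.2,
      fun _ => βmin, fun _ => γmax, ?_, ?_, ?_, ?_, ?_, ?_, ?_, ?_, ?_, ?_, ?_, ?_⟩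
    · exact hYdiff.fst
    · exact hYdiff.snd.fst
    · exact hYdiff.snd.snd
    · intro t _; exact ⟨le_rfl, hβ⟩
    · intro t _; exact ⟨hγ, le_rfl⟩
    · intro t ht; exact seir_fst3' (hYder t ht)
    · intro t ht; exact seir_snd3' (hYder t ht)
    · intro t ht; exact seir_trd3' (hYder t ht)
    · show (Y t0).1 = S0
      rw [hYt0]
    · show (Y t0).2.1 = E0
      rw [hYt0]
    · show (Y t0).2.2 = I0
      rw [hYt0]
    · intro t ht
      have hm := hf4 t (mem_Ici.2 ht)
      rw [← hYf t ht] at hm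
      exact hm
end
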